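/- arXiv:1408.4074 — 2 statements merged into one kernel-verified Lean document; each statement's English description precedes it below -/
import Mathlib

section
/- If C is a 3-Cayley tree and x, y are nonadjacent edges of C, then the tree C' obtained by the branch shift of x to y is again a 3-Cayley tree with the same set of boundary vertices as C. -/
attribute [local instance] Classical.propDecidable

open SimpleGraph

/-! ### Weighted graphs -/

/-- Total weight `w(A,B)` between two vertex sets. -/
noncomputable def setW {V : Type*} [Fintype V] (w : V → V → ℝ) (A B : Set V) : ℝ :=
  ∑ a ∈ A.toFinset, ∑ b ∈ B.toFinset, w a b

/-- The weight of an undirected edge of the weighted graph. -/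
noncomputable def sym2w {V : Type*} (w : V → V → ℝ) : Sym2 V → ℝ :=
  Sym2.lift ⟨fun a b => (w a b + w b a) / 2, fun a b => by ring⟩

/-! ### 3-Cayley trees and tree positions -/

/-- A boundary (leaf) vertex of a tree. -/
def IsLeaf {W : Type*} (C : SimpleGraph W) (z : W) : Prop := (C.neighborSet z).ncard = 1

/-- A 3-Cayley tree: a tree all of whose vertices have degree 1 (boundary) or 3 (interior). -/
def IsCayley {W : Type*} (C : SimpleGraph W) : Prop :=
  C.IsTree ∧ ∀ z : W, (C.neighborSet z).ncard = 1 ∨ (C.neighborSet z).ncard = 3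

/-- `(C, φ)` is a tree position for a graph with vertex set `V`. -/
def IsTreePosition {V W : Type*} (C : SimpleGraph W) (φ : V → W) : Prop :=
  IsCayley C ∧ Function.Injective φ ∧ Set.range φ = {z | IsLeaf C z}

/-- The edge `f` of `C` lies on a simple path from `a` to `b` (in a tree, THE simple path). -/
def passesThrough {W : Type*} (C : SimpleGraph W) (f : Sym2 W) (a b : W) : Prop :=
  ∃ p : C.Walk a b, p.IsPath ∧ f ∈ p.edges

/-- `R(f)`: the set of edges of the weighted graph that pass through the edge `f` of `C`. -/
def REdges {V W : Type*} (w : V → V → ℝ) (C : SimpleGraph W) (φ : V → W) (f : Sym2 W) :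
    Set (Sym2 V) :=
  {e | ∃ u v : V, e = s(u, v) ∧ w u v ≠ 0 ∧ passesThrough C f (φ u) (φ v)}

/-- The width `b(f)` of an edge `f` of `C`: total weight of the edges of `G` through `f`. -/
noncomputable def bWidth {V W : Type*} [Fintype V] (w : V → V → ℝ) (C : SimpleGraph W)
    (φ : V → W) (f : Sym2 W) : ℝ :=
  ∑ e ∈ (REdges w C φ f).toFinset, sym2w w e

/-- The adjacency weight `a(e,g)`: total weight of edges of `G` through both `e` and `g`. -/
noncomputable def adjW {V W : Type*} [Fintype V] (w : V → V → ℝ) (C : SimpleGraph W)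
    (φ : V → W) (e g : Sym2 W) : ℝ :=
  ∑ e' ∈ (REdges w C φ e ∩ REdges w C φ g).toFinset, sym2w w e'

/-- The slope `s(e,g) = w(R(g) \ R(e)) - w(R(g) ∩ R(e))`. -/
noncomputable def slopeW {V W : Type*} [Fintype V] (w : V → V → ℝ) (C : SimpleGraph W)
    (φ : V → W) (e g : Sym2 W) : ℝ :=
  (∑ e' ∈ (REdges w C φ g \ REdges w C φ e).toFinset, sym2w w e') - adjW w C φ e g

/-- `C(f;g)`: vertex set of the subtree obtained by cutting `f` that contains the edge `g`. -/
def sideWith {W : Type*} (C : SimpleGraph W) (f g : Sym2 W) : Set W :=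
  {z | ∃ a, a ∈ g ∧ (C.deleteEdges {f}).Reachable a z}

/-- `C(f;ḡ)`: vertex set of the subtree obtained by cutting `f` that does not contain `g`. -/
def sideOpp {W : Type*} (C : SimpleGraph W) (f g : Sym2 W) : Set W := (sideWith C f g)ᶜ

/-! ### TILO orderings of a weighted graph -/

/-- `A_t`: the initial segment of an ordering. -/
def ordSet {V : Type*} (o : V → ℕ) (t : ℕ) : Set V := {v | o v ≤ t}

/-- The width `b_t` of an ordering. -/
noncomputable def ordWidth {V : Type*} [Fintype V] (w : V → V → ℝ) (o : V → ℕ) (t : ℕ) : ℝ :=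
  setW w (ordSet o t) (ordSet o t)ᶜ

/-- The slope `s_{t,k}` of an ordering, with `vk` the vertex at position `k`. -/
noncomputable def ordSlope {V : Type*} [Fintype V] (w : V → V → ℝ) (o : V → ℕ) (t : ℕ)
    (vk : V) : ℝ :=
  setW w {vk} ((ordSet o t)ᶜ \ {vk}) - setW w {vk} (ordSet o t \ {vk})

/-- The shift from position `a` to position `b`: compose the ordering with the cyclic
permutation of the block of positions between `a` and `b` sending `a` to `b`. -/
def shiftFun {V : Type*} (a b : ℕ) (o : V → ℕ) : V → ℕ := fun v =>
  if o v = a then b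
  else if a < o v ∧ o v ≤ b then o v - 1
  else if b ≤ o v ∧ o v < a then o v + 1
  else o v

/-- The multiset of widths of an ordering, sorted in nonincreasing order. -/
noncomputable def ordWidthList {V : Type*} [Fintype V] (w : V → V → ℝ) (N : ℕ)
    (o : V → ℕ) : List ℝ :=
  ((List.range N).map (ordWidth w o)).insertionSort (· ≥ ·)

/-- Strict lexicographic comparison of sorted width lists. -/
def lexLess (l₁ l₂ : List ℝ) : Prop := List.Lex (· < ·) l₁ l₂

/-- A TILO ordering is weakly reducible when some shift strictly decreases its width. -/
def OrdWeaklyReducible {V : Type*} [Fintype V] (w : V → V → ℝ) (N : ℕ) (o : V → ℕ) : Prop :=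
  ∃ a b : ℕ, a < N ∧ b < N ∧ a ≠ b ∧
    lexLess (ordWidthList w N (shiftFun a b o)) (ordWidthList w N o)

/-! ### Branch shift data -/

/-- The data of a pair of nonadjacent edges `x`, `y` of a tree `C` together with the unique
simple path `p 1, …, p i` from `x` to `y`, the extremal third edges `p 0` (at the common
endpoint of `x` and `p 1`, other endpoint `fv`) and `p (i+1)` (at the common endpoint of `y`
and `p i`, other endpoint `gv`), and the third edges `fE t` at the common endpoint of
`p (t-1)` and `p t` for `2 ≤ t ≤ i`.  The path visits the vertices
`x0, vs 0, vs 1, …, vs i, y1` where `x = s(x0, vs 0)` and `y = s(vs i, y1)`. -/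
structure BranchData {W : Type*} (C : SimpleGraph W) (x y : Sym2 W) where
  i : ℕ
  hi1 : 1 ≤ i
  vs : ℕ → W
  x0 : W
  y1 : W
  fv : W
  gv : W
  p : ℕ → Sym2 W
  fE : ℕ → Sym2 W
  hx : x ∈ C.edgeSet
  hy : y ∈ C.edgeSet
  hnonadj : ∀ z : W, ¬(z ∈ x ∧ z ∈ y)
  hxe : x = s(x0, vs 0)
  hye : y = s(vs i, y1)
  hpe : ∀ t, 1 ≤ t → t ≤ i → p t = s(vs (t - 1), vs t)
  hpedge : ∀ t, 1 ≤ t → t ≤ i → p t ∈ C.edgeSet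
  hvsinj : ∀ t t', t ≤ i → t' ≤ i → vs t = vs t' → t = t'
  hx0 : ∀ t, t ≤ i → x0 ≠ vs t
  hy1 : ∀ t, t ≤ i → y1 ≠ vs t
  hp0 : p 0 = s(vs 0, fv)
  hp0edge : p 0 ∈ C.edgeSet
  hp0x : p 0 ≠ x
  hp0p1 : p 0 ≠ p 1
  hpi1 : p (i + 1) = s(vs i, gv)
  hpi1edge : p (i + 1) ∈ C.edgeSet
  hpi1y : p (i + 1) ≠ y
  hpi1pi : p (i + 1) ≠ p i
  hfE : ∀ t, 2 ≤ t → t ≤ i →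
    fE t ∈ C.edgeSet ∧ vs (t - 1) ∈ fE t ∧ fE t ≠ p (t - 1) ∧ fE t ≠ p t

/-- The parts `P 0, …, P (i+2)` of the partition of the vertices of `G` induced by the
branch shift data. -/
def BranchData.part {V W : Type*} {C : SimpleGraph W} {x y : Sym2 W}
    (d : BranchData C x y) (φ : V → W) : ℕ → Set V := fun t =>
  if t = 0 then φ ⁻¹' (sideOpp C (d.p 0) y)
  else if t = 1 then φ ⁻¹' (sideOpp C x y)
  else if t ≤ d.i then φ ⁻¹' (sideOpp C (d.fE t) y)
  else if t = d.i + 1 then φ ⁻¹' (sideOpp C y x)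
  else φ ⁻¹' (sideOpp C (d.p (d.i + 1)) y)

/-- The tree `C'` obtained by the branch shift of `x` to `y`: detach `e = p 1` from
`v = vs 1` and reattach it at `s = vs i`, reattach the third edge `p 0` at `u = vs 0` to
`v = vs 1`, and reattach the third edge `p (i+1)` at `s = vs i` to `u = vs 0`. -/
def BranchData.shifted {W : Type*} {C : SimpleGraph W} {x y : Sym2 W}
    (d : BranchData C x y) : SimpleGraph W :=
  SimpleGraph.fromEdgeSet
    ((C.edgeSet \ {d.p 1, d.p 0, d.p (d.i + 1)}) ∪
      {s(d.vs 0, d.vs d.i), s(d.vs 1, d.fv), s(d.vs 0, d.gv)})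

/-- The weight function of the branch shift quotient graph `Q`: vertex `u_j` corresponds to
the part `P j`, and the weight of the edge `(u_j, u_l)` is `w(P j, P l)`. -/
noncomputable def BranchData.qw {V W : Type*} [Fintype V] {C : SimpleGraph W} {x y : Sym2 W}
    (d : BranchData C x y) (w : V → V → ℝ) (φ : V → W) :
    Fin (d.i + 3) → Fin (d.i + 3) → ℝ :=
  fun j l => if j = l then 0 else setW w (d.part φ j) (d.part φ l)

/-- The multiset of widths of the edges of a tree position, sorted in nonincreasing order. -/
noncomputable def treeWidthList {V W : Type*} [Fintype V] [Fintype W] (w : V → V → ℝ)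
    (C : SimpleGraph W) (φ : V → W) : List ℝ :=
  ((C.edgeSet.toFinset.val.map (bWidth w C φ)).toList).insertionSort (· ≥ ·)

/-- A tree position is weakly reducible when some branch shift strictly decreases its
width; otherwise it is strongly irreducible (thin). -/
def TPWeaklyReducible {V W : Type*} [Fintype V] [Fintype W] (w : V → V → ℝ)
    (C : SimpleGraph W) (φ : V → W) : Prop :=
  ∃ (x y : Sym2 W) (d : BranchData C x y),
    lexLess (treeWidthList w d.shifted φ) (treeWidthList w C φ)

/-! ### Pinch clusters -/

/-- The boundary weight of a set of vertices. -/
noncomputable def boundaryW {V : Type*} [Fintype V] (w : V → V → ℝ) (A : Set V) : ℝ :=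
  setW w A Aᶜ

/-- `A` is a pinch cluster: whenever adding the vertices `v 1, …, v m` to `A` (resp. removing
them from `A`) produces a set with strictly smaller boundary, some proper initial segment
`v 1, …, v k` added (resp. removed) produces a set with strictly larger boundary. -/
def IsPinchCluster {V : Type*} [Fintype V] (w : V → V → ℝ) (A : Set V) : Prop :=
  ∀ (m : ℕ) (v : ℕ → V),
    (boundaryW w (A ∪ v '' Set.Icc 1 m) < boundaryW w A →
      ∃ k, 1 ≤ k ∧ k < m ∧ boundaryW w A < boundaryW w (A ∪ v '' Set.Icc 1 k)) ∧
    (boundaryW w (A \ v '' Set.Icc 1 m) < boundaryW w A →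
      ∃ k, 1 ≤ k ∧ k < m ∧ boundaryW w A < boundaryW w (A \ v '' Set.Icc 1 k))

/-- `e` is a local minimum of the tree position: each endpoint of `e` is shared with an edge
of strictly greater width whose second endpoint is not a boundary vertex. -/
def IsLocalMinEdge {V W : Type*} [Fintype V] (w : V → V → ℝ) (C : SimpleGraph W)
    (φ : V → W) (e : Sym2 W) : Prop :=
  ∀ z ∈ e, ∃ f ∈ C.edgeSet, z ∈ f ∧ f ≠ e ∧
    bWidth w C φ e < bWidth w C φ f ∧ ∀ z' ∈ f, z' ≠ z → ¬ IsLeaf C z'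

/-! ### Auxiliary lemmas for the branch shift theorem -/

lemma reach_transfer {V : Type*} {G H : SimpleGraph V}
    (h : ∀ a b, G.Adj a b → H.Reachable a b) {a b : V} (hr : G.Reachable a b) :
    H.Reachable a b := by
  rw [reachable_iff_reflTransGen] at hr
  induction hr with
  | refl => exact Reachable.refl _
  | tail _ hstep ih => exact ih.trans (h _ _ hstep)

lemma conn_card_le {V : Type*} [Fintype V] {G : SimpleGraph V} (hG : G.Connected) :
    Fintype.card V ≤ G.edgeSet.ncard + 1 := by
  classical
  obtain ⟨r⟩ := hG.nonempty
  have next : ∀ v : V, v ≠ r → ∃ u, G.Adj v u ∧ G.dist u r < G.dist v r := by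
    intro v hv
    obtain ⟨p, hp⟩ := hG.exists_walk_length_eq_dist v r
    cases p with
    | nil => exact absurd rfl hv
    | cons h q =>
      refine ⟨_, h, ?_⟩
      calc G.dist _ r ≤ q.length := SimpleGraph.dist_le q
        _ < G.dist v r := by rw [← hp]; simp [SimpleGraph.Walk.length_cons]
  choose nx hnx hlt using next
  have key : (Finset.univ.erase r).card ≤ G.edgeSet.toFinset.card := by
    apply Finset.card_le_card_of_injOn (fun v => if h : v = r then s(v,v) else s(v, nx v h))
    · intro v hv
      rw [Finset.mem_coe, Finset.mem_erase] at hv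
      simp only [dif_neg hv.1, Finset.mem_coe, Set.mem_toFinset]
      exact (hnx v hv.1)
    · intro v hv w hw he
      rw [Finset.coe_erase, Set.mem_diff] at hv hw
      have hv1 : v ≠ r := by simpa using hv.2
      have hw1 : w ≠ r := by simpa using hw.2
      simp only [dif_neg hv1, dif_neg hw1, Sym2.eq_iff] at he
      rcases he with ⟨h1, _⟩ | ⟨h1, h2⟩
      · exact h1
      · exfalso
        have := hlt v hv1
        have := hlt w hw1
        rw [← h1] at this
        rw [h2] at *
        omega
  have h1 : (Finset.univ.erase r).card = Fintype.card V - 1 := by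
    rw [Finset.card_erase_of_mem (Finset.mem_univ r), Finset.card_univ]
  have h2 : G.edgeSet.toFinset.card = G.edgeSet.ncard := (Set.ncard_eq_toFinset_card' _).symm
  have h3 : 1 ≤ Fintype.card V := @Fintype.card_pos _ _ ⟨r⟩
  omega

lemma tree_of_conn_card {V : Type*} [Fintype V] {G : SimpleGraph V} (hG : G.Connected)
    (hcard : G.edgeSet.ncard + 1 = Fintype.card V) : G.IsTree := by
  classical
  refine ⟨hG, ?_⟩
  rw [isAcyclic_iff_forall_adj_isBridge]
  intro u v hadj
  by_contra hnb
  rw [isBridge_iff] at hnb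
  push_neg at hnb
  have hreach : (G \ fromEdgeSet {s(u,v)}).Reachable u v := hnb
  set G' := G \ fromEdgeSet {s(u,v)} with hG'
  have hle : ∀ a b, G'.Adj a b → G.Adj a b := fun a b h => h.1
  have step : ∀ a b, G.Adj a b → G'.Reachable a b := by
    intro a b hab
    by_cases he : s(a,b) = s(u,v)
    · rw [Sym2.eq_iff] at he
      rcases he with ⟨ha, hb⟩ | ⟨ha, hb⟩
      · rw [ha, hb]; exact hreach
      · rw [ha, hb]; exact hreach.symm
    · exact SimpleGraph.Adj.reachable (by simp [hG', he, hab])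
  have hG'conn : G'.Connected := by
    rw [connected_iff]
    refine ⟨fun a b => reach_transfer step (hG.preconnected a b), hG.nonempty⟩
  have hedgeG' : G'.edgeSet = G.edgeSet \ {s(u,v)} := by
    rw [hG', edgeSet_sdiff, edgeSet_fromEdgeSet]
    ext e
    simp only [Set.mem_diff, Set.mem_singleton_iff, Set.mem_setOf_eq]
    constructor
    · rintro ⟨he, hne⟩
      refine ⟨he, fun h => hne ⟨h, ?_⟩⟩
      rw [h]; exact hadj.ne ∘ Sym2.mk_isDiag_iff.mp
    · rintro ⟨he, hne⟩; exact ⟨he, fun h => hne h.1⟩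
  have hcount := conn_card_le hG'conn
  have hmem : s(u,v) ∈ G.edgeSet := hadj
  have : G'.edgeSet.ncard = G.edgeSet.ncard - 1 := by
    rw [hedgeG', Set.ncard_diff (Set.singleton_subset_iff.mpr hmem), Set.ncard_singleton]
  have hpos : 1 ≤ G.edgeSet.ncard := by
    rw [Nat.one_le_iff_ne_zero]
    intro h0
    rw [Set.ncard_eq_zero (Set.toFinite _)] at h0
    rw [h0] at hmem
    exact hmem
  omega

section Helpers
variable {W : Type*} {C : SimpleGraph W} {x y : Sym2 W} (d : BranchData C x y)

lemma tree_edge_mem_walk (hT : C.IsTree) {a b : W} (hadj : C.Adj a b) (q : C.Walk a b) :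
    s(a,b) ∈ q.edges :=
  ((isBridge_iff_adj_and_forall_walk_mem_edges.mp
    (isAcyclic_iff_forall_adj_isBridge.mp hT.IsAcyclic hadj)) q)

lemma bd_adjP : ∀ t, 1 ≤ t → t ≤ d.i → C.Adj (d.vs (t-1)) (d.vs t) := by
  intro t h1 h2
  have := d.hpedge t h1 h2
  rw [d.hpe t h1 h2] at this
  exact this

lemma bd_walkTo : ∀ t t', t ≤ t' → t' ≤ d.i →
    ∃ q : C.Walk (d.vs t) (d.vs t'), ∀ e ∈ q.edges,
      ∃ j, t < j ∧ j ≤ t' ∧ e = s(d.vs (j-1), d.vs j) := by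
  intro t t' h
  induction t', h using Nat.le_induction with
  | base => exact fun _ => ⟨SimpleGraph.Walk.nil, by simp⟩
  | succ n hn ih =>
    intro hni
    obtain ⟨q, hq⟩ := ih (by omega)
    have hadj : C.Adj (d.vs n) (d.vs (n+1)) := by
      have := bd_adjP d (n+1) (by omega) hni
      simpa using this
    refine ⟨q.concat hadj, ?_⟩
    intro e he
    rw [SimpleGraph.Walk.edges_concat, List.concat_eq_append, List.mem_append,
      List.mem_singleton] at he
    rcases he with he | he
    · obtain ⟨j, h1, h2, h3⟩ := hq e he; exact ⟨j, h1, by omega, h3⟩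
    · exact ⟨n+1, by omega, le_refl _, by simpa using he⟩

variable (hT : C.IsTree)
include hT

lemma bd_notE : ∀ t t', t + 2 ≤ t' → t' ≤ d.i → s(d.vs t, d.vs t') ∉ C.edgeSet := by
  intro t t' h hle hmem
  obtain ⟨q, hq⟩ := bd_walkTo d t t' (by omega) hle
  obtain ⟨j, hj1, hj2, hj3⟩ := hq _ (tree_edge_mem_walk hT hmem q)
  rw [Sym2.eq_iff] at hj3
  rcases hj3 with ⟨ha, hb⟩ | ⟨ha, hb⟩
  · have e1 := d.hvsinj t (j-1) (by omega) (by omega) ha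
    have e2 := d.hvsinj t' j (by omega) (by omega) hb
    omega
  · have e1 := d.hvsinj t j (by omega) (by omega) ha
    have e2 := d.hvsinj t' (j-1) (by omega) (by omega) hb
    omega

lemma bd_fvne : ∀ t, t ≤ d.i → d.fv ≠ d.vs t := by
  intro t hle heq
  have hadj : C.Adj (d.vs 0) d.fv := by
    have := d.hp0edge; rw [d.hp0] at this; exact this
  match t, heq with
  | 0, heq => rw [heq] at hadj; exact C.irrefl hadj
  | 1, heq =>
    apply d.hp0p1
    rw [d.hp0, d.hpe 1 le_rfl d.hi1, heq]
  | (n+2), heq =>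
    apply bd_notE d hT 0 (n+2) (by omega) hle
    rw [← heq]; exact hadj

lemma bd_gvne : ∀ t, t ≤ d.i → d.gv ≠ d.vs t := by
  intro t hle heq
  have hadj : C.Adj (d.vs d.i) d.gv := by
    have := d.hpi1edge; rw [d.hpi1] at this; exact this
  rcases Nat.lt_or_ge (t+1) d.i with hlt | hge
  · apply bd_notE d hT t d.i (by omega) le_rfl
    rw [← heq]; exact C.mem_edgeSet.mpr hadj.symm
  · rcases Nat.lt_or_ge t d.i with hlt2 | hge2
    · -- t + 1 = i
      have hti : t + 1 = d.i := by omega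
      apply d.hpi1pi
      rw [d.hpi1, d.hpe d.i d.hi1 le_rfl, heq]
      rw [Sym2.eq_iff]
      right
      exact ⟨rfl, by rw [← hti]; simp⟩
    · -- t = i
      have : t = d.i := by omega
      rw [this] at heq
      rw [heq] at hadj; exact C.irrefl hadj

omit hT in
lemma bd_v01 : d.vs 0 ≠ d.vs 1 := fun h => by
  have := d.hvsinj 0 1 (by omega) d.hi1 h; omega

omit hT in
lemma bd_v0i : d.vs 0 ≠ d.vs d.i := fun h => by
  have := d.hvsinj 0 d.i (by omega) le_rfl h; have := d.hi1; omega

lemma bd_bnotE : s(d.vs 1, d.fv) ∉ C.edgeSet := by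
  intro hmem
  have hadj01 : C.Adj (d.vs 0) (d.vs 1) := by simpa using bd_adjP d 1 le_rfl d.hi1
  have hadj0f : C.Adj (d.vs 0) d.fv := by
    have := d.hp0edge; rw [d.hp0] at this; exact this
  have hmm := tree_edge_mem_walk hT hmem
    (SimpleGraph.Walk.cons hadj01.symm (SimpleGraph.Walk.cons hadj0f SimpleGraph.Walk.nil))
  simp only [SimpleGraph.Walk.edges_cons, SimpleGraph.Walk.edges_nil, List.mem_cons,
    List.not_mem_nil, or_false, Sym2.eq_iff] at hmm
  have h1 := bd_fvne d hT 1 d.hi1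
  have h0 := bd_fvne d hT 0 (by omega)
  have h01 := bd_v01 d
  tauto

lemma bd_cnotE : s(d.vs 0, d.gv) ∉ C.edgeSet := by
  intro hmem
  obtain ⟨q, hq⟩ := bd_walkTo d 0 d.i (by omega) le_rfl
  have hadjig : C.Adj (d.vs d.i) d.gv := by
    have := d.hpi1edge; rw [d.hpi1] at this; exact this
  have hmm := tree_edge_mem_walk hT hmem (q.concat hadjig)
  rw [SimpleGraph.Walk.edges_concat, List.concat_eq_append, List.mem_append,
    List.mem_singleton] at hmm
  rcases hmm with hmm | hmm
  · obtain ⟨j, hj1, hj2, hj3⟩ := hq _ hmm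
    rw [Sym2.eq_iff] at hj3
    rcases hj3 with ⟨_, hb⟩ | ⟨_, hb⟩
    · exact bd_gvne d hT j (by omega) hb
    · exact bd_gvne d hT (j-1) (by omega) hb
  · rw [Sym2.eq_iff] at hmm
    rcases hmm with ⟨ha, _⟩ | ⟨ha, _⟩
    · exact bd_v0i d ha
    · exact bd_gvne d hT 0 (by omega) ha.symm

lemma bd_fvgv : d.fv ≠ d.gv := by
  intro heq
  have hadjig : C.Adj (d.vs d.i) d.gv := by
    have := d.hpi1edge; rw [d.hpi1] at this; exact this
  have hadj0f : C.Adj (d.vs 0) d.gv := by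
    have := d.hp0edge; rw [d.hp0, heq] at this; exact this
  exact bd_cnotE d hT hadj0f

lemma bd_anotE (hi2 : 2 ≤ d.i) : s(d.vs 0, d.vs d.i) ∉ C.edgeSet :=
  bd_notE d hT 0 d.i (by omega) le_rfl

end Helpers
section Helpers2
variable {W : Type*} {C : SimpleGraph W} {x y : Sym2 W} (d : BranchData C x y)

lemma nswap1 {α : Type*} {s : Set α} (hfin : s.Finite) {u v : α} (hu : u ∈ s) (hv : v ∉ s) :
    ((s \ {u}) ∪ {v}).ncard = s.ncard := by
  rw [Set.union_singleton, Set.ncard_insert_of_notMem (fun h => hv h.1) (hfin.diff),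
    Set.ncard_diff_singleton_add_one hu hfin]

lemma nswap2 {α : Type*} {s : Set α} (hfin : s.Finite) {u1 u2 v1 v2 : α}
    (hu1 : u1 ∈ s) (hu2 : u2 ∈ s) (hune : u1 ≠ u2) (hv1 : v1 ∉ s) (hv2 : v2 ∉ s)
    (hvne : v1 ≠ v2) : ((s \ {u1, u2}) ∪ {v1, v2}).ncard = s.ncard := by
  have he : (s \ {u1, u2}) ∪ {v1, v2} = insert v1 (insert v2 (s \ {u1, u2})) := by
    rw [Set.union_comm, Set.insert_union, Set.singleton_union]
  have h2 : ({u1, u2} : Set α) ⊆ s := by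
    intro z hz; rcases hz with h | h
    · rw [h]; exact hu1
    · rw [h]; exact hu2
  have hc2 : ({u1, u2} : Set α).ncard = 2 := by
    rw [Set.ncard_pair hune]
  have hge : 2 ≤ s.ncard := by
    rw [← hc2]; exact Set.ncard_le_ncard h2 hfin
  rw [he, Set.ncard_insert_of_notMem (by simp; tauto) ((hfin.diff).insert _),
    Set.ncard_insert_of_notMem (by simp; tauto) (hfin.diff),
    Set.ncard_diff h2, hc2]
  omega

lemma bd_shifted_adj (hT : C.IsTree) (z w : W) : d.shifted.Adj z w ↔
    ((C.Adj z w ∧ s(z,w) ≠ d.p 1 ∧ s(z,w) ≠ d.p 0 ∧ s(z,w) ≠ d.p (d.i+1)) ∨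
     (s(z,w) = s(d.vs 0, d.vs d.i) ∨ s(z,w) = s(d.vs 1, d.fv) ∨ s(z,w) = s(d.vs 0, d.gv))) := by
  rw [BranchData.shifted, fromEdgeSet_adj]
  constructor
  · rintro ⟨hm, hzw⟩
    rcases hm with ⟨he, hne⟩ | hm
    · left
      simp only [Set.mem_insert_iff, Set.mem_singleton_iff, not_or] at hne
      exact ⟨he, hne.1, hne.2.1, hne.2.2⟩
    · right; simpa using hm
  · intro h
    have hzw : z ≠ w := by
      rcases h with ⟨he, _⟩ | he
      · exact he.ne
      · have h0i := bd_v0i d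
        have hf1 := bd_fvne d hT 1 d.hi1
        have hg0 := bd_gvne d hT 0 (by omega)
        have h0i' := h0i.symm
        have hf1' := hf1.symm
        have hg0' := hg0.symm
        rcases he with he | he | he <;>
          · intro hz; rw [hz, Sym2.eq_iff] at he
            rcases he with ⟨h1, h2⟩ | ⟨h1, h2⟩ <;> rw [h1] at h2 <;> tauto
    refine ⟨?_, hzw⟩
    rcases h with ⟨he, h1, h2, h3⟩ | he
    · left; refine ⟨he, ?_⟩; simp only [Set.mem_insert_iff, Set.mem_singleton_iff]; tauto
    · right; simpa using he

end Helpers2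
section Helpers3
variable {W : Type*} {C : SimpleGraph W} {x y : Sym2 W} (d : BranchData C x y) (hT : C.IsTree)

omit hT in
lemma bd_hp1e : d.p 1 = s(d.vs 0, d.vs 1) := by
  have := d.hpe 1 le_rfl d.hi1; simpa using this

omit hT in
lemma bd_adj01 : C.Adj (d.vs 0) (d.vs 1) := by simpa using bd_adjP d 1 le_rfl d.hi1

omit hT in
lemma bd_adj0f : C.Adj (d.vs 0) d.fv := by
  have := d.hp0edge; rw [d.hp0] at this; exact this

omit hT in
lemma bd_adjig : C.Adj (d.vs d.i) d.gv := by
  have := d.hpi1edge; rw [d.hpi1] at this; exact this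

omit hT in
lemma bd_v1i (hi2 : 2 ≤ d.i) : d.vs 1 ≠ d.vs d.i := fun h => by
  have := d.hvsinj 1 d.i d.hi1 le_rfl h; omega

include hT

lemma bd_nbr_vs0_big (hi2 : 2 ≤ d.i) :
    d.shifted.neighborSet (d.vs 0) =
      (C.neighborSet (d.vs 0) \ {d.vs 1, d.fv}) ∪ {d.vs d.i, d.gv} := by
  have h01 := bd_v01 d; have h0i := bd_v0i d
  have hf0 := bd_fvne d hT 0 (by omega)
  have hg0 := bd_gvne d hT 0 (by omega)
  ext w
  rw [SimpleGraph.mem_neighborSet, bd_shifted_adj d hT, bd_hp1e d, d.hp0, d.hpi1]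
  simp only [Set.mem_union, Set.mem_diff, SimpleGraph.mem_neighborSet, Set.mem_insert_iff,
    Set.mem_singleton_iff]
  constructor
  · rintro (⟨ha, h1, h2, _⟩ | h | h | h)
    · left
      refine ⟨ha, ?_⟩
      rintro (hw | hw)
      · exact h1 (Sym2.eq_iff.mpr (Or.inl ⟨rfl, hw⟩))
      · exact h2 (Sym2.eq_iff.mpr (Or.inl ⟨rfl, hw⟩))
    · rcases Sym2.eq_iff.mp h with ⟨_, hw⟩ | ⟨hc, _⟩
      · right; left; exact hw
      · exact absurd hc h0i
    · rcases Sym2.eq_iff.mp h with ⟨hc, _⟩ | ⟨hc, _⟩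
      · exact absurd hc h01
      · exact absurd hc.symm hf0
    · rcases Sym2.eq_iff.mp h with ⟨_, hw⟩ | ⟨hc, _⟩
      · right; right; exact hw
      · exact absurd hc.symm hg0
  · rintro (⟨ha, h12⟩ | hw | hw)
    · have h1 : w ≠ d.vs 1 := fun h => h12 (Or.inl h)
      have h2 : w ≠ d.fv := fun h => h12 (Or.inr h)
      left
      refine ⟨ha, ?_, ?_, ?_⟩
      · intro he
        rcases Sym2.eq_iff.mp he with ⟨_, hw⟩ | ⟨hc, _⟩
        · exact h1 hw
        · exact h01 hc
      · intro he
        rcases Sym2.eq_iff.mp he with ⟨_, hw⟩ | ⟨hc, _⟩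
        · exact h2 hw
        · exact hf0 hc.symm
      · intro he
        rcases Sym2.eq_iff.mp he with ⟨hc, _⟩ | ⟨hc, _⟩
        · exact h0i hc
        · exact hg0 hc.symm
    · right; left; exact Sym2.eq_iff.mpr (Or.inl ⟨rfl, hw⟩)
    · right; right; right; exact Sym2.eq_iff.mpr (Or.inl ⟨rfl, hw⟩)

lemma bd_nbr_vs0_one (hi1 : d.i = 1) :
    d.shifted.neighborSet (d.vs 0) =
      (C.neighborSet (d.vs 0) \ {d.fv}) ∪ {d.gv} := by
  have h01 := bd_v01 d
  have hf0 := bd_fvne d hT 0 (by omega); have hf1 := bd_fvne d hT 1 d.hi1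
  have hg0 := bd_gvne d hT 0 (by omega)
  have hA01 := bd_adj01 d
  ext w
  rw [SimpleGraph.mem_neighborSet, bd_shifted_adj d hT, bd_hp1e d, d.hp0, d.hpi1, hi1]
  simp only [Set.mem_union, Set.mem_diff, SimpleGraph.mem_neighborSet,
    Set.mem_singleton_iff]
  constructor
  · rintro (⟨ha, _, h2, _⟩ | h | h | h)
    · left
      exact ⟨ha, fun hw => h2 (Sym2.eq_iff.mpr (Or.inl ⟨rfl, hw⟩))⟩
    · rcases Sym2.eq_iff.mp h with ⟨_, hw⟩ | ⟨hc, _⟩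
      · subst hw; exact Or.inl ⟨hA01, fun h => hf1 h.symm⟩
      · exact absurd hc h01
    · rcases Sym2.eq_iff.mp h with ⟨hc, _⟩ | ⟨hc, _⟩
      · exact absurd hc h01
      · exact absurd hc.symm hf0
    · rcases Sym2.eq_iff.mp h with ⟨_, hw⟩ | ⟨hc, _⟩
      · right; exact hw
      · exact absurd hc.symm hg0
  · rintro (⟨ha, h2⟩ | hw)
    · by_cases hw1 : w = d.vs 1
      · right; left; exact Sym2.eq_iff.mpr (Or.inl ⟨rfl, hw1⟩)
      · left
        refine ⟨ha, ?_, ?_, ?_⟩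
        · intro he
          rcases Sym2.eq_iff.mp he with ⟨_, hw⟩ | ⟨hc, _⟩
          · exact hw1 hw
          · exact h01 hc
        · intro he
          rcases Sym2.eq_iff.mp he with ⟨_, hw⟩ | ⟨hc, _⟩
          · exact h2 hw
          · exact hf0 hc.symm
        · intro he
          rcases Sym2.eq_iff.mp he with ⟨hc, _⟩ | ⟨hc, _⟩
          · exact h01 hc
          · exact hg0 hc.symm
    · right; right; right; exact Sym2.eq_iff.mpr (Or.inl ⟨rfl, hw⟩)

lemma bd_nbr_vs1_big (hi2 : 2 ≤ d.i) :
    d.shifted.neighborSet (d.vs 1) =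
      (C.neighborSet (d.vs 1) \ {d.vs 0}) ∪ {d.fv} := by
  have h01 := bd_v01 d
  have hf1 := bd_fvne d hT 1 d.hi1
  have hg1 := bd_gvne d hT 1 d.hi1
  have h1i := bd_v1i d hi2
  ext w
  rw [SimpleGraph.mem_neighborSet, bd_shifted_adj d hT, bd_hp1e d, d.hp0, d.hpi1]
  simp only [Set.mem_union, Set.mem_diff, SimpleGraph.mem_neighborSet,
    Set.mem_singleton_iff]
  constructor
  · rintro (⟨ha, h1, _, _⟩ | h | h | h)
    · left
      exact ⟨ha, fun hw => h1 (Sym2.eq_iff.mpr (Or.inr ⟨rfl, hw⟩))⟩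
    · rcases Sym2.eq_iff.mp h with ⟨hc, _⟩ | ⟨hc, _⟩
      · exact absurd hc.symm h01
      · exact absurd hc h1i
    · rcases Sym2.eq_iff.mp h with ⟨_, hw⟩ | ⟨hc, _⟩
      · right; exact hw
      · exact absurd hc.symm hf1
    · rcases Sym2.eq_iff.mp h with ⟨hc, _⟩ | ⟨hc, _⟩
      · exact absurd hc.symm h01
      · exact absurd hc.symm hg1
  · rintro (⟨ha, h1⟩ | hw)
    · left
      refine ⟨ha, ?_, ?_, ?_⟩
      · intro he
        rcases Sym2.eq_iff.mp he with ⟨hc, _⟩ | ⟨_, hw⟩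
        · exact h01 hc.symm
        · exact h1 hw
      · intro he
        rcases Sym2.eq_iff.mp he with ⟨hc, _⟩ | ⟨hc, _⟩
        · exact h01 hc.symm
        · exact hf1 hc.symm
      · intro he
        rcases Sym2.eq_iff.mp he with ⟨hc, _⟩ | ⟨hc, _⟩
        · exact h1i hc
        · exact hg1 hc.symm
    · right; right; left; exact Sym2.eq_iff.mpr (Or.inl ⟨rfl, hw⟩)

lemma bd_nbr_vs1_one (hi1 : d.i = 1) :
    d.shifted.neighborSet (d.vs 1) =
      (C.neighborSet (d.vs 1) \ {d.gv}) ∪ {d.fv} := by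
  have h01 := bd_v01 d
  have hf1 := bd_fvne d hT 1 d.hi1
  have hg0 := bd_gvne d hT 0 (by omega); have hg1 := bd_gvne d hT 1 d.hi1
  have hA01 := bd_adj01 d
  ext w
  rw [SimpleGraph.mem_neighborSet, bd_shifted_adj d hT, bd_hp1e d, d.hp0, d.hpi1, hi1]
  simp only [Set.mem_union, Set.mem_diff, SimpleGraph.mem_neighborSet,
    Set.mem_singleton_iff]
  constructor
  · rintro (⟨ha, _, _, h3⟩ | h | h | h)
    · left
      exact ⟨ha, fun hw => h3 (Sym2.eq_iff.mpr (Or.inl ⟨rfl, hw⟩))⟩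
    · rcases Sym2.eq_iff.mp h with ⟨hc, _⟩ | ⟨_, hw⟩
      · exact absurd hc.symm h01
      · subst hw; exact Or.inl ⟨hA01.symm, fun h => hg0 h.symm⟩
    · rcases Sym2.eq_iff.mp h with ⟨_, hw⟩ | ⟨hc, _⟩
      · right; exact hw
      · exact absurd hc.symm hf1
    · rcases Sym2.eq_iff.mp h with ⟨hc, _⟩ | ⟨hc, _⟩
      · exact absurd hc.symm h01
      · exact absurd hc.symm hg1
  · rintro (⟨ha, h3⟩ | hw)
    · by_cases hw0 : w = d.vs 0
      · right; left; exact Sym2.eq_iff.mpr (Or.inr ⟨rfl, hw0⟩)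
      · left
        refine ⟨ha, ?_, ?_, ?_⟩
        · intro he
          rcases Sym2.eq_iff.mp he with ⟨hc, _⟩ | ⟨_, hw⟩
          · exact h01 hc.symm
          · exact hw0 hw
        · intro he
          rcases Sym2.eq_iff.mp he with ⟨hc, _⟩ | ⟨hc, _⟩
          · exact h01 hc.symm
          · exact hf1 hc.symm
        · intro he
          rcases Sym2.eq_iff.mp he with ⟨_, hw⟩ | ⟨hc, _⟩
          · exact h3 hw
          · exact hg1 hc.symm
    · right; right; left; exact Sym2.eq_iff.mpr (Or.inl ⟨rfl, hw⟩)

lemma bd_nbr_vsi_big (hi2 : 2 ≤ d.i) :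
    d.shifted.neighborSet (d.vs d.i) =
      (C.neighborSet (d.vs d.i) \ {d.gv}) ∪ {d.vs 0} := by
  have h0i := bd_v0i d
  have hfi := bd_fvne d hT d.i le_rfl
  have hgi := bd_gvne d hT d.i le_rfl
  have h1i := bd_v1i d hi2
  ext w
  rw [SimpleGraph.mem_neighborSet, bd_shifted_adj d hT, bd_hp1e d, d.hp0, d.hpi1]
  simp only [Set.mem_union, Set.mem_diff, SimpleGraph.mem_neighborSet,
    Set.mem_singleton_iff]
  constructor
  · rintro (⟨ha, _, _, h3⟩ | h | h | h)
    · left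
      exact ⟨ha, fun hw => h3 (Sym2.eq_iff.mpr (Or.inl ⟨rfl, hw⟩))⟩
    · rcases Sym2.eq_iff.mp h with ⟨hc, _⟩ | ⟨_, hw⟩
      · exact absurd hc.symm h0i
      · right; exact hw
    · rcases Sym2.eq_iff.mp h with ⟨hc, _⟩ | ⟨hc, _⟩
      · exact absurd hc.symm h1i
      · exact absurd hc.symm hfi
    · rcases Sym2.eq_iff.mp h with ⟨hc, _⟩ | ⟨hc, _⟩
      · exact absurd hc.symm h0i
      · exact absurd hc.symm hgi
  · rintro (⟨ha, h3⟩ | hw)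
    · left
      refine ⟨ha, ?_, ?_, ?_⟩
      · intro he
        rcases Sym2.eq_iff.mp he with ⟨hc, _⟩ | ⟨hc, _⟩
        · exact h0i hc.symm
        · exact h1i hc.symm
      · intro he
        rcases Sym2.eq_iff.mp he with ⟨hc, _⟩ | ⟨hc, _⟩
        · exact h0i hc.symm
        · exact hfi hc.symm
      · intro he
        rcases Sym2.eq_iff.mp he with ⟨_, hw⟩ | ⟨hc, _⟩
        · exact h3 hw
        · exact hgi hc.symm
    · right; left; exact Sym2.eq_iff.mpr (Or.inr ⟨rfl, hw⟩)

lemma bd_nbr_fv :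
    d.shifted.neighborSet d.fv = (C.neighborSet d.fv \ {d.vs 0}) ∪ {d.vs 1} := by
  have hf0 := bd_fvne d hT 0 (by omega); have hf1 := bd_fvne d hT 1 d.hi1
  have hfi := bd_fvne d hT d.i le_rfl
  have hfg := bd_fvgv d hT
  ext w
  rw [SimpleGraph.mem_neighborSet, bd_shifted_adj d hT, bd_hp1e d, d.hp0, d.hpi1]
  simp only [Set.mem_union, Set.mem_diff, SimpleGraph.mem_neighborSet,
    Set.mem_singleton_iff]
  constructor
  · rintro (⟨ha, _, h2, _⟩ | h | h | h)
    · left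
      exact ⟨ha, fun hw => h2 (Sym2.eq_iff.mpr (Or.inr ⟨rfl, hw⟩))⟩
    · rcases Sym2.eq_iff.mp h with ⟨hc, _⟩ | ⟨hc, _⟩
      · exact absurd hc hf0
      · exact absurd hc hfi
    · rcases Sym2.eq_iff.mp h with ⟨hc, _⟩ | ⟨_, hw⟩
      · exact absurd hc hf1
      · right; exact hw
    · rcases Sym2.eq_iff.mp h with ⟨hc, _⟩ | ⟨hc, _⟩
      · exact absurd hc hf0
      · exact absurd hc hfg
  · rintro (⟨ha, h2⟩ | hw)
    · left
      refine ⟨ha, ?_, ?_, ?_⟩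
      · intro he
        rcases Sym2.eq_iff.mp he with ⟨hc, _⟩ | ⟨hc, _⟩
        · exact hf0 hc
        · exact hf1 hc
      · intro he
        rcases Sym2.eq_iff.mp he with ⟨hc, _⟩ | ⟨_, hw⟩
        · exact hf0 hc
        · exact h2 hw
      · intro he
        rcases Sym2.eq_iff.mp he with ⟨hc, _⟩ | ⟨hc, _⟩
        · exact hfi hc
        · exact hfg hc
    · right; right; left; exact Sym2.eq_iff.mpr (Or.inr ⟨rfl, hw⟩)

lemma bd_nbr_gv :
    d.shifted.neighborSet d.gv = (C.neighborSet d.gv \ {d.vs d.i}) ∪ {d.vs 0} := by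
  have hg0 := bd_gvne d hT 0 (by omega); have hg1 := bd_gvne d hT 1 d.hi1
  have hgi := bd_gvne d hT d.i le_rfl
  have hfg := bd_fvgv d hT
  ext w
  rw [SimpleGraph.mem_neighborSet, bd_shifted_adj d hT, bd_hp1e d, d.hp0, d.hpi1]
  simp only [Set.mem_union, Set.mem_diff, SimpleGraph.mem_neighborSet,
    Set.mem_singleton_iff]
  constructor
  · rintro (⟨ha, _, _, h3⟩ | h | h | h)
    · left
      exact ⟨ha, fun hw => h3 (Sym2.eq_iff.mpr (Or.inr ⟨rfl, hw⟩))⟩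
    · rcases Sym2.eq_iff.mp h with ⟨hc, _⟩ | ⟨hc, _⟩
      · exact absurd hc hg0
      · exact absurd hc hgi
    · rcases Sym2.eq_iff.mp h with ⟨hc, _⟩ | ⟨hc, _⟩
      · exact absurd hc hg1
      · exact absurd hc.symm hfg
    · rcases Sym2.eq_iff.mp h with ⟨hc, _⟩ | ⟨_, hw⟩
      · exact absurd hc hg0
      · right; exact hw
  · rintro (⟨ha, h3⟩ | hw)
    · left
      refine ⟨ha, ?_, ?_, ?_⟩
      · intro he
        rcases Sym2.eq_iff.mp he with ⟨hc, _⟩ | ⟨hc, _⟩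
        · exact hg0 hc
        · exact hg1 hc
      · intro he
        rcases Sym2.eq_iff.mp he with ⟨hc, _⟩ | ⟨hc, _⟩
        · exact hg0 hc
        · exact hfg hc.symm
      · intro he
        rcases Sym2.eq_iff.mp he with ⟨hc, _⟩ | ⟨_, hw⟩
        · exact hgi hc
        · exact h3 hw
    · right; right; right; exact Sym2.eq_iff.mpr (Or.inr ⟨rfl, hw⟩)

lemma bd_nbr_other {z : W} (hz0 : z ≠ d.vs 0) (hz1 : z ≠ d.vs 1) (hzi : z ≠ d.vs d.i)
    (hzf : z ≠ d.fv) (hzg : z ≠ d.gv) :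
    d.shifted.neighborSet z = C.neighborSet z := by
  ext w
  rw [SimpleGraph.mem_neighborSet, bd_shifted_adj d hT, bd_hp1e d, d.hp0, d.hpi1,
    SimpleGraph.mem_neighborSet]
  constructor
  · rintro (⟨ha, _, _, _⟩ | h | h | h)
    · exact ha
    · rcases Sym2.eq_iff.mp h with ⟨hc, _⟩ | ⟨hc, _⟩
      · exact absurd hc hz0
      · exact absurd hc hzi
    · rcases Sym2.eq_iff.mp h with ⟨hc, _⟩ | ⟨hc, _⟩
      · exact absurd hc hz1
      · exact absurd hc hzf
    · rcases Sym2.eq_iff.mp h with ⟨hc, _⟩ | ⟨hc, _⟩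
      · exact absurd hc hz0
      · exact absurd hc hzg
  · intro ha
    left
    refine ⟨ha, ?_, ?_, ?_⟩
    · intro he
      rcases Sym2.eq_iff.mp he with ⟨hc, _⟩ | ⟨hc, _⟩
      · exact hz0 hc
      · exact hz1 hc
    · intro he
      rcases Sym2.eq_iff.mp he with ⟨hc, _⟩ | ⟨hc, _⟩
      · exact hz0 hc
      · exact hzf hc
    · intro he
      rcases Sym2.eq_iff.mp he with ⟨hc, _⟩ | ⟨hc, _⟩
      · exact hzi hc
      · exact hzg hc

end Helpers3
section Helpers4
variable {W : Type*} [Fintype W] {C : SimpleGraph W} {x y : Sym2 W}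
  (d : BranchData C x y) (hT : C.IsTree)
include hT

lemma bd_deg (z : W) :
    (d.shifted.neighborSet z).ncard = (C.neighborSet z).ncard := by
  have h01 := bd_v01 d; have h0i := bd_v0i d
  have hf0 := bd_fvne d hT 0 (by omega); have hf1 := bd_fvne d hT 1 d.hi1
  have hg0 := bd_gvne d hT 0 (by omega); have hg1 := bd_gvne d hT 1 d.hi1
  have hgi := bd_gvne d hT d.i le_rfl
  have hA01 := bd_adj01 d; have hA0f := bd_adj0f d; have hAig := bd_adjig d
  have hnb : ¬ C.Adj (d.vs 1) d.fv := fun h => bd_bnotE d hT h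
  have hnc : ¬ C.Adj (d.vs 0) d.gv := fun h => bd_cnotE d hT h
  by_cases hz0 : z = d.vs 0
  · subst hz0
    rcases Nat.lt_or_ge d.i 2 with hi | hi2
    · have hi1 : d.i = 1 := by have := d.hi1; omega
      rw [bd_nbr_vs0_one d hT hi1,
        nswap1 (Set.toFinite _) (SimpleGraph.mem_neighborSet _ _ _ |>.mpr hA0f)
          (fun h => hnc (SimpleGraph.mem_neighborSet _ _ _ |>.mp h))]
    · have hna : ¬ C.Adj (d.vs 0) (d.vs d.i) := fun h => bd_anotE d hT hi2 h
      rw [bd_nbr_vs0_big d hT hi2,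
        nswap2 (Set.toFinite _) (SimpleGraph.mem_neighborSet _ _ _ |>.mpr hA01)
          (SimpleGraph.mem_neighborSet _ _ _ |>.mpr hA0f) (fun h => hf1 h.symm)
          (fun h => hna (SimpleGraph.mem_neighborSet _ _ _ |>.mp h))
          (fun h => hnc (SimpleGraph.mem_neighborSet _ _ _ |>.mp h))
          (fun h => hgi h.symm)]
  by_cases hz1 : z = d.vs 1
  · subst hz1
    rcases Nat.lt_or_ge d.i 2 with hi | hi2
    · have hi1 : d.i = 1 := by have := d.hi1; omega
      have hA1g : C.Adj (d.vs 1) d.gv := by rw [← hi1]; exact hAig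
      rw [bd_nbr_vs1_one d hT hi1,
        nswap1 (Set.toFinite _) (SimpleGraph.mem_neighborSet _ _ _ |>.mpr hA1g)
          (fun h => hnb (SimpleGraph.mem_neighborSet _ _ _ |>.mp h))]
    · rw [bd_nbr_vs1_big d hT hi2,
        nswap1 (Set.toFinite _) (SimpleGraph.mem_neighborSet _ _ _ |>.mpr hA01.symm)
          (fun h => hnb (SimpleGraph.mem_neighborSet _ _ _ |>.mp h))]
  by_cases hzi : z = d.vs d.i
  · subst hzi
    have hi2 : 2 ≤ d.i := by
      rcases Nat.lt_or_ge d.i 2 with hi | hi2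
      · exfalso; apply hz1; have hi1 : d.i = 1 := by have := d.hi1; omega
        rw [hi1]
      · exact hi2
    have hna : ¬ C.Adj (d.vs d.i) (d.vs 0) := fun h => bd_anotE d hT hi2 h.symm
    rw [bd_nbr_vsi_big d hT hi2,
      nswap1 (Set.toFinite _) (SimpleGraph.mem_neighborSet _ _ _ |>.mpr hAig)
        (fun h => hna (SimpleGraph.mem_neighborSet _ _ _ |>.mp h))]
  by_cases hzf : z = d.fv
  · subst hzf
    rw [bd_nbr_fv d hT,
      nswap1 (Set.toFinite _) (SimpleGraph.mem_neighborSet _ _ _ |>.mpr hA0f.symm)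
        (fun h => hnb (SimpleGraph.mem_neighborSet _ _ _ |>.mp h).symm)]
  by_cases hzg : z = d.gv
  · subst hzg
    rw [bd_nbr_gv d hT,
      nswap1 (Set.toFinite _) (SimpleGraph.mem_neighborSet _ _ _ |>.mpr hAig.symm)
        (fun h => hnc (SimpleGraph.mem_neighborSet _ _ _ |>.mp h).symm)]
  rw [bd_nbr_other d hT hz0 hz1 hzi hzf hzg]

lemma bd_p1_ne_pi1 : d.p 1 ≠ d.p (d.i + 1) := by
  intro h
  rcases Nat.lt_or_ge d.i 2 with hi | hi2
  · have hi1 : d.i = 1 := by have := d.hi1; omega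
    exact d.hpi1pi (by rw [← h, hi1])
  · rw [bd_hp1e d, d.hpi1] at h
    rcases Sym2.eq_iff.mp h with ⟨hc, _⟩ | ⟨hc, _⟩
    · exact bd_v0i d hc
    · exact bd_gvne d hT 0 (by omega) hc.symm

lemma bd_p0_ne_pi1 : d.p 0 ≠ d.p (d.i + 1) := by
  intro h
  rw [d.hp0, d.hpi1] at h
  rcases Sym2.eq_iff.mp h with ⟨hc, _⟩ | ⟨hc, _⟩
  · exact bd_v0i d hc
  · exact bd_gvne d hT 0 (by omega) hc.symm

lemma bd_edgeSet : d.shifted.edgeSet =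
    (C.edgeSet \ {d.p 1, d.p 0, d.p (d.i+1)}) ∪
      {s(d.vs 0, d.vs d.i), s(d.vs 1, d.fv), s(d.vs 0, d.gv)} := by
  rw [BranchData.shifted, edgeSet_fromEdgeSet]
  refine Set.Subset.antisymm Set.diff_subset (fun e hmem => ⟨hmem, fun hdiag => ?_⟩)
  rcases hmem with ⟨he, _⟩ | he
  · exact (SimpleGraph.not_isDiag_of_mem_edgeSet C he) hdiag
  · have h0i := bd_v0i d
    have hf1 := bd_fvne d hT 1 d.hi1
    have hg0 := bd_gvne d hT 0 (by omega)
    simp only [Set.mem_insert_iff, Set.mem_singleton_iff] at he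
    rw [Sym2.mem_diagSet] at hdiag
    rcases he with he | he | he <;> rw [he, Sym2.mk_isDiag_iff] at hdiag
    · exact h0i hdiag
    · exact hf1 hdiag.symm
    · exact hg0 hdiag.symm

lemma bd_ecount : d.shifted.edgeSet.ncard = C.edgeSet.ncard := by
  have h01 := bd_v01 d; have h0i := bd_v0i d
  have hf0 := bd_fvne d hT 0 (by omega); have hf1 := bd_fvne d hT 1 d.hi1
  have hg0 := bd_gvne d hT 0 (by omega); have hg1 := bd_gvne d hT 1 d.hi1
  have hgi := bd_gvne d hT d.i le_rfl
  set D : Set (Sym2 W) := {d.p 1, d.p 0, d.p (d.i+1)} with hD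
  set A : Set (Sym2 W) := {s(d.vs 0, d.vs d.i), s(d.vs 1, d.fv), s(d.vs 0, d.gv)} with hA
  have hDsub : D ⊆ C.edgeSet := by
    rintro e (he | he | he) <;> rw [he]
    · exact d.hpedge 1 le_rfl d.hi1
    · exact d.hp0edge
    · exact d.hpi1edge
  have hDcard : D.ncard = 3 := by
    have hd1 : d.p 1 ∉ ({d.p 0, d.p (d.i+1)} : Set (Sym2 W)) := by
      rintro (h | h)
      · exact d.hp0p1 h.symm
      · exact bd_p1_ne_pi1 d hT h
    have hd2 : d.p 0 ∉ ({d.p (d.i+1)} : Set (Sym2 W)) := by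
      intro h
      rw [Set.mem_singleton_iff] at h
      exact bd_p0_ne_pi1 d hT h
    rw [hD, Set.ncard_insert_of_notMem hd1 (Set.toFinite _),
      Set.ncard_insert_of_notMem hd2 (Set.toFinite _), Set.ncard_singleton]
  have hAcard : A.ncard = 3 := by
    have ha1 : s(d.vs 0, d.vs d.i) ∉ ({s(d.vs 1, d.fv), s(d.vs 0, d.gv)} : Set (Sym2 W)) := by
      rintro (h | h) <;> rcases Sym2.eq_iff.mp h with ⟨hc, hc2⟩ | ⟨hc, hc2⟩
      · exact h01 hc
      · exact hf0 hc.symm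
      · exact hgi hc2.symm
      · exact hg0 hc.symm
    have ha2 : s(d.vs 1, d.fv) ∉ ({s(d.vs 0, d.gv)} : Set (Sym2 W)) := by
      intro h
      rw [Set.mem_singleton_iff] at h
      rcases Sym2.eq_iff.mp h with ⟨hc, _⟩ | ⟨hc, _⟩
      · exact h01 hc.symm
      · exact hg1 hc.symm
    rw [hA, Set.ncard_insert_of_notMem ha1 (Set.toFinite _),
      Set.ncard_insert_of_notMem ha2 (Set.toFinite _), Set.ncard_singleton]
  have hdisj : Disjoint (C.edgeSet \ D) A := by
    rw [Set.disjoint_right]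
    rintro e (he | he | he) <;> rw [he] <;> rintro ⟨hmem, hnD⟩
    · rcases Nat.lt_or_ge d.i 2 with hi | hi2
      · have hi1 : d.i = 1 := by have := d.hi1; omega
        apply hnD
        left
        rw [bd_hp1e d, hi1]
      · exact bd_anotE d hT hi2 hmem
    · exact bd_bnotE d hT hmem
    · exact bd_cnotE d hT hmem
  rw [bd_edgeSet d hT, Set.ncard_union_eq hdisj (Set.toFinite _) (Set.toFinite _),
    Set.ncard_diff hDsub (Set.toFinite _), hDcard, hAcard]
  have h3 : 3 ≤ C.edgeSet.ncard := by
    rw [← hDcard]; exact Set.ncard_le_ncard hDsub (Set.toFinite _)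
  omega

lemma bd_adj_a : d.shifted.Adj (d.vs 0) (d.vs d.i) :=
  (bd_shifted_adj d hT _ _).mpr (Or.inr (Or.inl rfl))

lemma bd_adj_b : d.shifted.Adj (d.vs 1) d.fv :=
  (bd_shifted_adj d hT _ _).mpr (Or.inr (Or.inr (Or.inl rfl)))

lemma bd_adj_c : d.shifted.Adj (d.vs 0) d.gv :=
  (bd_shifted_adj d hT _ _).mpr (Or.inr (Or.inr (Or.inr rfl)))

lemma bd_reach01 : d.shifted.Reachable (d.vs 0) (d.vs 1) := by
  rcases Nat.lt_or_ge d.i 2 with hi | hi2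
  · have hi1 : d.i = 1 := by have := d.hi1; omega
    have := bd_adj_a d hT
    rw [hi1] at this
    exact this.reachable
  · have hmid : ∀ t, 2 ≤ t → t ≤ d.i → d.shifted.Adj (d.vs (t-1)) (d.vs t) := by
      intro t h2 hle
      rw [bd_shifted_adj d hT, bd_hp1e d, d.hp0, d.hpi1]
      left
      refine ⟨bd_adjP d t (by omega) hle, ?_, ?_, ?_⟩
      · intro he
        rcases Sym2.eq_iff.mp he with ⟨hc, hc2⟩ | ⟨hc, hc2⟩
        · have := d.hvsinj t 1 hle d.hi1 hc2; omega
        · have := d.hvsinj t 0 hle (by omega) hc2; omega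
      · intro he
        rcases Sym2.eq_iff.mp he with ⟨_, hc2⟩ | ⟨hc, _⟩
        · exact bd_fvne d hT t hle hc2.symm
        · exact bd_fvne d hT (t-1) (by omega) hc.symm
      · intro he
        rcases Sym2.eq_iff.mp he with ⟨_, hc2⟩ | ⟨hc, _⟩
        · exact bd_gvne d hT t hle hc2.symm
        · exact bd_gvne d hT (t-1) (by omega) hc.symm
    have hchain : ∀ k, k ≤ d.i - 1 → d.shifted.Reachable (d.vs (d.i - k)) (d.vs d.i) := by
      intro k
      induction k with
      | zero => intro _; rw [Nat.sub_zero]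
      | succ n ih =>
        intro hle
        have h1 : d.i - (n+1) = (d.i - n) - 1 := by omega
        have h2 := hmid (d.i - n) (by omega) (by omega)
        rw [← h1] at h2
        exact h2.reachable.trans (ih (by omega))
    have := hchain (d.i - 1) le_rfl
    have h1 : d.i - (d.i - 1) = 1 := by omega
    rw [h1] at this
    exact (bd_adj_a d hT).reachable.trans this.symm

lemma bd_conn : d.shifted.Connected := by
  rw [connected_iff]
  refine ⟨?_, hT.isConnected.nonempty⟩
  intro u v
  apply reach_transfer ?_ (hT.isConnected.preconnected u v)
  intro a b hab
  by_cases h1 : s(a,b) = d.p 1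
  · rw [bd_hp1e d] at h1
    rcases Sym2.eq_iff.mp h1 with ⟨ha, hb⟩ | ⟨ha, hb⟩ <;> subst ha <;> subst hb
    · exact bd_reach01 d hT
    · exact (bd_reach01 d hT).symm
  by_cases h2 : s(a,b) = d.p 0
  · rw [d.hp0] at h2
    have hr : d.shifted.Reachable (d.vs 0) d.fv :=
      (bd_reach01 d hT).trans (bd_adj_b d hT).reachable
    rcases Sym2.eq_iff.mp h2 with ⟨ha, hb⟩ | ⟨ha, hb⟩ <;> subst ha <;> subst hb
    · exact hr
    · exact hr.symm
  by_cases h3 : s(a,b) = d.p (d.i + 1)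
  · rw [d.hpi1] at h3
    have hr : d.shifted.Reachable (d.vs d.i) d.gv :=
      (bd_adj_a d hT).reachable.symm.trans (bd_adj_c d hT).reachable
    rcases Sym2.eq_iff.mp h3 with ⟨ha, hb⟩ | ⟨ha, hb⟩ <;> subst ha <;> subst hb
    · exact hr
    · exact hr.symm
  exact ((bd_shifted_adj d hT a b).mpr (Or.inl ⟨hab, h1, h2, h3⟩)).reachable

end Helpers4

/-- If `C` is a 3-Cayley tree and `x`, `y` are nonadjacent edges of `C`,
then the tree `C'` obtained by the branch shift of `x` to `y` is again a 3-Cayley tree with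
the same set of boundary vertices as `C`. -/
theorem branch_shift_cayley {W : Type*} [Fintype W] (C : SimpleGraph W)
    (hC : IsCayley C) (x y : Sym2 W) (d : BranchData C x y) :
    IsCayley d.shifted ∧ ∀ z : W, IsLeaf d.shifted z ↔ IsLeaf C z := by
  obtain ⟨hT, hdegC⟩ := hC
  have hdeg := fun z => bd_deg d hT z
  have htreeC : C.edgeSet.ncard + 1 = Fintype.card W := by
    have h := hT.card_edgeFinset
    rw [Set.ncard_eq_toFinset_card' C.edgeSet]
    have h2 : C.edgeFinset = C.edgeSet.toFinset := rfl
    rw [← h2]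
    exact h
  have htree := tree_of_conn_card (bd_conn d hT) (by rw [bd_ecount d hT]; exact htreeC)
  refine ⟨⟨htree, fun z => ?_⟩, fun z => ?_⟩
  · rw [hdeg z]; exact hdegC z
  · unfold IsLeaf; rw [hdeg z]
end

section
/- Let (C',φ) be the branch shift of x to y applied to a tree position (C,φ) of G, where x and y are nonadjacent edges of C. Let Q be the branch shift quotient graph of G induced from x, y, and (C,φ), and let Q' be the branch shift quotient graph of G induced from f_2' and x' and (C',φ), where f_2' denotes the edge f_2 in its new position after the shift and x' denotes the edge x in its new position after the shift. Then Q' = Q; more precisely, the parts satisfy P_0' = P_0, P_{i+2}' = P_{i+2}, P_{i+1}' = P_1, and P_t' = P_{t+1} for 1 ≤ t ≤ i, so the two partitions of V are equal and the quotient graphs coincide. -/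
attribute [local instance] Classical.propDecidable

open SimpleGraph

namespace BSAux

variable {W : Type*} {G : SimpleGraph W}

/-- Walk along a sequence of vertices. -/
def seqAux (G : SimpleGraph W) (f : ℕ → W) (n : ℕ) (h : ∀ t, t < n → G.Adj (f t) (f (t+1))) :
    (m k : ℕ) → k + m ≤ n → G.Walk (f k) (f (k + m))
  | 0, _, _ => Walk.nil
  | (m+1), k, hk =>
      Walk.cons (h k (by omega))
        ((seqAux G f n h m (k+1) (by omega)).copy rfl (congrArg f (by omega)))

def seqWalk (G : SimpleGraph W) (f : ℕ → W) (n : ℕ)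
    (h : ∀ t, t < n → G.Adj (f t) (f (t+1))) : G.Walk (f 0) (f n) :=
  (seqAux G f n h n 0 (by omega)).copy rfl (congrArg f (by omega))

lemma support_seqAux (f : ℕ → W) (n : ℕ) (h : ∀ t, t < n → G.Adj (f t) (f (t+1))) :
    ∀ (m k : ℕ) (hk : k + m ≤ n),
      (seqAux G f n h m k hk).support = (List.range (m+1)).map (fun t => f (k + t)) := by
  intro m
  induction m with
  | zero => intro k hk; simp [seqAux, List.range_succ]
  | succ m ih =>
    intro k hk
    rw [seqAux, Walk.support_cons, Walk.support_copy, ih (k+1) (by omega),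
      List.range_succ_eq_map (n := m+1), List.map_cons, List.map_map]
    refine List.cons_eq_cons.mpr ⟨by simp, ?_⟩
    apply List.map_congr_left
    intro a _
    show f (k+1+a) = f (k + (a+1))
    congr 1; omega

lemma edges_seqAux (f : ℕ → W) (n : ℕ) (h : ∀ t, t < n → G.Adj (f t) (f (t+1))) :
    ∀ (m k : ℕ) (hk : k + m ≤ n),
      (seqAux G f n h m k hk).edges = (List.range m).map (fun t => s(f (k + t), f (k + t + 1))) := by
  intro m
  induction m with
  | zero => intro k hk; simp [seqAux]
  | succ m ih =>
    intro k hk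
    rw [seqAux, Walk.edges_cons, Walk.edges_copy, ih (k+1) (by omega),
      List.range_succ_eq_map (n := m), List.map_cons, List.map_map]
    refine List.cons_eq_cons.mpr ⟨by simp, ?_⟩
    apply List.map_congr_left
    intro a _
    show s(f (k+1+a), f (k+1+a+1)) = s(f (k + (a+1)), f (k + (a+1) + 1))
    have h1 : k+1+a = k+(a+1) := by omega
    rw [h1]

lemma length_seqAux (f : ℕ → W) (n : ℕ) (h : ∀ t, t < n → G.Adj (f t) (f (t+1))) :
    ∀ (m k : ℕ) (hk : k + m ≤ n), (seqAux G f n h m k hk).length = m := by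
  intro m
  induction m with
  | zero => intro k hk; simp [seqAux]
  | succ m ih =>
    intro k hk
    rw [seqAux, Walk.length_cons, Walk.length_copy, ih (k+1) (by omega)]

lemma support_seqWalk (f : ℕ → W) (n : ℕ) (h : ∀ t, t < n → G.Adj (f t) (f (t+1))) :
    (seqWalk G f n h).support = (List.range (n+1)).map f := by
  rw [seqWalk, Walk.support_copy, support_seqAux]
  simp

lemma edges_seqWalk (f : ℕ → W) (n : ℕ) (h : ∀ t, t < n → G.Adj (f t) (f (t+1))) :
    (seqWalk G f n h).edges = (List.range n).map (fun t => s(f t, f (t + 1))) := by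
  rw [seqWalk, Walk.edges_copy, edges_seqAux]
  simp

lemma length_seqWalk (f : ℕ → W) (n : ℕ) (h : ∀ t, t < n → G.Adj (f t) (f (t+1))) :
    (seqWalk G f n h).length = n := by
  rw [seqWalk, Walk.length_copy, length_seqAux]

lemma isPath_seqWalk (f : ℕ → W) (n : ℕ) (h : ∀ t, t < n → G.Adj (f t) (f (t+1)))
    (hinj : ∀ a b, a ≤ n → b ≤ n → f a = f b → a = b) : (seqWalk G f n h).IsPath := by
  rw [Walk.isPath_def, support_seqWalk]
  refine List.Nodup.map_on ?_ List.nodup_range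
  intro a ha b hb hab
  exact hinj a b (by simpa using Nat.lt_succ_iff.mp (List.mem_range.mp ha))
    (by simpa using Nat.lt_succ_iff.mp (List.mem_range.mp hb)) hab

lemma mem_edges_seqWalk {f : ℕ → W} {n : ℕ} {h : ∀ t, t < n → G.Adj (f t) (f (t+1))}
    {e : Sym2 W} (he : e ∈ (seqWalk G f n h).edges) : ∃ t, t < n ∧ e = s(f t, f (t+1)) := by
  rw [edges_seqWalk] at he
  obtain ⟨t, ht, rfl⟩ := List.mem_map.mp he
  exact ⟨t, List.mem_range.mp ht, rfl⟩

lemma seqWalk_edge_mem (f : ℕ → W) (n : ℕ) (h : ∀ t, t < n → G.Adj (f t) (f (t+1)))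
    {t : ℕ} (ht : t < n) : s(f t, f (t+1)) ∈ (seqWalk G f n h).edges := by
  rw [edges_seqWalk]
  exact List.mem_map.mpr ⟨t, List.mem_range.mpr ht, rfl⟩

/-- Extract pointwise equality from equality of mapped ranges. -/
lemma map_range_eq {α : Type*} {f g : ℕ → α} {n m : ℕ}
    (h : (List.range n).map f = (List.range m).map g) : n = m ∧ ∀ t, t < n → f t = g t := by
  have hlen : n = m := by
    have := congrArg List.length h; simpa using this
  subst hlen
  refine ⟨rfl, fun t ht => ?_⟩
  have := congrArg (fun l => l[t]?) h
  simp only [List.getElem?_map, List.getElem?_range ht, Option.map_some] at this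
  simpa using this

/-- If `S` is closed under adjacency, reachability stays in `S`. -/
lemma mem_of_reachable_closed {S : Set W} (hS : ∀ a b, G.Adj a b → a ∈ S → b ∈ S)
    {a z : W} (ha : a ∈ S) (h : G.Reachable a z) : z ∈ S := by
  obtain ⟨p⟩ := h
  induction p with
  | nil => exact ha
  | cons hadj q ih => exact ih (hS _ _ hadj ha)

lemma not_reachable_of_closed {S : Set W} (hS : ∀ a b, G.Adj a b → a ∈ S → b ∈ S)
    {a b : W} (ha : a ∈ S) (hb : b ∉ S) : ¬ G.Reachable a b :=
  fun h => hb (mem_of_reachable_closed hS ha h)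

/-- Splitting reachability at a deleted edge. -/
lemma reachable_delete_or {e : Sym2 W} {u v : W} (he : e = s(u,v)) {c z : W}
    (h : G.Reachable c z) :
    (G.deleteEdges {e}).Reachable c u ∨ (G.deleteEdges {e}).Reachable c v ∨
      (G.deleteEdges {e}).Reachable c z := by
  obtain ⟨p⟩ := h
  induction p with
  | nil => exact Or.inr (Or.inr (Reachable.refl _))
  | @cons a m z hadj q ih =>
    by_cases hae : s(a, m) = e
    · rw [he, Sym2.eq_iff] at hae
      rcases hae with ⟨rfl, rfl⟩ | ⟨rfl, rfl⟩
      · exact Or.inl (Reachable.refl _)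
      · exact Or.inr (Or.inl (Reachable.refl _))
    · have hadj' : (G.deleteEdges {e}).Adj a m := by
        rw [deleteEdges_adj]; exact ⟨hadj, by simpa using hae⟩
      rcases ih with h1 | h1 | h1
      · exact Or.inl (hadj'.reachable.trans h1)
      · exact Or.inr (Or.inl (hadj'.reachable.trans h1))
      · exact Or.inr (Or.inr (hadj'.reachable.trans h1))

/-- If an endpoint of a deleted edge is not reachable at all, deletion doesn't matter. -/
lemma reachable_delete_of_not_reach {e : Sym2 W} {u v : W} (he : e = s(u,v)) {c z : W}
    (h : G.Reachable c z) (hcu : ¬ G.Reachable c u) :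
    (G.deleteEdges {e}).Reachable c z := by
  obtain ⟨p⟩ := h
  induction p with
  | nil => exact Reachable.refl _
  | @cons a m z' hadj q ih =>
    by_cases hae : s(a, m) = e
    · exfalso
      rw [he, Sym2.eq_iff] at hae
      rcases hae with ⟨rfl, rfl⟩ | ⟨rfl, rfl⟩
      · exact hcu (Reachable.refl _)
      · exact hcu hadj.reachable
    · have hadj' : (G.deleteEdges {e}).Adj a m := by
        rw [deleteEdges_adj]; exact ⟨hadj, by simpa using hae⟩
      exact hadj'.reachable.trans (ih (fun hm => hcu (hadj.reachable.trans hm)))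

/-- In a graph with unique paths, a vertex pair joined by a path through a removed edge
is disconnected after deletion. -/
lemma not_reachable_deleteEdges {s : Set (Sym2 W)}
    (hup : ∀ a b : W, ∃! p : G.Walk a b, p.IsPath) {a b : W}
    (q : G.Walk a b) (hq : q.IsPath) {e : Sym2 W} (he : e ∈ q.edges) (hes : e ∈ s) :
    ¬ (G.deleteEdges s).Reachable a b := by
  classical
  rintro ⟨p⟩
  have hp := p.toPath.2
  have hle : G.deleteEdges s ≤ G := deleteEdges_le s
  have hPT : (↑p.toPath : (G.deleteEdges s).Walk a b).transfer G
      (fun e' he' => edgeSet_mono hle ((Walk.edges_subset_edgeSet _) he')) |>.IsPath :=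
    hp.transfer _
  have := (hup a b).unique hPT hq
  have hee : e ∈ ((↑p.toPath : (G.deleteEdges s).Walk a b).transfer G _).edges := this ▸ he
  rw [Walk.edges_transfer] at hee
  have : e ∈ (G.deleteEdges s).edgeSet := (Walk.edges_subset_edgeSet _) hee
  rw [edgeSet_deleteEdges] at this
  exact this.2 hes

lemma neighbor_three {z a b c : W} (h3 : (G.neighborSet z).ncard = 3)
    (ha : G.Adj z a) (hb : G.Adj z b) (hc : G.Adj z c)
    (hab : a ≠ b) (hac : a ≠ c) (hbc : b ≠ c) :
    ∀ d : W, G.Adj z d → d = a ∨ d = b ∨ d = c := by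
  have hsub : ({a, b, c} : Set W) ⊆ G.neighborSet z := by
    intro d hd
    rcases hd with rfl | rfl | rfl
    · exact ha
    · exact hb
    · exact hc
  have hfin : (G.neighborSet z).Finite := Set.finite_of_ncard_ne_zero (by omega)
  have hcard : ({a, b, c} : Set W).ncard = 3 := by
    rw [Set.ncard_insert_of_notMem (by
        simp only [Set.mem_insert_iff, Set.mem_singleton_iff]; push_neg; exact ⟨hab, hac⟩)
      ((Set.finite_singleton c).insert b), Set.ncard_pair hbc]
  have heq : ({a, b, c} : Set W) = G.neighborSet z :=
    Set.eq_of_subset_of_ncard_le hsub (by rw [hcard, h3]) hfin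
  intro d hd
  have : d ∈ ({a, b, c} : Set W) := heq ▸ hd
  simpa using this

lemma deg_three_of_two_adj (hcay : ∀ z : W, (G.neighborSet z).ncard = 1 ∨ (G.neighborSet z).ncard = 3)
    {z a b : W} (ha : G.Adj z a) (hb : G.Adj z b) (hab : a ≠ b) :
    (G.neighborSet z).ncard = 3 := by
  rcases hcay z with h1 | h3
  · exfalso
    obtain ⟨c, hcset⟩ := Set.ncard_eq_one.mp h1
    have h1 : a ∈ G.neighborSet z := ha
    have h2 : b ∈ G.neighborSet z := hb
    rw [hcset] at h1 h2
    exact hab (h1.trans h2.symm)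
  · exact h3

end BSAux

namespace BSAux
open SimpleGraph

variable {W : Type*} {C : SimpleGraph W} {x y : Sym2 W} {d : BranchData C x y}

/-- The context for the branch shift: `C` is a 3-Cayley tree, and the path has length
at least 2. -/
structure Ctx (d : BranchData C x y) : Prop where
  tree : C.IsTree
  deg : ∀ z : W, (C.neighborSet z).ncard = 1 ∨ (C.neighborSet z).ncard = 3
  i2 : 2 ≤ d.i

namespace Ctx

lemma hup (h : Ctx d) : ∀ a b : W, ∃! p : C.Walk a b, p.IsPath :=
  (isTree_iff_existsUnique_path.mp h.tree).2

end Ctx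

lemma no_second_path {G : SimpleGraph W} (hup : ∀ a b : W, ∃! p : G.Walk a b, p.IsPath)
    {α β : W} (hadj : G.Adj α β) (q : G.Walk α β) (hq : q.IsPath)
    (hne : s(α,β) ∉ q.edges) : False := by
  have h1 : (Walk.cons hadj Walk.nil).IsPath := by
    simp [Walk.isPath_def, hadj.ne]
  have heq := (hup α β).unique hq h1
  rw [heq] at hne
  simp at hne

/-! Adjacency facts along the path. -/

lemma adj_p (d : BranchData C x y) : ∀ t, t < d.i → C.Adj (d.vs t) (d.vs (t+1)) := by
  intro t ht
  rw [← SimpleGraph.mem_edgeSet]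
  have := d.hpedge (t+1) (by omega) (by omega)
  rwa [d.hpe (t+1) (by omega) (by omega)] at this

lemma adj_p0 (d : BranchData C x y) : C.Adj (d.vs 0) d.fv := by
  rw [← SimpleGraph.mem_edgeSet, ← d.hp0]; exact d.hp0edge

lemma adj_x (d : BranchData C x y) : C.Adj d.x0 (d.vs 0) := by
  rw [← SimpleGraph.mem_edgeSet, ← d.hxe]; exact d.hx

lemma adj_y (d : BranchData C x y) : C.Adj (d.vs d.i) d.y1 := by
  rw [← SimpleGraph.mem_edgeSet, ← d.hye]; exact d.hy

lemma adj_pi1 (d : BranchData C x y) : C.Adj (d.vs d.i) d.gv := by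
  rw [← SimpleGraph.mem_edgeSet, ← d.hpi1]; exact d.hpi1edge

/-- The walk along the path from `vs j` to `vs t`. -/
def spine (d : BranchData C x y) (j t : ℕ) (hjt : j ≤ t) (ht : t ≤ d.i) :
    C.Walk (d.vs j) (d.vs t) :=
  (seqWalk C (fun k => d.vs (j+k)) (t - j)
    (fun k hk => by
      have : C.Adj (d.vs (j+k)) (d.vs (j+k+1)) := adj_p d (j+k) (by omega)
      exact this)).copy (congrArg d.vs (by omega)) (congrArg d.vs (by omega))

lemma support_spine (d : BranchData C x y) (j t : ℕ) (hjt : j ≤ t) (ht : t ≤ d.i) :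
    (spine d j t hjt ht).support = (List.range (t-j+1)).map (fun k => d.vs (j+k)) := by
  rw [spine, Walk.support_copy, support_seqWalk]

lemma mem_support_spine {d : BranchData C x y} {j t : ℕ} {hjt : j ≤ t} {ht : t ≤ d.i} {z : W} :
    z ∈ (spine d j t hjt ht).support ↔ ∃ k, j ≤ k ∧ k ≤ t ∧ z = d.vs k := by
  rw [support_spine, List.mem_map]
  constructor
  · rintro ⟨k, hk, rfl⟩
    have := List.mem_range.mp hk
    exact ⟨j+k, by omega, by omega, rfl⟩
  · rintro ⟨k, h1, h2, rfl⟩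
    exact ⟨k - j, List.mem_range.mpr (by omega), by congr 1; omega⟩

lemma edges_spine (d : BranchData C x y) (j t : ℕ) (hjt : j ≤ t) (ht : t ≤ d.i) :
    (spine d j t hjt ht).edges = (List.range (t-j)).map (fun k => s(d.vs (j+k), d.vs (j+k+1))) := by
  rw [spine, Walk.edges_copy, edges_seqWalk]
  apply List.map_congr_left
  intro a _
  have h1 : j + (a + 1) = j + a + 1 := by omega
  rw [h1]

lemma mem_edges_spine {d : BranchData C x y} {j t : ℕ} {hjt : j ≤ t} {ht : t ≤ d.i}
    {e : Sym2 W} :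
    e ∈ (spine d j t hjt ht).edges ↔ ∃ k, j ≤ k ∧ k < t ∧ e = s(d.vs k, d.vs (k+1)) := by
  rw [edges_spine, List.mem_map]
  constructor
  · rintro ⟨k, hk, rfl⟩
    have := List.mem_range.mp hk
    exact ⟨j+k, by omega, by omega, rfl⟩
  · rintro ⟨k, h1, h2, rfl⟩
    refine ⟨k - j, List.mem_range.mpr (by omega), ?_⟩
    have hk : j + (k - j) = k := by omega
    rw [hk]

lemma isPath_spine (d : BranchData C x y) (j t : ℕ) (hjt : j ≤ t) (ht : t ≤ d.i) :
    (spine d j t hjt ht).IsPath := by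
  rw [spine, Walk.isPath_copy]
  exact isPath_seqWalk _ _ _ (fun a b ha hb hab => by
    have := d.hvsinj (j+a) (j+b) (by omega) (by omega) hab
    omega)

/-! Distinctness facts. -/

lemma no_chord (h : Ctx d) {a b : ℕ} (hab : a + 2 ≤ b) (hb : b ≤ d.i) :
    ¬ C.Adj (d.vs a) (d.vs b) := by
  intro hadj
  refine no_second_path h.hup hadj (spine d a b (by omega) hb) (isPath_spine d a b _ _) ?_
  rw [mem_edges_spine]
  rintro ⟨k, h1, h2, hek⟩
  rw [Sym2.eq_iff] at hek
  rcases hek with ⟨ha, hb'⟩ | ⟨ha, hb'⟩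
  · have := d.hvsinj a k (by omega) (by omega) ha
    have := d.hvsinj b (k+1) (by omega) (by omega) hb'
    omega
  · have := d.hvsinj a (k+1) (by omega) (by omega) ha
    have := d.hvsinj b k (by omega) (by omega) hb'
    omega

lemma fv_ne_vs (h : Ctx d) : ∀ t, t ≤ d.i → d.fv ≠ d.vs t := by
  intro t ht heq
  rcases Nat.lt_or_ge t 2 with ht2 | ht2
  · interval_cases t
    · exact (adj_p0 d).ne' (heq ▸ rfl)
    · apply d.hp0p1
      rw [d.hp0, d.hpe 1 le_rfl (by omega), heq]
  · have hadj : C.Adj (d.vs 0) (d.vs t) := heq ▸ adj_p0 d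
    exact no_chord h (by omega) ht hadj

lemma gv_ne_vs (h : Ctx d) : ∀ t, t ≤ d.i → d.gv ≠ d.vs t := by
  intro t ht heq
  rcases Nat.lt_or_ge (t+2) (d.i+1) with ht2 | ht2
  · have hadj : C.Adj (d.vs t) (d.vs d.i) := (heq ▸ adj_pi1 d).symm
    exact no_chord h (by omega) le_rfl hadj
  · -- t = i or t = i - 1
    rcases Nat.eq_or_lt_of_le ht with rfl | htlt
    · exact (adj_pi1 d).ne' (heq ▸ rfl)
    · have hti : t = d.i - 1 := by omega
      apply d.hpi1pi
      rw [d.hpi1, d.hpe d.i (by omega) le_rfl, heq, hti, Sym2.eq_swap]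

lemma fv_ne_x0 (d : BranchData C x y) : d.fv ≠ d.x0 := by
  intro heq
  apply d.hp0x
  rw [d.hp0, heq, Sym2.eq_swap]
  exact d.hxe.symm

lemma gv_ne_y1 (d : BranchData C x y) : d.gv ≠ d.y1 := by
  intro heq
  apply d.hpi1y
  rw [d.hpi1, heq]
  exact d.hye.symm

lemma fv_ne_y1 (h : Ctx d) : d.fv ≠ d.y1 := by
  intro heq
  have hadj : C.Adj (d.vs 0) d.y1 := heq ▸ adj_p0 d
  have hq : ((spine d 0 d.i (by omega) le_rfl).concat (adj_y d)).IsPath := by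
    rw [Walk.isPath_def, Walk.support_concat]
    rw [List.nodup_append']
    refine ⟨(isPath_spine d 0 d.i _ _).2, List.nodup_singleton _, ?_⟩
    intro a ha hb
    rw [List.mem_singleton] at hb
    subst hb
    rw [mem_support_spine] at ha
    obtain ⟨k, _, hk, hk'⟩ := ha
    exact d.hy1 k hk hk'
  refine no_second_path h.hup hadj _ hq ?_
  rw [Walk.edges_concat, List.concat_eq_append, List.mem_append, List.mem_singleton]
  rintro (hmem | hmem)
  · rw [mem_edges_spine] at hmem
    obtain ⟨k, _, hk, hek⟩ := hmem
    rw [Sym2.eq_iff] at hek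
    rcases hek with ⟨ha, hb'⟩ | ⟨ha, hb'⟩
    · exact d.hy1 (k+1) (by omega) hb'
    · exact d.hy1 k (by omega) hb'
  · rw [Sym2.eq_iff] at hmem
    rcases hmem with ⟨ha, _⟩ | ⟨_, hb'⟩
    · have := d.hvsinj 0 d.i (by omega) le_rfl ha
      have hi1 := d.hi1
      omega
    · exact d.hy1 d.i le_rfl hb'

lemma gv_ne_x0 (h : Ctx d) : d.gv ≠ d.x0 := by
  intro heq
  have hadj : C.Adj d.x0 (d.vs d.i) := (heq ▸ adj_pi1 d).symm
  have hq : (Walk.cons (adj_x d) (spine d 0 d.i (by omega) le_rfl)).IsPath := by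
    rw [Walk.cons_isPath_iff]
    refine ⟨isPath_spine d 0 d.i _ _, ?_⟩
    rw [mem_support_spine]
    rintro ⟨k, _, hk, hk'⟩
    exact d.hx0 k hk hk'
  refine no_second_path h.hup hadj _ hq ?_
  rw [Walk.edges_cons, List.mem_cons]
  rintro (hmem | hmem)
  · rw [Sym2.eq_iff] at hmem
    rcases hmem with ⟨_, hb'⟩ | ⟨ha, _⟩
    · have := d.hvsinj d.i 0 le_rfl (by omega) hb'
      have hi1 := d.hi1
      omega
    · exact d.hx0 0 (by omega) ha
  · rw [mem_edges_spine] at hmem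
    obtain ⟨k, _, hk, hek⟩ := hmem
    rw [Sym2.eq_iff] at hek
    rcases hek with ⟨ha, _⟩ | ⟨ha, _⟩
    · exact d.hx0 k (by omega) ha
    · exact d.hx0 (k+1) (by omega) ha

lemma fv_ne_gv (h : Ctx d) : d.fv ≠ d.gv := by
  intro heq
  have hadj : C.Adj (d.vs d.i) d.fv := by rw [heq]; exact adj_pi1 d
  have hq : (((spine d 0 d.i (by omega) le_rfl).reverse).concat (adj_p0 d)).IsPath := by
    rw [Walk.isPath_def, Walk.support_concat, List.nodup_append']
    refine ⟨by rw [Walk.support_reverse]; exact List.nodup_reverse.mpr (isPath_spine d 0 d.i _ _).2,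
      List.nodup_singleton _, ?_⟩
    intro a ha hb
    rw [List.mem_singleton] at hb
    subst hb
    rw [Walk.support_reverse, List.mem_reverse, mem_support_spine] at ha
    obtain ⟨k, _, hk, hk'⟩ := ha
    exact fv_ne_vs h k hk hk'
  refine no_second_path h.hup hadj _ hq ?_
  rw [Walk.edges_concat, List.concat_eq_append, List.mem_append, List.mem_singleton,
    Walk.edges_reverse, List.mem_reverse]
  rintro (hmem | hmem)
  · rw [mem_edges_spine] at hmem
    obtain ⟨k, _, hk, hek⟩ := hmem
    rw [Sym2.eq_iff] at hek
    rcases hek with ⟨_, hb'⟩ | ⟨_, hb'⟩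
    · exact fv_ne_vs h (k+1) (by omega) hb'
    · exact fv_ne_vs h k (by omega) hb'
  · rw [Sym2.eq_iff] at hmem
    rcases hmem with ⟨ha, _⟩ | ⟨_, hb'⟩
    · have := d.hvsinj d.i 0 le_rfl (by omega) ha
      have hi1 := d.hi1
      omega
    · exact fv_ne_vs h 0 (by omega) hb'

lemma x0_ne_y1 (h : Ctx d) : d.x0 ≠ d.y1 := by
  intro heq
  have hadj : C.Adj d.x0 (d.vs d.i) := by rw [heq]; exact (adj_y d).symm
  have hq : (Walk.cons (adj_x d) (spine d 0 d.i (by omega) le_rfl)).IsPath := by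
    rw [Walk.cons_isPath_iff]
    refine ⟨isPath_spine d 0 d.i _ _, ?_⟩
    rw [mem_support_spine]
    rintro ⟨k, _, hk, hk'⟩
    exact d.hx0 k hk hk'
  refine no_second_path h.hup hadj _ hq ?_
  rw [Walk.edges_cons, List.mem_cons]
  rintro (hmem | hmem)
  · rw [Sym2.eq_iff] at hmem
    rcases hmem with ⟨_, hb'⟩ | ⟨ha, _⟩
    · have := d.hvsinj d.i 0 le_rfl (by omega) hb'
      have hi1 := d.hi1
      omega
    · exact d.hx0 0 (by omega) ha
  · rw [mem_edges_spine] at hmem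
    obtain ⟨k, _, hk, hek⟩ := hmem
    rw [Sym2.eq_iff] at hek
    rcases hek with ⟨ha, _⟩ | ⟨ha, _⟩
    · exact d.hx0 k (by omega) ha
    · exact d.hx0 (k+1) (by omega) ha

end BSAux

namespace BSAux
open SimpleGraph

variable {W : Type*} {C : SimpleGraph W} {x y : Sym2 W} {d : BranchData C x y}

/-- The other endpoint of the third edge `fE t`. -/
noncomputable def zE (d : BranchData C x y) (t : ℕ) : W :=
  if h : 2 ≤ t ∧ t ≤ d.i then
    Classical.choose (Sym2.mem_iff_exists.mp (d.hfE t h.1 h.2).2.1)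
  else d.x0

lemma zE_spec (d : BranchData C x y) {t : ℕ} (h2 : 2 ≤ t) (hti : t ≤ d.i) :
    d.fE t = s(d.vs (t-1), zE d t) := by
  rw [zE, dif_pos ⟨h2, hti⟩]
  exact Classical.choose_spec (Sym2.mem_iff_exists.mp (d.hfE t h2 hti).2.1)

lemma adj_fE (d : BranchData C x y) {t : ℕ} (h2 : 2 ≤ t) (hti : t ≤ d.i) :
    C.Adj (d.vs (t-1)) (zE d t) := by
  rw [← SimpleGraph.mem_edgeSet, ← zE_spec d h2 hti]
  exact (d.hfE t h2 hti).1

/-! No edges of `C` other than the path edges join special vertices. -/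

lemma not_adj_vs_fv (h : Ctx d) {t : ℕ} (h1 : 1 ≤ t) (ht : t ≤ d.i) :
    ¬ C.Adj (d.vs t) d.fv := by
  intro hadj
  have hq : (((spine d 0 t (by omega) ht).reverse).concat (adj_p0 d)).IsPath := by
    rw [Walk.isPath_def, Walk.support_concat, List.nodup_append']
    refine ⟨by rw [Walk.support_reverse]; exact List.nodup_reverse.mpr (isPath_spine d 0 t _ _).2,
      List.nodup_singleton _, ?_⟩
    intro a ha hb
    rw [List.mem_singleton] at hb
    subst hb
    rw [Walk.support_reverse, List.mem_reverse, mem_support_spine] at ha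
    obtain ⟨k, _, hk, hk'⟩ := ha
    exact fv_ne_vs h k (by omega) hk'
  refine no_second_path h.hup hadj _ hq ?_
  rw [Walk.edges_concat, List.concat_eq_append, List.mem_append, List.mem_singleton,
    Walk.edges_reverse, List.mem_reverse]
  rintro (hmem | hmem)
  · rw [mem_edges_spine] at hmem
    obtain ⟨k, _, hk, hek⟩ := hmem
    rw [Sym2.eq_iff] at hek
    rcases hek with ⟨_, hb'⟩ | ⟨_, hb'⟩
    · exact fv_ne_vs h (k+1) (by omega) hb'
    · exact fv_ne_vs h k (by omega) hb'
  · rw [Sym2.eq_iff] at hmem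
    rcases hmem with ⟨ha, _⟩ | ⟨_, hb'⟩
    · have := d.hvsinj t 0 ht (by omega) ha
      omega
    · exact fv_ne_vs h 0 (by omega) hb'

lemma not_adj_vs_gv (h : Ctx d) {t : ℕ} (ht : t + 1 ≤ d.i) :
    ¬ C.Adj (d.vs t) d.gv := by
  intro hadj
  have hq : ((spine d t d.i (by omega) le_rfl).concat (adj_pi1 d)).IsPath := by
    rw [Walk.isPath_def, Walk.support_concat, List.nodup_append']
    refine ⟨(isPath_spine d t d.i _ _).2, List.nodup_singleton _, ?_⟩
    intro a ha hb
    rw [List.mem_singleton] at hb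
    subst hb
    rw [mem_support_spine] at ha
    obtain ⟨k, _, hk, hk'⟩ := ha
    exact gv_ne_vs h k hk hk'
  refine no_second_path h.hup hadj _ hq ?_
  rw [Walk.edges_concat, List.concat_eq_append, List.mem_append, List.mem_singleton]
  rintro (hmem | hmem)
  · rw [mem_edges_spine] at hmem
    obtain ⟨k, _, hk, hek⟩ := hmem
    rw [Sym2.eq_iff] at hek
    rcases hek with ⟨_, hb'⟩ | ⟨_, hb'⟩
    · exact gv_ne_vs h (k+1) (by omega) hb'
    · exact gv_ne_vs h k (by omega) hb'
  · rw [Sym2.eq_iff] at hmem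
    rcases hmem with ⟨ha, _⟩ | ⟨_, hb'⟩
    · have := d.hvsinj t d.i (by omega) le_rfl ha
      omega
    · exact gv_ne_vs h d.i le_rfl hb'

lemma not_adj_vs_x0 (h : Ctx d) {t : ℕ} (h1 : 1 ≤ t) (ht : t ≤ d.i) :
    ¬ C.Adj (d.vs t) d.x0 := by
  intro hadj
  have hq : (Walk.cons (adj_x d) (spine d 0 t (by omega) ht)).IsPath := by
    rw [Walk.cons_isPath_iff]
    refine ⟨isPath_spine d 0 t _ _, ?_⟩
    rw [mem_support_spine]
    rintro ⟨k, _, hk, hk'⟩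
    exact d.hx0 k (by omega) hk'
  refine no_second_path h.hup hadj.symm _ hq ?_
  rw [Walk.edges_cons, List.mem_cons]
  rintro (hmem | hmem)
  · rw [Sym2.eq_iff] at hmem
    rcases hmem with ⟨_, hb'⟩ | ⟨ha, _⟩
    · have := d.hvsinj t 0 ht (by omega) hb'
      omega
    · exact d.hx0 0 (by omega) ha
  · rw [mem_edges_spine] at hmem
    obtain ⟨k, _, hk, hek⟩ := hmem
    rw [Sym2.eq_iff] at hek
    rcases hek with ⟨ha, _⟩ | ⟨ha, _⟩
    · exact d.hx0 k (by omega) ha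
    · exact d.hx0 (k+1) (by omega) ha

lemma not_adj_vs_y1 (h : Ctx d) {t : ℕ} (ht : t + 1 ≤ d.i) :
    ¬ C.Adj (d.vs t) d.y1 := by
  intro hadj
  have hq : ((spine d t d.i (by omega) le_rfl).concat (adj_y d)).IsPath := by
    rw [Walk.isPath_def, Walk.support_concat, List.nodup_append']
    refine ⟨(isPath_spine d t d.i _ _).2, List.nodup_singleton _, ?_⟩
    intro a ha hb
    rw [List.mem_singleton] at hb
    subst hb
    rw [mem_support_spine] at ha
    obtain ⟨k, _, hk, hk'⟩ := ha
    exact d.hy1 k hk hk'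
  refine no_second_path h.hup hadj _ hq ?_
  rw [Walk.edges_concat, List.concat_eq_append, List.mem_append, List.mem_singleton]
  rintro (hmem | hmem)
  · rw [mem_edges_spine] at hmem
    obtain ⟨k, _, hk, hek⟩ := hmem
    rw [Sym2.eq_iff] at hek
    rcases hek with ⟨_, hb'⟩ | ⟨_, hb'⟩
    · exact d.hy1 (k+1) (by omega) hb'
    · exact d.hy1 k (by omega) hb'
  · rw [Sym2.eq_iff] at hmem
    rcases hmem with ⟨ha, _⟩ | ⟨_, hb'⟩
    · have := d.hvsinj t d.i (by omega) le_rfl ha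
      omega
    · exact d.hy1 d.i le_rfl hb'

/-! The other endpoints of the `fE` edges avoid all special vertices. -/

lemma zE_ne_vs (h : Ctx d) {t : ℕ} (h2 : 2 ≤ t) (hti : t ≤ d.i) :
    ∀ s, s ≤ d.i → zE d t ≠ d.vs s := by
  intro s hs heq
  have hadj : C.Adj (d.vs (t-1)) (d.vs s) := by rw [← heq]; exact adj_fE d h2 hti
  rcases Nat.lt_trichotomy s (t-1) with hlt | heqs | hgt
  · rcases Nat.eq_or_lt_of_le (Nat.succ_le_of_lt hlt) with hst | hlt2
    · -- s = t - 2 : fE t = p (t-1)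
      apply (d.hfE t h2 hti).2.2.1
      rw [zE_spec d h2 hti, heq, d.hpe (t-1) (by omega) (by omega)]
      have hs2 : s = t - 1 - 1 := by omega
      rw [hs2, Sym2.eq_swap]
    · exact no_chord h (by omega) (by omega) hadj.symm
  · exact hadj.ne (by rw [heqs])
  · rcases Nat.eq_or_lt_of_le (Nat.succ_le_of_lt hgt) with hst | hlt2
    · -- s = t : fE t = p t
      apply (d.hfE t h2 hti).2.2.2
      rw [zE_spec d h2 hti, heq, d.hpe t (by omega) hti]
      have hs2 : s = t := by omega
      rw [hs2]
    · exact no_chord h (by omega) hs hadj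

lemma zE_ne_fv (h : Ctx d) {t : ℕ} (h2 : 2 ≤ t) (hti : t ≤ d.i) : zE d t ≠ d.fv := by
  intro heq
  exact not_adj_vs_fv h (t := t-1) (by omega) (by omega) (heq ▸ adj_fE d h2 hti)

lemma zE_ne_gv (h : Ctx d) {t : ℕ} (h2 : 2 ≤ t) (hti : t ≤ d.i) : zE d t ≠ d.gv := by
  intro heq
  exact not_adj_vs_gv h (t := t-1) (by omega) (heq ▸ adj_fE d h2 hti)

lemma zE_ne_x0 (h : Ctx d) {t : ℕ} (h2 : 2 ≤ t) (hti : t ≤ d.i) : zE d t ≠ d.x0 := by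
  intro heq
  exact not_adj_vs_x0 h (t := t-1) (by omega) (by omega) (heq ▸ adj_fE d h2 hti)

lemma zE_ne_y1 (h : Ctx d) {t : ℕ} (h2 : 2 ≤ t) (hti : t ≤ d.i) : zE d t ≠ d.y1 := by
  intro heq
  exact not_adj_vs_y1 h (t := t-1) (by omega) (heq ▸ adj_fE d h2 hti)

/-! ### The common graph `D` and its components -/

/-- `D`: the graph `C` with the three edges `p 0`, `p 1`, `p (i+1)` removed. -/
def Dg (d : BranchData C x y) : SimpleGraph W :=
  C.deleteEdges {d.p 0, d.p 1, d.p (d.i+1)}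

lemma Dg_adj {a b : W} : (Dg d).Adj a b ↔
    C.Adj a b ∧ s(a,b) ≠ d.p 0 ∧ s(a,b) ≠ d.p 1 ∧ s(a,b) ≠ d.p (d.i+1) := by
  rw [Dg, deleteEdges_adj]
  simp only [Set.mem_insert_iff, Set.mem_singleton_iff]
  tauto

lemma Dg_le (d : BranchData C x y) : Dg d ≤ C := deleteEdges_le _

lemma ne_p0_of_endpoints (h : Ctx d) {a b : W} (hb : b ≠ d.fv) (hb' : b ≠ d.vs 0)
    (ha : a ≠ d.fv) (ha' : a ≠ d.vs 0) : True := trivial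

/-- Helper: an edge given by two endpoints differs from `s(c₁,c₂)` when endpoints differ. -/
lemma sym2_ne {a b c e : W} (h1 : a ≠ c ∨ b ≠ e) (h2 : a ≠ e ∨ b ≠ c) : s(a,b) ≠ s(c,e) := by
  rw [Ne, Sym2.eq_iff]
  rintro (⟨rfl, rfl⟩ | ⟨rfl, rfl⟩)
  · rcases h1 with h | h <;> exact h rfl
  · rcases h2 with h | h <;> exact h rfl

lemma D_adj_p (h : Ctx d) {t : ℕ} (h2 : 2 ≤ t) (ht : t ≤ d.i) :
    (Dg d).Adj (d.vs (t-1)) (d.vs t) := by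
  rw [Dg_adj]
  refine ⟨by have := adj_p d (t-1) (by omega); simpa [Nat.sub_add_cancel (by omega : 1 ≤ t)] using this, ?_, ?_, ?_⟩
  · rw [d.hp0]
    exact sym2_ne (Or.inr (fun he => fv_ne_vs h t ht he.symm))
      (Or.inl (fun he => fv_ne_vs h (t-1) (by omega) he.symm))
  · rw [d.hpe 1 le_rfl (by omega)]
    have h0 : d.vs 0 = d.vs (1-1) := rfl
    exact sym2_ne
      (Or.inl (fun he => by have := d.hvsinj (t-1) 0 (by omega) (by omega) he; omega))
      (Or.inr (fun he => by have := d.hvsinj t 0 ht (by omega) he; omega))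
  · rw [d.hpi1]
    exact sym2_ne (Or.inr (fun he => gv_ne_vs h t ht he.symm))
      (Or.inl (fun he => gv_ne_vs h (t-1) (by omega) he.symm))

lemma D_adj_x (h : Ctx d) : (Dg d).Adj d.x0 (d.vs 0) := by
  rw [Dg_adj]
  refine ⟨adj_x d, ?_, ?_, ?_⟩
  · rw [d.hp0]
    exact sym2_ne (Or.inr (fun he => fv_ne_vs h 0 (by omega) he.symm))
      (Or.inl (fun he => fv_ne_x0 d he.symm))
  · rw [d.hpe 1 le_rfl d.hi1]
    have h0 : d.vs (1-1) = d.vs 0 := rfl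
    rw [h0]
    exact sym2_ne (Or.inl (fun he => d.hx0 0 (by omega) he))
      (Or.inl (fun he => d.hx0 1 d.hi1 he))
  · rw [d.hpi1]
    exact sym2_ne
      (Or.inl (fun he => d.hx0 d.i le_rfl he))
      (Or.inr (fun he => by have := d.hvsinj 0 d.i (by omega) le_rfl he; have := d.hi1; omega))

lemma D_adj_y (h : Ctx d) : (Dg d).Adj (d.vs d.i) d.y1 := by
  rw [Dg_adj]
  refine ⟨adj_y d, ?_, ?_, ?_⟩
  · rw [d.hp0]
    exact sym2_ne
      (Or.inl (fun he => by have := d.hvsinj d.i 0 le_rfl (by omega) he; have := d.hi1; omega))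
      (Or.inr (fun he => d.hy1 0 (by omega) he))
  · rw [d.hpe 1 le_rfl d.hi1]
    have h0 : d.vs (1-1) = d.vs 0 := rfl
    rw [h0]
    exact sym2_ne
      (Or.inl (fun he => by have := d.hvsinj d.i 0 le_rfl (by omega) he; have := d.hi1; omega))
      (Or.inr (fun he => d.hy1 0 (by omega) he))
  · rw [d.hpi1]
    exact sym2_ne (Or.inr (fun he => gv_ne_y1 d he.symm))
      (Or.inr (fun he => d.hy1 d.i le_rfl he))

lemma D_adj_fE (h : Ctx d) {t : ℕ} (h2 : 2 ≤ t) (ht : t ≤ d.i) :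
    (Dg d).Adj (d.vs (t-1)) (zE d t) := by
  rw [Dg_adj]
  refine ⟨adj_fE d h2 ht, ?_, ?_, ?_⟩
  · rw [d.hp0]
    exact sym2_ne
      (Or.inl (fun he => by have := d.hvsinj (t-1) 0 (by omega) (by omega) he; omega))
      (Or.inl (fun he => fv_ne_vs h (t-1) (by omega) he.symm))
  · rw [d.hpe 1 le_rfl d.hi1]
    have h0 : d.vs (1-1) = d.vs 0 := rfl
    rw [h0]
    exact sym2_ne
      (Or.inl (fun he => by have := d.hvsinj (t-1) 0 (by omega) (by omega) he; omega))
      (Or.inr (fun he => zE_ne_vs h h2 ht 0 (by omega) he))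
  · rw [d.hpi1]
    exact sym2_ne
      (Or.inl (fun he => by have := d.hvsinj (t-1) d.i (by omega) le_rfl he; omega))
      (Or.inl (fun he => gv_ne_vs h (t-1) (by omega) he.symm))

/-! The four components of `D`. -/

def clA (d : BranchData C x y) : Set W := {z | (Dg d).Reachable d.fv z}
def clB (d : BranchData C x y) : Set W := {z | (Dg d).Reachable (d.vs 0) z}
def clM (d : BranchData C x y) : Set W := {z | (Dg d).Reachable (d.vs 1) z}
def clG (d : BranchData C x y) : Set W := {z | (Dg d).Reachable d.gv z}

lemma mem_clA (d : BranchData C x y) : d.fv ∈ clA d := Reachable.refl _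
lemma mem_clB (d : BranchData C x y) : d.vs 0 ∈ clB d := Reachable.refl _
lemma mem_clG (d : BranchData C x y) : d.gv ∈ clG d := Reachable.refl _

lemma vs_mem_clM (h : Ctx d) : ∀ t, 1 ≤ t → t ≤ d.i → d.vs t ∈ clM d := by
  intro t h1 ht
  induction t with
  | zero => omega
  | succ n ih =>
    rcases Nat.eq_or_lt_of_le h1 with h1' | h1'
    · rw [← h1']
      exact Reachable.refl _
    · have hn : d.vs n ∈ clM d := ih (by omega) (by omega)
      have : (Dg d).Adj (d.vs n) (d.vs (n+1)) := by
        have := D_adj_p h (t := n+1) (by omega) ht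
        simpa using this
      exact Reachable.trans hn this.reachable

lemma x0_mem_clB (h : Ctx d) : d.x0 ∈ clB d := (D_adj_x h).symm.reachable
lemma y1_mem_clM (h : Ctx d) : d.y1 ∈ clM d :=
  (vs_mem_clM h d.i d.hi1 le_rfl).trans (D_adj_y h).reachable
lemma zE_mem_clM (h : Ctx d) {t : ℕ} (h2 : 2 ≤ t) (ht : t ≤ d.i) : zE d t ∈ clM d :=
  (vs_mem_clM h (t-1) (by omega) (by omega)).trans (D_adj_fE h h2 ht).reachable

/-! Non-reachability between the four base points in `D`. -/

lemma hp0_mem (d : BranchData C x y) :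
    d.p 0 ∈ ({d.p 0, d.p 1, d.p (d.i+1)} : Set (Sym2 W)) := by simp
lemma hp1_mem (d : BranchData C x y) :
    d.p 1 ∈ ({d.p 0, d.p 1, d.p (d.i+1)} : Set (Sym2 W)) := by simp
lemma hpi1_mem (d : BranchData C x y) :
    d.p (d.i+1) ∈ ({d.p 0, d.p 1, d.p (d.i+1)} : Set (Sym2 W)) := by simp

lemma not_reach_fv_vs0 (h : Ctx d) : ¬ (Dg d).Reachable d.fv (d.vs 0) := by
  have hq : (Walk.cons (adj_p0 d).symm Walk.nil).IsPath := by
    simp [Walk.isPath_def, (adj_p0 d).ne']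
  refine not_reachable_deleteEdges h.hup _ hq (e := s(d.fv, d.vs 0)) (by simp) ?_
  rw [Sym2.eq_swap, ← d.hp0]
  exact hp0_mem d

lemma not_reach_fv_vs1 (h : Ctx d) : ¬ (Dg d).Reachable d.fv (d.vs 1) := by
  have hq : (Walk.cons (adj_p0 d).symm (spine d 0 1 (by omega) d.hi1)).IsPath := by
    rw [Walk.cons_isPath_iff]
    refine ⟨isPath_spine d 0 1 _ _, ?_⟩
    rw [mem_support_spine]
    rintro ⟨k, _, hk, hk'⟩
    exact fv_ne_vs h k (by have := d.hi1; omega) hk'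
  refine not_reachable_deleteEdges h.hup _ hq (e := s(d.fv, d.vs 0)) (by simp) ?_
  rw [Sym2.eq_swap, ← d.hp0]
  exact hp0_mem d

lemma not_reach_fv_gv (h : Ctx d) : ¬ (Dg d).Reachable d.fv d.gv := by
  have hq1 : ((spine d 0 d.i (by omega) le_rfl).concat (adj_pi1 d)).IsPath := by
    rw [Walk.isPath_def, Walk.support_concat, List.nodup_append']
    refine ⟨(isPath_spine d 0 d.i _ _).2, List.nodup_singleton _, ?_⟩
    intro a ha hb
    rw [List.mem_singleton] at hb
    subst hb
    rw [mem_support_spine] at ha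
    obtain ⟨k, _, hk, hk'⟩ := ha
    exact gv_ne_vs h k hk hk'
  have hq : (Walk.cons (adj_p0 d).symm
      ((spine d 0 d.i (by omega) le_rfl).concat (adj_pi1 d))).IsPath := by
    rw [Walk.cons_isPath_iff]
    refine ⟨hq1, ?_⟩
    rw [Walk.support_concat, List.mem_append, List.mem_singleton]
    rintro (ha | ha)
    · rw [mem_support_spine] at ha
      obtain ⟨k, _, hk, hk'⟩ := ha
      exact fv_ne_vs h k hk hk'
    · exact fv_ne_gv h ha
  refine not_reachable_deleteEdges h.hup _ hq (e := s(d.fv, d.vs 0)) (by simp) ?_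
  rw [Sym2.eq_swap, ← d.hp0]
  exact hp0_mem d

lemma not_reach_vs0_vs1 (h : Ctx d) : ¬ (Dg d).Reachable (d.vs 0) (d.vs 1) := by
  have hq : (Walk.cons (adj_p d 0 d.hi1) Walk.nil).IsPath := by
    simp [Walk.isPath_def, (adj_p d 0 d.hi1).ne]
  refine not_reachable_deleteEdges h.hup _ hq (e := s(d.vs 0, d.vs 1)) (by simp) ?_
  have : d.p 1 = s(d.vs 0, d.vs 1) := d.hpe 1 le_rfl d.hi1
  rw [← this]
  exact hp1_mem d

lemma not_reach_vs0_gv (h : Ctx d) : ¬ (Dg d).Reachable (d.vs 0) d.gv := by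
  have hq : ((spine d 0 d.i (by omega) le_rfl).concat (adj_pi1 d)).IsPath := by
    rw [Walk.isPath_def, Walk.support_concat, List.nodup_append']
    refine ⟨(isPath_spine d 0 d.i _ _).2, List.nodup_singleton _, ?_⟩
    intro a ha hb
    rw [List.mem_singleton] at hb
    subst hb
    rw [mem_support_spine] at ha
    obtain ⟨k, _, hk, hk'⟩ := ha
    exact gv_ne_vs h k hk hk'
  refine not_reachable_deleteEdges h.hup _ hq (e := s(d.vs d.i, d.gv)) ?_ ?_
  · rw [Walk.edges_concat, List.concat_eq_append, List.mem_append, List.mem_singleton]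
    right; rfl
  · rw [← d.hpi1]
    exact hpi1_mem d

lemma not_reach_vs1_gv (h : Ctx d) : ¬ (Dg d).Reachable (d.vs 1) d.gv := by
  have hq : ((spine d 1 d.i d.hi1 le_rfl).concat (adj_pi1 d)).IsPath := by
    rw [Walk.isPath_def, Walk.support_concat, List.nodup_append']
    refine ⟨(isPath_spine d 1 d.i _ _).2, List.nodup_singleton _, ?_⟩
    intro a ha hb
    rw [List.mem_singleton] at hb
    subst hb
    rw [mem_support_spine] at ha
    obtain ⟨k, _, hk, hk'⟩ := ha
    exact gv_ne_vs h k hk hk'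
  refine not_reachable_deleteEdges h.hup _ hq (e := s(d.vs d.i, d.gv)) ?_ ?_
  · rw [Walk.edges_concat, List.concat_eq_append, List.mem_append, List.mem_singleton]
    right; rfl
  · rw [← d.hpi1]
    exact hpi1_mem d

lemma not_reach_fv_clB (h : Ctx d) {z : W} (hz : z ∈ clB d) : z ∉ clA d :=
  fun hz' => not_reach_fv_vs0 h (hz'.trans hz.symm)
lemma not_reach_fv_clM (h : Ctx d) {z : W} (hz : z ∈ clM d) : z ∉ clA d :=
  fun hz' => not_reach_fv_vs1 h (hz'.trans hz.symm)
lemma not_reach_fv_clG (h : Ctx d) {z : W} (hz : z ∈ clG d) : z ∉ clA d :=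
  fun hz' => not_reach_fv_gv h (hz'.trans hz.symm)
lemma not_reach_vs0_clM (h : Ctx d) {z : W} (hz : z ∈ clM d) : z ∉ clB d :=
  fun hz' => not_reach_vs0_vs1 h (hz'.trans hz.symm)
lemma not_reach_vs0_clG (h : Ctx d) {z : W} (hz : z ∈ clG d) : z ∉ clB d :=
  fun hz' => not_reach_vs0_gv h (hz'.trans hz.symm)
lemma not_reach_vs1_clG (h : Ctx d) {z : W} (hz : z ∈ clG d) : z ∉ clM d :=
  fun hz' => not_reach_vs1_gv h (hz'.trans hz.symm)

/-- Every vertex lies in one of the four components. -/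
lemma cover (h : Ctx d) (z : W) : z ∈ clA d ∪ clB d ∪ clM d ∪ clG d := by
  have hcl : ∀ a b : W, C.Adj a b → a ∈ clA d ∪ clB d ∪ clM d ∪ clG d →
      b ∈ clA d ∪ clB d ∪ clM d ∪ clG d := by
    intro a b hadj ha
    by_cases he : s(a,b) ∈ ({d.p 0, d.p 1, d.p (d.i+1)} : Set (Sym2 W))
    · simp only [Set.mem_insert_iff, Set.mem_singleton_iff] at he
      rcases he with he | he | he
      · rw [d.hp0, Sym2.eq_iff] at he
        rcases he with ⟨_, rfl⟩ | ⟨_, rfl⟩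
        · exact Or.inl (Or.inl (Or.inl (mem_clA d)))
        · exact Or.inl (Or.inl (Or.inr (mem_clB d)))
      · rw [d.hpe 1 le_rfl d.hi1, show d.vs (1-1) = d.vs 0 from rfl, Sym2.eq_iff] at he
        rcases he with ⟨_, rfl⟩ | ⟨_, rfl⟩
        · exact Or.inl (Or.inr (vs_mem_clM h 1 le_rfl d.hi1))
        · exact Or.inl (Or.inl (Or.inr (mem_clB d)))
      · rw [d.hpi1, Sym2.eq_iff] at he
        rcases he with ⟨_, rfl⟩ | ⟨_, rfl⟩
        · exact Or.inr (mem_clG d)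
        · exact Or.inl (Or.inr (vs_mem_clM h d.i d.hi1 le_rfl))
    · have hDadj : (Dg d).Adj a b := by rw [Dg, deleteEdges_adj]; exact ⟨hadj, he⟩
      rcases ha with ((ha | ha) | ha) | ha
      · exact Or.inl (Or.inl (Or.inl (ha.trans hDadj.reachable)))
      · exact Or.inl (Or.inl (Or.inr (ha.trans hDadj.reachable)))
      · exact Or.inl (Or.inr (ha.trans hDadj.reachable))
      · exact Or.inr (ha.trans hDadj.reachable)
  have hconn := h.tree.isConnected.preconnected (d.vs 0) z
  exact mem_of_reachable_closed hcl (Or.inl (Or.inl (Or.inr (mem_clB d)))) hconn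

end BSAux

namespace BSAux
open SimpleGraph

variable {W : Type*} {C : SimpleGraph W} {x y : Sym2 W} {d : BranchData C x y}

lemma del_adj {G : SimpleGraph W} {e : Sym2 W} {a b : W} :
    (G.deleteEdges {e}).Adj a b ↔ G.Adj a b ∧ s(a,b) ≠ e := by
  simp [deleteEdges_adj]

lemma vs0_ne_vsi (h : Ctx d) : d.vs 0 ≠ d.vs d.i := by
  intro he
  have := d.hvsinj 0 d.i (by omega) le_rfl he
  have := d.hi1
  omega

lemma vs1_ne_fv (h : Ctx d) : d.vs 1 ≠ d.fv := fun he => fv_ne_vs h 1 d.hi1 he.symm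
lemma vs0_ne_gv (h : Ctx d) : d.vs 0 ≠ d.gv := fun he => gv_ne_vs h 0 (by omega) he.symm

lemma shifted_adj (h : Ctx d) {a b : W} : d.shifted.Adj a b ↔
    (Dg d).Adj a b ∨ s(a,b) = s(d.vs 0, d.vs d.i) ∨ s(a,b) = s(d.vs 1, d.fv) ∨
      s(a,b) = s(d.vs 0, d.gv) := by
  rw [BranchData.shifted, fromEdgeSet_adj]
  constructor
  · rintro ⟨hmem, hne⟩
    rcases hmem with hmem | hmem
    · left
      rw [Dg_adj]
      obtain ⟨h1, h2⟩ := hmem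
      simp only [Set.mem_insert_iff, Set.mem_singleton_iff] at h2
      push_neg at h2
      exact ⟨(SimpleGraph.mem_edgeSet _).mp h1, h2.2.1, h2.1, h2.2.2⟩
    · right
      simpa using hmem
  · rintro (hadj | he | he | he)
    · rw [Dg_adj] at hadj
      refine ⟨Or.inl ⟨(SimpleGraph.mem_edgeSet _).mpr hadj.1, ?_⟩, hadj.1.ne⟩
      simp only [Set.mem_insert_iff, Set.mem_singleton_iff]
      push_neg
      exact ⟨hadj.2.2.1, hadj.2.1, hadj.2.2.2⟩
    · refine ⟨Or.inr (by simp [he]), ?_⟩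
      rw [Sym2.eq_iff] at he
      rcases he with ⟨rfl, rfl⟩ | ⟨rfl, rfl⟩
      · exact vs0_ne_vsi h
      · exact (vs0_ne_vsi h ∘ Eq.symm)
    · refine ⟨Or.inr (by simp [he]), ?_⟩
      rw [Sym2.eq_iff] at he
      rcases he with ⟨rfl, rfl⟩ | ⟨rfl, rfl⟩
      · exact vs1_ne_fv h
      · exact (vs1_ne_fv h ∘ Eq.symm)
    · refine ⟨Or.inr (by simp [he]), ?_⟩
      rw [Sym2.eq_iff] at he
      rcases he with ⟨rfl, rfl⟩ | ⟨rfl, rfl⟩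
      · exact vs0_ne_gv h
      · exact (vs0_ne_gv h ∘ Eq.symm)

lemma Dg_le_shifted (h : Ctx d) : Dg d ≤ d.shifted := fun {a b} hadj => (shifted_adj h).mpr (Or.inl hadj)

lemma sh_adj_n1 (h : Ctx d) : d.shifted.Adj (d.vs 0) (d.vs d.i) :=
  (shifted_adj h).mpr (Or.inr (Or.inl rfl))
lemma sh_adj_n2 (h : Ctx d) : d.shifted.Adj (d.vs 1) d.fv :=
  (shifted_adj h).mpr (Or.inr (Or.inr (Or.inl rfl)))
lemma sh_adj_n3 (h : Ctx d) : d.shifted.Adj (d.vs 0) d.gv :=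
  (shifted_adj h).mpr (Or.inr (Or.inr (Or.inr rfl)))

/-- The new edges are not edges of `C` (hence not of `D`). -/
lemma n1_not_C (h : Ctx d) : ¬ C.Adj (d.vs 0) (d.vs d.i) := by
  have := h.i2
  exact no_chord h (by omega) le_rfl
lemma n2_not_C (h : Ctx d) : ¬ C.Adj (d.vs 1) d.fv := fun hadj => not_adj_vs_fv h le_rfl d.hi1 hadj
lemma n3_not_C (h : Ctx d) : ¬ C.Adj (d.vs 0) d.gv := fun hadj => not_adj_vs_gv h d.hi1 hadj

lemma shifted_reach_vs0 (h : Ctx d) (z : W) : d.shifted.Reachable (d.vs 0) z := by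
  have hD : ∀ {a b : W}, (Dg d).Reachable a b → d.shifted.Reachable a b :=
    fun hr => hr.mono (Dg_le_shifted h)
  have hM1i : (Dg d).Reachable (d.vs 1) (d.vs d.i) := vs_mem_clM h d.i d.hi1 le_rfl
  rcases cover h z with ((hz | hz) | hz) | hz
  · -- z ∈ clA
    exact ((sh_adj_n1 h).reachable.trans (hD hM1i.symm)).trans
      ((sh_adj_n2 h).reachable.trans (hD hz)).symm.symm
  · exact hD hz
  · exact ((sh_adj_n1 h).reachable.trans (hD hM1i.symm)).trans (hD hz)
  · exact (sh_adj_n3 h).reachable.trans (hD hz)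

lemma shifted_connected (h : Ctx d) : d.shifted.Connected := by
  have hne : Nonempty W := h.tree.isConnected.nonempty
  exact Connected.mk (fun u v => (shifted_reach_vs0 h u).symm.trans (shifted_reach_vs0 h v))

/-! ### Every edge of the shifted graph is a bridge. -/

/-- Non-reachability in `shifted \ e` via a closed set argument; `S` is a set closed under
all edges of `shifted` except `e`, given by hypotheses. -/
lemma sh_del_not_reach (h : Ctx d) {e : Sym2 W} {S : Set W}
    (hDcl : ∀ a b : W, (Dg d).Adj a b → s(a,b) ≠ e → a ∈ S → b ∈ S)
    (hn1 : s(d.vs 0, d.vs d.i) ≠ e → ((d.vs 0 ∈ S ↔ d.vs d.i ∈ S)))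
    (hn2 : s(d.vs 1, d.fv) ≠ e → ((d.vs 1 ∈ S ↔ d.fv ∈ S)))
    (hn3 : s(d.vs 0, d.gv) ≠ e → ((d.vs 0 ∈ S ↔ d.gv ∈ S)))
    {a b : W} (ha : a ∈ S) (hb : b ∉ S) :
    ¬ (d.shifted.deleteEdges {e}).Reachable a b := by
  refine not_reachable_of_closed ?_ ha hb
  intro u v hadj hu
  rw [del_adj, shifted_adj h] at hadj
  obtain ⟨hadj, hne⟩ := hadj
  rcases hadj with hD | he1 | he1 | he1
  · exact hDcl u v hD hne hu
  · rw [Sym2.eq_iff] at he1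
    rcases he1 with ⟨rfl, rfl⟩ | ⟨rfl, rfl⟩
    · exact (hn1 hne).mp hu
    · exact (hn1 (by rw [Sym2.eq_swap] at hne; exact hne)).mpr hu
  · rw [Sym2.eq_iff] at he1
    rcases he1 with ⟨rfl, rfl⟩ | ⟨rfl, rfl⟩
    · exact (hn2 hne).mp hu
    · exact (hn2 (by rw [Sym2.eq_swap] at hne; exact hne)).mpr hu
  · rw [Sym2.eq_iff] at he1
    rcases he1 with ⟨rfl, rfl⟩ | ⟨rfl, rfl⟩
    · exact (hn3 hne).mp hu
    · exact (hn3 (by rw [Sym2.eq_swap] at hne; exact hne)).mpr hu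

lemma sh_bridge_D_aux (h : Ctx d) {e : Sym2 W} {v w : W}
    (hre : (d.shifted.deleteEdges {e}).Reachable v w)
    (hbrvw : ¬ ((Dg d).deleteEdges {e}).Reachable w v)
    (hsp : ∀ s', (s' = d.vs 0 ∨ s' = d.vs 1 ∨ s' = d.vs d.i ∨ s' = d.fv ∨ s' = d.gv) →
      ¬ ((Dg d).deleteEdges {e}).Reachable w s') : False :=
  sh_del_not_reach h
    (S := {z | ((Dg d).deleteEdges {e}).Reachable w z})
    (fun _ _ hadj hne ha => ha.trans (del_adj.mpr ⟨hadj, hne⟩).reachable)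
    (fun _ => iff_of_false (hsp _ (Or.inl rfl)) (hsp _ (Or.inr (Or.inr (Or.inl rfl)))))
    (fun _ => iff_of_false (hsp _ (Or.inr (Or.inl rfl)))
      (hsp _ (Or.inr (Or.inr (Or.inr (Or.inl rfl))))))
    (fun _ => iff_of_false (hsp _ (Or.inl rfl))
      (hsp _ (Or.inr (Or.inr (Or.inr (Or.inr rfl))))))
    (Reachable.refl w) hbrvw hre.symm

lemma sh_bridge_M_aux (h : Ctx d) {e : Sym2 W} {v w : W}
    (hre : (d.shifted.deleteEdges {e}).Reachable v w)
    (hcv : ((Dg d).deleteEdges {e}).Reachable (d.vs 1) v)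
    (hbr : ¬ ((Dg d).deleteEdges {e}).Reachable v w)
    (hwM : (Dg d).Reachable (d.vs 1) w)
    (hsplit : ¬ ((Dg d).deleteEdges {e}).Reachable (d.vs 1) (d.vs d.i)) : False := by
  have hD'le : (Dg d).deleteEdges {e} ≤ Dg d := deleteEdges_le _
  refine sh_del_not_reach h
    (S := {z | ((Dg d).deleteEdges {e}).Reachable (d.vs 1) z} ∪ clA d)
    ?_ ?_ ?_ ?_ (Or.inl hcv) ?_ hre
  · rintro a b hadj hne (ha | ha)
    · exact Or.inl (ha.trans (del_adj.mpr ⟨hadj, hne⟩).reachable)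
    · exact Or.inr (ha.trans hadj.reachable)
  · intro _
    refine iff_of_false ?_ ?_
    · rintro (hm | hm)
      · exact not_reach_vs0_vs1 h (hm.mono hD'le).symm
      · exact not_reach_fv_vs0 h hm
    · rintro (hm | hm)
      · exact hsplit hm
      · exact not_reach_fv_vs1 h (hm.trans (vs_mem_clM h d.i d.hi1 le_rfl).symm)
  · intro _
    exact iff_of_true (Or.inl (Reachable.refl _)) (Or.inr (mem_clA d))
  · intro _
    refine iff_of_false ?_ ?_
    · rintro (hm | hm)
      · exact not_reach_vs0_vs1 h (hm.mono hD'le).symm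
      · exact not_reach_fv_vs0 h hm
    · rintro (hm | hm)
      · exact not_reach_vs1_gv h (hm.mono hD'le)
      · exact not_reach_fv_gv h hm
  · rintro (hm | hm)
    · exact hbr (hcv.symm.trans hm)
    · exact not_reach_fv_vs1 h (hm.trans hwM.symm)

lemma sh_bridge_D (h : Ctx d) {v w : W} (hD : (Dg d).Adj v w) :
    ¬ (d.shifted.deleteEdges {s(v,w)}).Reachable v w := by
  intro hre
  set e := s(v,w) with he
  have hCadj : C.Adj v w := (Dg_adj.mp hD).1
  have hbrC : ¬ (C.deleteEdges {e}).Reachable v w := by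
    have hb := (isAcyclic_iff_forall_adj_isBridge.mp h.tree.IsAcyclic) hCadj
    rw [isBridge_iff] at hb
    exact hb
  have hD'le : (Dg d).deleteEdges {e} ≤ Dg d := deleteEdges_le _
  have hbr : ¬ ((Dg d).deleteEdges {e}).Reachable v w :=
    fun hr => hbrC (hr.mono (deleteEdges_mono (Dg_le d)))
  have hMi : (Dg d).Reachable (d.vs 1) (d.vs d.i) := vs_mem_clM h d.i d.hi1 le_rfl
  rcases cover h v with ((hv | hv) | hv) | hv
  · -- v ∈ clA, base point fv
    have rd : ((Dg d).deleteEdges {e}).Reachable d.fv v ∨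
        ((Dg d).deleteEdges {e}).Reachable d.fv w := by
      rcases reachable_delete_or he hv with h' | h' | h'
      · exact Or.inl h'
      · exact Or.inr h'
      · exact Or.inl h'
    have hDw : (Dg d).Reachable d.fv w := hv.trans hD.reachable
    rcases rd with hcv | hcw
    · refine sh_bridge_D_aux h hre (fun hr => hbr hr.symm) ?_
      rintro s' (rfl | rfl | rfl | rfl | rfl) hrw
      · exact not_reach_fv_vs0 h (hDw.trans (hrw.mono hD'le))
      · exact not_reach_fv_vs1 h (hDw.trans (hrw.mono hD'le))
      · exact not_reach_fv_vs1 h ((hDw.trans (hrw.mono hD'le)).trans hMi.symm)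
      · exact hbr (hrw.trans hcv).symm
      · exact not_reach_fv_gv h (hDw.trans (hrw.mono hD'le))
    · refine sh_bridge_D_aux h hre.symm hbr ?_
      rintro s' (rfl | rfl | rfl | rfl | rfl) hrv
      · exact not_reach_fv_vs0 h (hv.trans (hrv.mono hD'le))
      · exact not_reach_fv_vs1 h (hv.trans (hrv.mono hD'le))
      · exact not_reach_fv_vs1 h ((hv.trans (hrv.mono hD'le)).trans hMi.symm)
      · exact hbr (hrv.trans hcw)
      · exact not_reach_fv_gv h (hv.trans (hrv.mono hD'le))
  · -- v ∈ clB, base point vs 0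
    have rd : ((Dg d).deleteEdges {e}).Reachable (d.vs 0) v ∨
        ((Dg d).deleteEdges {e}).Reachable (d.vs 0) w := by
      rcases reachable_delete_or he hv with h' | h' | h'
      · exact Or.inl h'
      · exact Or.inr h'
      · exact Or.inl h'
    have hDw : (Dg d).Reachable (d.vs 0) w := hv.trans hD.reachable
    rcases rd with hcv | hcw
    · refine sh_bridge_D_aux h hre (fun hr => hbr hr.symm) ?_
      rintro s' (rfl | rfl | rfl | rfl | rfl) hrw
      · exact hbr (hrw.trans hcv).symm
      · exact not_reach_vs0_vs1 h (hDw.trans (hrw.mono hD'le))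
      · exact not_reach_vs0_vs1 h ((hDw.trans (hrw.mono hD'le)).trans hMi.symm)
      · exact not_reach_fv_vs0 h (hDw.trans (hrw.mono hD'le)).symm
      · exact not_reach_vs0_gv h (hDw.trans (hrw.mono hD'le))
    · refine sh_bridge_D_aux h hre.symm hbr ?_
      rintro s' (rfl | rfl | rfl | rfl | rfl) hrv
      · exact hbr (hrv.trans hcw)
      · exact not_reach_vs0_vs1 h (hv.trans (hrv.mono hD'le))
      · exact not_reach_vs0_vs1 h ((hv.trans (hrv.mono hD'le)).trans hMi.symm)
      · exact not_reach_fv_vs0 h (hv.trans (hrv.mono hD'le)).symm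
      · exact not_reach_vs0_gv h (hv.trans (hrv.mono hD'le))
  · -- v ∈ clM, base point vs 1
    have rd : ((Dg d).deleteEdges {e}).Reachable (d.vs 1) v ∨
        ((Dg d).deleteEdges {e}).Reachable (d.vs 1) w := by
      rcases reachable_delete_or he hv with h' | h' | h'
      · exact Or.inl h'
      · exact Or.inr h'
      · exact Or.inl h'
    have hDw : (Dg d).Reachable (d.vs 1) w := hv.trans hD.reachable
    by_cases hsplit : ((Dg d).deleteEdges {e}).Reachable (d.vs 1) (d.vs d.i)
    · rcases rd with hcv | hcw
      · refine sh_bridge_D_aux h hre (fun hr => hbr hr.symm) ?_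
        rintro s' (rfl | rfl | rfl | rfl | rfl) hrw
        · exact not_reach_vs0_vs1 h (hDw.trans (hrw.mono hD'le)).symm
        · exact hbr (hrw.trans hcv).symm
        · exact hbr ((hrw.trans hsplit.symm).trans hcv).symm
        · exact not_reach_fv_vs1 h (hDw.trans (hrw.mono hD'le)).symm
        · exact not_reach_vs1_gv h (hDw.trans (hrw.mono hD'le))
      · refine sh_bridge_D_aux h hre.symm hbr ?_
        rintro s' (rfl | rfl | rfl | rfl | rfl) hrv
        · exact not_reach_vs0_vs1 h (hv.trans (hrv.mono hD'le)).symm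
        · exact hbr (hrv.trans hcw)
        · exact hbr ((hrv.trans hsplit.symm).trans hcw)
        · exact not_reach_fv_vs1 h (hv.trans (hrv.mono hD'le)).symm
        · exact not_reach_vs1_gv h (hv.trans (hrv.mono hD'le))
    · rcases rd with hcv | hcw
      · exact sh_bridge_M_aux h hre hcv hbr hDw hsplit
      · exact sh_bridge_M_aux h hre.symm hcw (fun hr => hbr hr.symm) hv hsplit
  · -- v ∈ clG, base point gv
    have rd : ((Dg d).deleteEdges {e}).Reachable d.gv v ∨
        ((Dg d).deleteEdges {e}).Reachable d.gv w := by
      rcases reachable_delete_or he hv with h' | h' | h'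
      · exact Or.inl h'
      · exact Or.inr h'
      · exact Or.inl h'
    have hDw : (Dg d).Reachable d.gv w := hv.trans hD.reachable
    rcases rd with hcv | hcw
    · refine sh_bridge_D_aux h hre (fun hr => hbr hr.symm) ?_
      rintro s' (rfl | rfl | rfl | rfl | rfl) hrw
      · exact not_reach_vs0_gv h (hDw.trans (hrw.mono hD'le)).symm
      · exact not_reach_vs1_gv h (hDw.trans (hrw.mono hD'le)).symm
      · exact not_reach_vs1_gv h ((hDw.trans (hrw.mono hD'le)).trans hMi.symm).symm
      · exact not_reach_fv_gv h (hDw.trans (hrw.mono hD'le)).symm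
      · exact hbr (hrw.trans hcv).symm
    · refine sh_bridge_D_aux h hre.symm hbr ?_
      rintro s' (rfl | rfl | rfl | rfl | rfl) hrv
      · exact not_reach_vs0_gv h (hv.trans (hrv.mono hD'le)).symm
      · exact not_reach_vs1_gv h (hv.trans (hrv.mono hD'le)).symm
      · exact not_reach_vs1_gv h ((hv.trans (hrv.mono hD'le)).trans hMi.symm).symm
      · exact not_reach_fv_gv h (hv.trans (hrv.mono hD'le)).symm
      · exact hbr (hrv.trans hcw)

lemma sh_bridge_n1 (h : Ctx d) :
    ¬ (d.shifted.deleteEdges {s(d.vs 0, d.vs d.i)}).Reachable (d.vs 0) (d.vs d.i) := by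
  refine sh_del_not_reach h (S := clB d ∪ clG d) ?_ ?_ ?_ ?_
    (Or.inl (mem_clB d)) ?_
  · rintro a b hadj _ (ha | ha)
    · exact Or.inl (ha.trans hadj.reachable)
    · exact Or.inr (ha.trans hadj.reachable)
  · intro hne
    exact absurd rfl hne
  · intro _
    refine iff_of_false ?_ ?_
    · rintro (hm | hm)
      · exact not_reach_vs0_clM h (vs_mem_clM h 1 le_rfl d.hi1) hm
      · exact not_reach_vs1_clG h hm (vs_mem_clM h 1 le_rfl d.hi1)
    · rintro (hm | hm)
      · exact not_reach_fv_vs0 h hm.symm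
      · exact not_reach_fv_gv h hm.symm
  · intro _
    exact iff_of_true (Or.inl (mem_clB d)) (Or.inr (mem_clG d))
  · rintro (hm | hm)
    · exact not_reach_vs0_clM h (vs_mem_clM h d.i d.hi1 le_rfl) hm
    · exact not_reach_vs1_clG h hm (vs_mem_clM h d.i d.hi1 le_rfl)

lemma sh_bridge_n2 (h : Ctx d) :
    ¬ (d.shifted.deleteEdges {s(d.vs 1, d.fv)}).Reachable d.fv (d.vs 1) := by
  refine sh_del_not_reach h (S := clA d) ?_ ?_ ?_ ?_ (mem_clA d) ?_
  · rintro a b hadj _ ha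
    exact ha.trans hadj.reachable
  · intro _
    exact iff_of_false (fun hm => not_reach_fv_vs0 h hm) (fun hm => not_reach_fv_vs1 h
      (hm.trans (vs_mem_clM h d.i d.hi1 le_rfl).symm))
  · intro hne
    rw [Sym2.eq_swap] at hne
    exact absurd rfl hne
  · intro _
    exact iff_of_false (fun hm => not_reach_fv_vs0 h hm) (fun hm => not_reach_fv_gv h hm)
  · exact fun hm => not_reach_fv_vs1 h hm

lemma sh_bridge_n3 (h : Ctx d) :
    ¬ (d.shifted.deleteEdges {s(d.vs 0, d.gv)}).Reachable d.gv (d.vs 0) := by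
  refine sh_del_not_reach h (S := clG d) ?_ ?_ ?_ ?_ (mem_clG d) ?_
  · rintro a b hadj _ ha
    exact ha.trans hadj.reachable
  · intro _
    exact iff_of_false (fun hm => not_reach_vs0_gv h hm.symm) (fun hm => not_reach_vs1_gv h
      (hm.trans (vs_mem_clM h d.i d.hi1 le_rfl).symm).symm)
  · intro _
    exact iff_of_false (fun hm => not_reach_vs1_gv h hm.symm) (fun hm => not_reach_fv_gv h hm.symm)
  · intro hne
    exact absurd rfl hne
  · exact fun hm => not_reach_vs0_gv h hm.symm

lemma shifted_isAcyclic (h : Ctx d) : d.shifted.IsAcyclic := by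
  rw [isAcyclic_iff_forall_adj_isBridge]
  intro v w hadj
  rw [isBridge_iff]
  show ¬ (d.shifted.deleteEdges {s(v,w)}).Reachable v w
  rcases (shifted_adj h).mp hadj with hD | he | he | he
  · exact sh_bridge_D h hD
  · rw [Sym2.eq_iff] at he
    rcases he with ⟨rfl, rfl⟩ | ⟨rfl, rfl⟩
    · exact sh_bridge_n1 h
    · rw [Sym2.eq_swap]
      exact fun hr => sh_bridge_n1 h hr.symm
  · rw [Sym2.eq_iff] at he
    rcases he with ⟨rfl, rfl⟩ | ⟨rfl, rfl⟩
    · exact fun hr => sh_bridge_n2 h hr.symm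
    · rw [Sym2.eq_swap]
      exact sh_bridge_n2 h
  · rw [Sym2.eq_iff] at he
    rcases he with ⟨rfl, rfl⟩ | ⟨rfl, rfl⟩
    · exact fun hr => sh_bridge_n3 h hr.symm
    · rw [Sym2.eq_swap]
      exact sh_bridge_n3 h

lemma shifted_isTree (h : Ctx d) : d.shifted.IsTree :=
  ⟨shifted_connected h, shifted_isAcyclic h⟩

lemma shifted_hup (h : Ctx d) : ∀ a b : W, ∃! p : d.shifted.Walk a b, p.IsPath :=
  (isTree_iff_existsUnique_path.mp (shifted_isTree h)).2

end BSAux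

namespace BSAux
open SimpleGraph

variable {W : Type*} {C : SimpleGraph W} {x y : Sym2 W} {d : BranchData C x y}

lemma fE2_eq (h : Ctx d) : d.fE 2 = s(d.vs 1, zE d 2) := zE_spec d le_rfl h.i2

/-! ### Neighbours in the shifted tree -/

lemma sh_nbr_vs1 (h : Ctx d) {b : W} (hadj : d.shifted.Adj (d.vs 1) b) :
    b = d.vs 2 ∨ b = zE d 2 ∨ b = d.fv := by
  rcases (shifted_adj h).mp hadj with hD | he | he | he
  · have hC : C.Adj (d.vs 1) b := (Dg_adj.mp hD).1
    have hdeg : (C.neighborSet (d.vs 1)).ncard = 3 :=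
      deg_three_of_two_adj h.deg (adj_p d 0 d.hi1).symm (adj_p d 1 h.i2)
        (fun he => by have := d.hvsinj 0 2 (by omega) h.i2 he; omega)
    have := neighbor_three hdeg (adj_p d 0 d.hi1).symm (adj_p d 1 h.i2)
      (adj_fE d le_rfl h.i2)
      (fun he => by have := d.hvsinj 0 2 (by omega) h.i2 he; omega)
      (fun he => (zE_ne_vs h le_rfl h.i2 0 (by omega) he.symm))
      (fun he => (zE_ne_vs h le_rfl h.i2 2 h.i2 he.symm)) b hC
    rcases this with rfl | rfl | rfl
    · exfalso
      exact (Dg_adj.mp hD).2.2.1 (by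
        rw [d.hpe 1 le_rfl d.hi1, Sym2.eq_swap])
    · exact Or.inl rfl
    · exact Or.inr (Or.inl rfl)
  · exfalso
    rw [Sym2.eq_iff] at he
    rcases he with ⟨h1, _⟩ | ⟨h1, _⟩
    · exact (by have := d.hvsinj 1 0 d.hi1 (by omega) h1; omega)
    · exact (by have := d.hvsinj 1 d.i d.hi1 le_rfl h1; have := h.i2; omega)
  · rw [Sym2.eq_iff] at he
    rcases he with ⟨_, rfl⟩ | ⟨h1, _⟩
    · exact Or.inr (Or.inr rfl)
    · exact absurd h1.symm (vs1_ne_fv h ∘ Eq.symm)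
  · exfalso
    rw [Sym2.eq_iff] at he
    rcases he with ⟨h1, _⟩ | ⟨h1, _⟩
    · exact (by have := d.hvsinj 1 0 d.hi1 (by omega) h1; omega)
    · exact gv_ne_vs h 1 d.hi1 h1.symm

lemma sh_nbr_vs0 (h : Ctx d) {b : W} (hadj : d.shifted.Adj (d.vs 0) b) :
    b = d.x0 ∨ b = d.vs d.i ∨ b = d.gv := by
  rcases (shifted_adj h).mp hadj with hD | he | he | he
  · have hC : C.Adj (d.vs 0) b := (Dg_adj.mp hD).1
    have hdeg : (C.neighborSet (d.vs 0)).ncard = 3 :=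
      deg_three_of_two_adj h.deg (adj_x d).symm (adj_p0 d) (fv_ne_x0 d ∘ Eq.symm)
    have := neighbor_three hdeg (adj_x d).symm (adj_p0 d) (adj_p d 0 d.hi1)
      (fv_ne_x0 d ∘ Eq.symm) (fun he => d.hx0 1 d.hi1 he)
      (fun he => fv_ne_vs h 1 d.hi1 he) b hC
    rcases this with rfl | rfl | rfl
    · exact Or.inl rfl
    · exfalso
      exact (Dg_adj.mp hD).2.1 (by rw [d.hp0])
    · exfalso
      exact (Dg_adj.mp hD).2.2.1 (by rw [d.hpe 1 le_rfl d.hi1])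
  · rw [Sym2.eq_iff] at he
    rcases he with ⟨_, rfl⟩ | ⟨h1, _⟩
    · exact Or.inr (Or.inl rfl)
    · exact absurd h1 (vs0_ne_vsi h)
  · exfalso
    rw [Sym2.eq_iff] at he
    rcases he with ⟨h1, _⟩ | ⟨h1, _⟩
    · exact (by have := d.hvsinj 0 1 (by omega) d.hi1 h1; omega)
    · exact fv_ne_vs h 0 (by omega) h1.symm
  · rw [Sym2.eq_iff] at he
    rcases he with ⟨_, rfl⟩ | ⟨h1, _⟩
    · exact Or.inr (Or.inr rfl)
    · exact absurd h1 (vs0_ne_gv h)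

lemma sh_nbr_vs_mid (h : Ctx d) {t : ℕ} (h2 : 2 ≤ t) (ht : t ≤ d.i - 1) {b : W}
    (hadj : d.shifted.Adj (d.vs t) b) :
    b = d.vs (t-1) ∨ b = d.vs (t+1) ∨ b = zE d (t+1) := by
  have hi2 := h.i2
  have hfE : C.Adj (d.vs t) (zE d (t+1)) := by
    have := adj_fE d (t := t+1) (by omega) (by omega)
    simpa using this
  have hprev : C.Adj (d.vs t) (d.vs (t-1)) := by
    have := adj_p d (t-1) (by omega)
    have ht1 : t - 1 + 1 = t := by omega
    rw [ht1] at this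
    exact this.symm
  rcases (shifted_adj h).mp hadj with hD | he | he | he
  · have hC : C.Adj (d.vs t) b := (Dg_adj.mp hD).1
    have hdeg : (C.neighborSet (d.vs t)).ncard = 3 :=
      deg_three_of_two_adj h.deg hprev (adj_p d t (by omega))
        (fun he => by have := d.hvsinj (t-1) (t+1) (by omega) (by omega) he; omega)
    have := neighbor_three hdeg hprev (adj_p d t (by omega)) hfE
      (fun he => by have := d.hvsinj (t-1) (t+1) (by omega) (by omega) he; omega)
      (fun he => zE_ne_vs h (t := t+1) (by omega) (by omega) (t-1) (by omega) he.symm)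
      (fun he => zE_ne_vs h (t := t+1) (by omega) (by omega) (t+1) (by omega) he.symm) b hC
    tauto
  · exfalso
    rw [Sym2.eq_iff] at he
    rcases he with ⟨h1, _⟩ | ⟨h1, _⟩
    · exact (by have := d.hvsinj t 0 (by omega) (by omega) h1; omega)
    · exact (by have := d.hvsinj t d.i (by omega) le_rfl h1; omega)
  · exfalso
    rw [Sym2.eq_iff] at he
    rcases he with ⟨h1, _⟩ | ⟨h1, _⟩
    · exact (by have := d.hvsinj t 1 (by omega) d.hi1 h1; omega)
    · exact fv_ne_vs h t (by omega) h1.symm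
  · exfalso
    rw [Sym2.eq_iff] at he
    rcases he with ⟨h1, _⟩ | ⟨h1, _⟩
    · exact (by have := d.hvsinj t 0 (by omega) (by omega) h1; omega)
    · exact gv_ne_vs h t (by omega) h1.symm

lemma sh_nbr_vsi (h : Ctx d) {b : W} (hadj : d.shifted.Adj (d.vs d.i) b) :
    b = d.vs (d.i - 1) ∨ b = d.y1 ∨ b = d.vs 0 := by
  have hi2 := h.i2
  have hprev : C.Adj (d.vs d.i) (d.vs (d.i - 1)) := by
    have := adj_p d (d.i-1) (by omega)
    have ht1 : d.i - 1 + 1 = d.i := by omega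
    rw [ht1] at this
    exact this.symm
  rcases (shifted_adj h).mp hadj with hD | he | he | he
  · have hC : C.Adj (d.vs d.i) b := (Dg_adj.mp hD).1
    have hdeg : (C.neighborSet (d.vs d.i)).ncard = 3 :=
      deg_three_of_two_adj h.deg hprev (adj_y d)
        (fun he => d.hy1 (d.i-1) (by omega) he.symm)
    have := neighbor_three hdeg hprev (adj_y d) (adj_pi1 d)
      (fun he => d.hy1 (d.i-1) (by omega) he.symm)
      (fun he => gv_ne_vs h (d.i-1) (by omega) he.symm)
      (fun he => gv_ne_y1 d he.symm) b hC
    rcases this with rfl | rfl | rfl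
    · exact Or.inl rfl
    · exact Or.inr (Or.inl rfl)
    · exfalso
      exact (Dg_adj.mp hD).2.2.2 (by rw [d.hpi1])
  · rw [Sym2.eq_iff] at he
    rcases he with ⟨h1, _⟩ | ⟨_, rfl⟩
    · exact absurd h1.symm (vs0_ne_vsi h)
    · exact Or.inr (Or.inr rfl)
  · exfalso
    rw [Sym2.eq_iff] at he
    rcases he with ⟨h1, _⟩ | ⟨h1, _⟩
    · exact (by have := d.hvsinj d.i 1 le_rfl d.hi1 h1; omega)
    · exact fv_ne_vs h d.i le_rfl h1.symm
  · exfalso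
    rw [Sym2.eq_iff] at he
    rcases he with ⟨h1, _⟩ | ⟨h1, _⟩
    · exact absurd h1.symm (vs0_ne_vsi h)
    · exact gv_ne_vs h d.i le_rfl h1.symm

/-! ### The canonical path from `vs 1` to `vs 0` in the shifted tree -/

/-- The vertex sequence `vs 2, vs 3, …, vs i, vs 0` (starting from `vs 1`). -/
def gfun (d : BranchData C x y) : ℕ → W := fun t => if t < d.i then d.vs (t+1) else d.vs 0

lemma gfun_adj (h : Ctx d) : ∀ t, t < d.i → d.shifted.Adj (gfun d t) (gfun d (t+1)) := by
  intro t ht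
  by_cases ht1 : t + 1 < d.i
  · rw [gfun, if_pos ht, gfun, if_pos ht1]
    exact Dg_le_shifted h (by
      have := D_adj_p h (t := t+2) (by omega) (by omega)
      simpa using this)
  · have ht2 : t + 1 = d.i := by omega
    rw [gfun, if_pos ht, gfun, if_neg (by omega), ht2]
    exact (sh_adj_n1 h).symm

lemma gfun_inj (h : Ctx d) : ∀ a b, a ≤ d.i → b ≤ d.i → gfun d a = gfun d b → a = b := by
  intro a b ha hb heq
  rw [gfun, gfun] at heq
  by_cases ha1 : a < d.i <;> by_cases hb1 : b < d.i
  · rw [if_pos ha1, if_pos hb1] at heq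
    have := d.hvsinj (a+1) (b+1) (by omega) (by omega) heq
    omega
  · rw [if_pos ha1, if_neg hb1] at heq
    have := d.hvsinj (a+1) 0 (by omega) (by omega) heq
    omega
  · rw [if_neg ha1, if_pos hb1] at heq
    have := d.hvsinj 0 (b+1) (by omega) (by omega) heq
    omega
  · omega

/-- The canonical walk from `vs 1` to `vs 0` in the shifted tree. -/
def w2 (h : Ctx d) : d.shifted.Walk (d.vs 1) (d.vs 0) :=
  (seqWalk d.shifted (gfun d) d.i (gfun_adj h)).copy
    (by rw [gfun, if_pos (by have := h.i2; omega : 0 < d.i)])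
    (by rw [gfun, if_neg (by omega : ¬ d.i < d.i)])

lemma w2_isPath (h : Ctx d) : (w2 h).IsPath := by
  rw [w2, Walk.isPath_copy]
  exact isPath_seqWalk _ _ _ (gfun_inj h)

lemma w2_support (h : Ctx d) : (w2 h).support = (List.range (d.i+1)).map (gfun d) := by
  rw [w2, Walk.support_copy, support_seqWalk]

lemma w2_edges (h : Ctx d) :
    (w2 h).edges = (List.range d.i).map (fun t => s(gfun d t, gfun d (t+1))) := by
  rw [w2, Walk.edges_copy, edges_seqWalk]

/-! ### Identification of the branch data in the shifted tree -/

lemma pin_down (h : Ctx d) (d' : BranchData d.shifted (d.fE 2) x) :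
    d'.i = d.i ∧ ∀ t, t ≤ d.i → d'.vs t = gfun d t := by
  have hi2 := h.i2
  have hw1adj : ∀ t, t < d'.i → d.shifted.Adj (d'.vs t) (d'.vs (t+1)) := adj_p d'
  set w1 := seqWalk d.shifted d'.vs d'.i hw1adj with hw1
  have hw1path : w1.IsPath := isPath_seqWalk _ _ _ d'.hvsinj
  have hfE2w1 : d.fE 2 ∉ w1.edges := by
    intro hmem
    obtain ⟨t, ht, heq⟩ := mem_edges_seqWalk hmem
    have h2 := d'.hxe.symm.trans heq
    rw [Sym2.eq_iff] at h2
    rcases h2 with ⟨h1, h2⟩ | ⟨h1, h2⟩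
    · have := d'.hvsinj 0 (t+1) (by omega) (by omega) h2
      omega
    · have := d'.hvsinj 0 t (by omega) (by omega) h2
      subst this
      exact d'.hx0 1 d'.hi1 h1
  have hxw1 : x ∉ w1.edges := by
    intro hmem
    obtain ⟨t, ht, heq⟩ := mem_edges_seqWalk hmem
    have h2 := d'.hye.symm.trans heq
    rw [Sym2.eq_iff] at h2
    rcases h2 with ⟨h1, h2⟩ | ⟨h1, h2⟩
    · exact d'.hy1 (t+1) (by omega) h2
    · exact d'.hy1 t (by omega) h2
  have hadjzE : d.shifted.Adj (zE d 2) (d.vs 1) :=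
    (Dg_le_shifted h (D_adj_fE h le_rfl h.i2)).symm
  have hadjx0 : d.shifted.Adj (d.vs 0) d.x0 := (Dg_le_shifted h (D_adj_x h)).symm
  have hq0path : (Walk.cons hadjzE (w2 h)).IsPath := by
    rw [Walk.cons_isPath_iff]
    refine ⟨w2_isPath h, ?_⟩
    rw [w2_support, List.mem_map]
    rintro ⟨k, hk, hk'⟩
    rw [List.mem_range] at hk
    rw [gfun] at hk'
    by_cases hlt : k < d.i
    · rw [if_pos hlt] at hk'
      exact zE_ne_vs h le_rfl h.i2 (k+1) (by omega) hk'.symm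
    · rw [if_neg hlt] at hk'
      exact zE_ne_vs h le_rfl h.i2 0 (by omega) hk'.symm
  have hx0_not_q0 : d.x0 ∉ (Walk.cons hadjzE (w2 h)).support := by
    rw [Walk.support_cons, List.mem_cons]
    rintro (hk' | hk')
    · exact zE_ne_x0 h le_rfl h.i2 hk'.symm
    · rw [w2_support, List.mem_map] at hk'
      obtain ⟨k, hk, hk'⟩ := hk'
      rw [List.mem_range] at hk
      rw [gfun] at hk'
      by_cases hlt : k < d.i
      · rw [if_pos hlt] at hk'
        exact d.hx0 (k+1) (by omega) hk'.symm
      · rw [if_neg hlt] at hk'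
        exact d.hx0 0 (by omega) hk'.symm
  have hfE2q0 : d.fE 2 ∈ (Walk.cons hadjzE (w2 h)).edges := by
    rw [Walk.edges_cons, List.mem_cons]
    left
    rw [fE2_eq h, Sym2.eq_swap]
  have hstart := (fE2_eq h).symm.trans d'.hxe
  have hend := d.hxe.symm.trans d'.hye
  rw [Sym2.eq_iff] at hstart hend
  rcases hstart with ⟨hx0', hvs0'⟩ | ⟨hvs0', hx0'⟩
  · -- bad case : the path starts at the far endpoint of `fE 2`
    exfalso
    rcases hend with ⟨hvi', _⟩ | ⟨_, hvi'⟩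
    · -- ends at x0
      have hqpath : ((Walk.cons hadjzE (w2 h)).concat hadjx0).IsPath := by
        rw [Walk.isPath_def, Walk.support_concat, List.nodup_append']
        exact ⟨hq0path.2, List.nodup_singleton _, by
          intro a ha hb
          rw [List.mem_singleton] at hb
          subst hb
          exact hx0_not_q0 ha⟩
      have huq := (shifted_hup h (zE d 2) d.x0).unique
        (by rw [Walk.isPath_copy]; exact hw1path :
          (w1.copy hvs0'.symm hvi'.symm).IsPath) hqpath
      have hedges := congrArg Walk.edges huq
      rw [Walk.edges_copy] at hedges
      refine hfE2w1 (by
        rw [hedges, Walk.edges_concat, List.concat_eq_append, List.mem_append]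
        exact Or.inl hfE2q0)
    · -- ends at vs 0
      have huq := (shifted_hup h (zE d 2) (d.vs 0)).unique
        (by rw [Walk.isPath_copy]; exact hw1path :
          (w1.copy hvs0'.symm hvi'.symm).IsPath) hq0path
      have hedges := congrArg Walk.edges huq
      rw [Walk.edges_copy] at hedges
      exact hfE2w1 (by rw [hedges]; exact hfE2q0)
  · rcases hend with ⟨hvi', _⟩ | ⟨_, hvi'⟩
    · -- bad case : the path ends at x0
      exfalso
      have hqpath : ((w2 h).concat hadjx0).IsPath := by
        rw [Walk.isPath_def, Walk.support_concat, List.nodup_append']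
        refine ⟨(w2_isPath h).2, List.nodup_singleton _, ?_⟩
        intro a ha hb
        rw [List.mem_singleton] at hb
        subst hb
        exact hx0_not_q0 (by rw [Walk.support_cons]; exact List.mem_cons_of_mem _ ha)
      have huq := (shifted_hup h (d.vs 1) d.x0).unique
        (by rw [Walk.isPath_copy]; exact hw1path :
          (w1.copy hvs0'.symm hvi'.symm).IsPath) hqpath
      have hedges := congrArg Walk.edges huq
      rw [Walk.edges_copy] at hedges
      refine hxw1 (by
        rw [hedges, Walk.edges_concat, List.concat_eq_append, List.mem_append]
        right
        rw [List.mem_singleton, Sym2.eq_swap]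
        exact d.hxe)
    · -- the good case
      have huq := (shifted_hup h (d.vs 1) (d.vs 0)).unique
        (by rw [Walk.isPath_copy]; exact hw1path :
          (w1.copy hvs0'.symm hvi'.symm).IsPath) (w2_isPath h)
      have hsup := congrArg Walk.support huq
      rw [Walk.support_copy, support_seqWalk, w2_support] at hsup
      obtain ⟨hlen, hpt⟩ := map_range_eq hsup
      exact ⟨by omega, fun t ht => hpt t (by omega)⟩

lemma pin_vs (h : Ctx d) (d' : BranchData d.shifted (d.fE 2) x) :
    (∀ t, t < d.i → d'.vs t = d.vs (t+1)) ∧ d'.vs d.i = d.vs 0 := by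
  obtain ⟨hi, hvs⟩ := pin_down h d'
  constructor
  · intro t ht
    rw [hvs t (by omega), gfun, if_pos ht]
  · rw [hvs d.i le_rfl, gfun, if_neg (by omega)]

lemma pin_p (h : Ctx d) (d' : BranchData d.shifted (d.fE 2) x) :
    (∀ t, 1 ≤ t → t < d.i → d'.p t = d.p (t+1)) ∧ d'.p d.i = s(d.vs d.i, d.vs 0) := by
  obtain ⟨hi, _⟩ := pin_down h d'
  obtain ⟨hvs, hvsi⟩ := pin_vs h d'
  have hi1 := d.hi1
  constructor
  · intro t h1 ht
    have h3 : d'.vs (t-1) = d.vs t := by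
      rw [hvs (t-1) (by omega)]
      congr 1
      omega
    have e2 : t + 1 - 1 = t := by omega
    rw [d'.hpe t h1 (by omega), h3, hvs t ht, d.hpe (t+1) (by omega) (by omega), e2]
  · have h3 : d'.vs (d.i - 1) = d.vs d.i := by
      rw [hvs (d.i - 1) (by omega)]
      congr 1
      omega
    rw [d'.hpe d.i d.hi1 (by omega), h3, hvsi]

lemma pin_p0 (h : Ctx d) (d' : BranchData d.shifted (d.fE 2) x) :
    d'.p 0 = s(d.vs 1, d.fv) := by
  have hi2 := h.i2
  obtain ⟨hvs, hvsi⟩ := pin_vs h d'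
  have hvs0 : d'.vs 0 = d.vs 1 := by rw [hvs 0 (by omega)]
  have h1 : d'.p 0 = s(d.vs 1, d'.fv) := by rw [d'.hp0, hvs0]
  have hadj : d.shifted.Adj (d.vs 1) d'.fv := by
    rw [← SimpleGraph.mem_edgeSet, ← h1]
    exact d'.hp0edge
  rcases sh_nbr_vs1 h hadj with heq | heq | heq
  · exfalso
    apply d'.hp0p1
    have h0 : d'.vs (1-1) = d'.vs 0 := rfl
    rw [h1, heq, d'.hpe 1 le_rfl d'.hi1, h0, hvs0, hvs 1 (by omega)]
  · exfalso
    apply d'.hp0x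
    rw [h1, heq, fE2_eq h]
  · rw [h1, heq]

lemma pin_pi1 (h : Ctx d) (d' : BranchData d.shifted (d.fE 2) x) :
    d'.p (d'.i + 1) = s(d.vs 0, d.gv) := by
  have hi2 := h.i2
  obtain ⟨hi, _⟩ := pin_down h d'
  obtain ⟨hvs, hvsi⟩ := pin_vs h d'
  have h1 : d'.p (d'.i + 1) = s(d.vs 0, d'.gv) := by rw [d'.hpi1, hi, hvsi]
  have hadj : d.shifted.Adj (d.vs 0) d'.gv := by
    rw [← SimpleGraph.mem_edgeSet, ← h1]
    exact d'.hpi1edge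
  rcases sh_nbr_vs0 h hadj with heq | heq | heq
  · exfalso
    apply d'.hpi1y
    rw [h1, heq, Sym2.eq_swap]
    exact d.hxe.symm
  · exfalso
    apply d'.hpi1pi
    rw [h1, heq, hi, (pin_p h d').2, Sym2.eq_swap]
  · rw [h1, heq]

lemma pin_fE (h : Ctx d) (d' : BranchData d.shifted (d.fE 2) x) :
    (∀ t, 2 ≤ t → t < d.i → d'.fE t = d.fE (t+1)) ∧ d'.fE d.i = y := by
  have hi2 := h.i2
  obtain ⟨hi, _⟩ := pin_down h d'
  obtain ⟨hvs, hvsi⟩ := pin_vs h d'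
  constructor
  · intro t h2 ht
    obtain ⟨hedge, hmem, hne1, hne2⟩ := d'.hfE t h2 (by omega)
    obtain ⟨b, hb⟩ := Sym2.mem_iff_exists.mp hmem
    have hvst : d'.vs (t-1) = d.vs t := by
      rw [hvs (t-1) (by omega)]
      congr 1
      omega
    have hb' : d'.fE t = s(d.vs t, b) := by rw [hb, hvst]
    have hadj : d.shifted.Adj (d.vs t) b := by
      rw [← SimpleGraph.mem_edgeSet, ← hb']
      exact hedge
    have e1 : t - 1 + 1 = t := by omega
    rcases sh_nbr_vs_mid h h2 (by omega) hadj with heq | heq | heq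
    · exfalso
      apply hne1
      rw [hb', heq, (pin_p h d').1 (t-1) (by omega) (by omega), e1,
        d.hpe t (by omega) (by omega), Sym2.eq_swap]
    · exfalso
      apply hne2
      have e2 : t + 1 - 1 = t := by omega
      rw [hb', heq, (pin_p h d').1 t (by omega) ht, d.hpe (t+1) (by omega) (by omega), e2]
    · have e2 : t + 1 - 1 = t := by omega
      rw [hb', heq, zE_spec d (t := t+1) (by omega) (by omega), e2]
  · obtain ⟨hedge, hmem, hne1, hne2⟩ := d'.hfE d.i h.i2 (by omega)
    obtain ⟨b, hb⟩ := Sym2.mem_iff_exists.mp hmem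
    have hvst : d'.vs (d.i - 1) = d.vs d.i := by
      rw [hvs (d.i - 1) (by omega)]
      congr 1
      omega
    have hb' : d'.fE d.i = s(d.vs d.i, b) := by rw [hb, hvst]
    have hadj : d.shifted.Adj (d.vs d.i) b := by
      rw [← SimpleGraph.mem_edgeSet, ← hb']
      exact hedge
    have e1 : d.i - 1 + 1 = d.i := by omega
    rcases sh_nbr_vsi h hadj with heq | heq | heq
    · exfalso
      apply hne1
      rw [hb', heq, (pin_p h d').1 (d.i - 1) (by omega) (by omega), e1,
        d.hpe d.i (by omega) le_rfl, Sym2.eq_swap]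
    · rw [hb', heq]
      exact d.hye.symm
    · exfalso
      apply hne2
      rw [hb', heq, (pin_p h d').2]

end BSAux

namespace BSAux
open SimpleGraph

variable {W : Type*} {C : SimpleGraph W} {x y : Sym2 W} {d : BranchData C x y}

lemma sideWith_eq {G2 : SimpleGraph W} {f g : Sym2 W} {S : Set W}
    (hcl : ∀ a b, (G2.deleteEdges {f}).Adj a b → a ∈ S → b ∈ S)
    (hg : ∀ a, a ∈ g → a ∈ S)
    (hreach : ∀ z ∈ S, ∃ a, a ∈ g ∧ (G2.deleteEdges {f}).Reachable a z) :
    sideWith G2 f g = S := by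
  ext z
  constructor
  · rintro ⟨a, hag, hr⟩
    exact mem_of_reachable_closed hcl (hg a hag) hr
  · exact hreach z

lemma x0_mem_x (d : BranchData C x y) : d.x0 ∈ x := by
  have h1 : d.x0 ∈ s(d.x0, d.vs 0) := Sym2.mem_iff.mpr (Or.inl rfl)
  rwa [← d.hxe] at h1
lemma vs0_mem_x (d : BranchData C x y) : d.vs 0 ∈ x := by
  have h1 : d.vs 0 ∈ s(d.x0, d.vs 0) := Sym2.mem_iff.mpr (Or.inr rfl)
  rwa [← d.hxe] at h1
lemma vsi_mem_y (d : BranchData C x y) : d.vs d.i ∈ y := by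
  have h1 : d.vs d.i ∈ s(d.vs d.i, d.y1) := Sym2.mem_iff.mpr (Or.inl rfl)
  rwa [← d.hye] at h1
lemma y1_mem_y (d : BranchData C x y) : d.y1 ∈ y := by
  have h1 : d.y1 ∈ s(d.vs d.i, d.y1) := Sym2.mem_iff.mpr (Or.inr rfl)
  rwa [← d.hye] at h1
lemma mem_x_elim (d : BranchData C x y) {a : W} (ha : a ∈ x) : a = d.x0 ∨ a = d.vs 0 := by
  rw [d.hxe] at ha; exact Sym2.mem_iff.mp ha
lemma mem_y_elim (d : BranchData C x y) {a : W} (ha : a ∈ y) : a = d.vs d.i ∨ a = d.y1 := by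
  rw [d.hye] at ha; exact Sym2.mem_iff.mp ha
lemma mem_fE2_elim (h : Ctx d) {a : W} (ha : a ∈ d.fE 2) : a = d.vs 1 ∨ a = zE d 2 := by
  rw [fE2_eq h] at ha; exact Sym2.mem_iff.mp ha
lemma vs1_mem_fE2 (h : Ctx d) : d.vs 1 ∈ d.fE 2 := by
  rw [fE2_eq h]; exact Sym2.mem_iff.mpr (Or.inl rfl)

/-- Generic closure of the classes under adjacency of `C` minus an edge that is not one of
the three removed ones; handles the three special edges by membership of their ends. -/
lemma clC_gen (h : Ctx d) {e : Sym2 W} {S : Set W}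
    (hDcl : ∀ a b : W, (Dg d).Adj a b → s(a,b) ≠ e → a ∈ S → b ∈ S)
    (hp0S : d.p 0 ≠ e → d.vs 0 ∈ S ∧ d.fv ∈ S)
    (hp1S : d.p 1 ≠ e → d.vs 0 ∈ S ∧ d.vs 1 ∈ S)
    (hpi1S : d.p (d.i+1) ≠ e → d.vs d.i ∈ S ∧ d.gv ∈ S) :
    ∀ a b : W, (C.deleteEdges {e}).Adj a b → a ∈ S → b ∈ S := by
  intro a b hadj ha
  rw [del_adj] at hadj
  obtain ⟨hadj, hne⟩ := hadj
  by_cases hmem : s(a,b) ∈ ({d.p 0, d.p 1, d.p (d.i+1)} : Set (Sym2 W))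
  · simp only [Set.mem_insert_iff, Set.mem_singleton_iff] at hmem
    rcases hmem with he1 | he1 | he1
    · obtain ⟨h1, h2⟩ := hp0S (he1 ▸ hne)
      rw [d.hp0, Sym2.eq_iff] at he1
      rcases he1 with ⟨_, rfl⟩ | ⟨_, rfl⟩
      · exact h2
      · exact h1
    · obtain ⟨h1, h2⟩ := hp1S (he1 ▸ hne)
      rw [d.hpe 1 le_rfl d.hi1, show d.vs (1-1) = d.vs 0 from rfl, Sym2.eq_iff] at he1
      rcases he1 with ⟨_, rfl⟩ | ⟨_, rfl⟩
      · exact h2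
      · exact h1
    · obtain ⟨h1, h2⟩ := hpi1S (he1 ▸ hne)
      rw [d.hpi1, Sym2.eq_iff] at he1
      rcases he1 with ⟨_, rfl⟩ | ⟨_, rfl⟩
      · exact h2
      · exact h1
  · have hD : (Dg d).Adj a b := by
      rw [Dg, deleteEdges_adj]
      exact ⟨hadj, hmem⟩
    exact hDcl a b hD hne ha

/-- Generic closure for the shifted graph minus an edge. -/
lemma clS_gen (h : Ctx d) {e : Sym2 W} {S : Set W}
    (hDcl : ∀ a b : W, (Dg d).Adj a b → s(a,b) ≠ e → a ∈ S → b ∈ S)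
    (hn1S : s(d.vs 0, d.vs d.i) ≠ e → d.vs 0 ∈ S ∧ d.vs d.i ∈ S)
    (hn2S : s(d.vs 1, d.fv) ≠ e → d.vs 1 ∈ S ∧ d.fv ∈ S)
    (hn3S : s(d.vs 0, d.gv) ≠ e → d.vs 0 ∈ S ∧ d.gv ∈ S) :
    ∀ a b : W, (d.shifted.deleteEdges {e}).Adj a b → a ∈ S → b ∈ S := by
  intro a b hadj ha
  rw [del_adj] at hadj
  obtain ⟨hadj, hne⟩ := hadj
  rcases (shifted_adj h).mp hadj with hD | he1 | he1 | he1
  · exact hDcl a b hD hne ha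
  · obtain ⟨h1, h2⟩ := hn1S (he1 ▸ hne)
    rw [Sym2.eq_iff] at he1
    rcases he1 with ⟨_, rfl⟩ | ⟨_, rfl⟩
    · exact h2
    · exact h1
  · obtain ⟨h1, h2⟩ := hn2S (he1 ▸ hne)
    rw [Sym2.eq_iff] at he1
    rcases he1 with ⟨_, rfl⟩ | ⟨_, rfl⟩
    · exact h2
    · exact h1
  · obtain ⟨h1, h2⟩ := hn3S (he1 ▸ hne)
    rw [Sym2.eq_iff] at he1
    rcases he1 with ⟨_, rfl⟩ | ⟨_, rfl⟩
    · exact h2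
    · exact h1

/-! ### Reaching within a class while avoiding a deleted edge -/

/-- If the deleted edge has an endpoint not in the class of `c`, reachability from `c`
inside the class survives deletion. -/
lemma class_reach_del {e : Sym2 W} {u v : W} (he : e = s(u,v)) {c z : W}
    (hr : (Dg d).Reachable c z) (hcu : ¬ (Dg d).Reachable c u) :
    ((Dg d).deleteEdges {e}).Reachable c z :=
  reachable_delete_of_not_reach he hr hcu

/-- `¬ Dg.Reachable (vs 1) x0` &c. -/
lemma not_reach_vs1_x0 (h : Ctx d) : ¬ (Dg d).Reachable (d.vs 1) d.x0 :=
  fun hr => not_reach_vs0_vs1 h ((x0_mem_clB h).trans hr.symm)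

lemma not_reach_fv_x0' (h : Ctx d) : ¬ (Dg d).Reachable d.fv d.x0 :=
  fun hr => not_reach_fv_vs0 h (hr.trans (x0_mem_clB h).symm)

lemma not_reach_gv_x0' (h : Ctx d) : ¬ (Dg d).Reachable d.gv d.x0 :=
  fun hr => not_reach_vs0_gv h ((x0_mem_clB h).trans hr.symm)

lemma Dg_le_sh_del (h : Ctx d) {e : Sym2 W} (he : e ∉ C.edgeSet) :
    Dg d ≤ d.shifted.deleteEdges {e} := by
  intro a b hadj
  rw [del_adj]
  refine ⟨Dg_le_shifted h hadj, ?_⟩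
  intro hee
  apply he
  rw [← hee]
  exact (SimpleGraph.mem_edgeSet _).mpr (Dg_adj.mp hadj).1

lemma Dg_del_le_sh_del (h : Ctx d) (e : Sym2 W) :
    (Dg d).deleteEdges {e} ≤ d.shifted.deleteEdges {e} := by
  intro a b hadj
  rw [del_adj] at hadj ⊢
  exact ⟨Dg_le_shifted h hadj.1, hadj.2⟩

lemma n1_not_edge (h : Ctx d) : s(d.vs 0, d.vs d.i) ∉ C.edgeSet :=
  fun hm => n1_not_C h ((SimpleGraph.mem_edgeSet _).mp hm)
lemma n2_not_edge (h : Ctx d) : s(d.vs 1, d.fv) ∉ C.edgeSet :=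
  fun hm => n2_not_C h ((SimpleGraph.mem_edgeSet _).mp hm)
lemma n3_not_edge (h : Ctx d) : s(d.vs 0, d.gv) ∉ C.edgeSet :=
  fun hm => n3_not_C h ((SimpleGraph.mem_edgeSet _).mp hm)

/-- Closure of the union of three of the classes under `Dg`-adjacency. -/
lemma cl3_closed {S1 S2 S3 : Set W}
    (c1 : W) (c2 : W) (c3 : W)
    (h1 : S1 = {z | (Dg d).Reachable c1 z}) (h2 : S2 = {z | (Dg d).Reachable c2 z})
    (h3 : S3 = {z | (Dg d).Reachable c3 z}) :
    ∀ a b : W, (Dg d).Adj a b → a ∈ S1 ∪ S2 ∪ S3 → b ∈ S1 ∪ S2 ∪ S3 := by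
  subst h1 h2 h3
  rintro a b hadj ((ha | ha) | ha)
  · exact Or.inl (Or.inl (ha.trans hadj.reachable))
  · exact Or.inl (Or.inr (ha.trans hadj.reachable))
  · exact Or.inr (ha.trans hadj.reachable)

/-! ### The quarters: sideWith computations -/

lemma side1C (h : Ctx d) : sideWith C (d.p 0) y = clB d ∪ clM d ∪ clG d := by
  have hle : Dg d ≤ C.deleteEdges {d.p 0} := by
    rw [Dg]
    exact deleteEdges_anti (by simp)
  have hp1adj : (C.deleteEdges {d.p 0}).Adj (d.vs 0) (d.vs 1) := by
    rw [del_adj]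
    refine ⟨adj_p d 0 d.hi1, ?_⟩
    rw [d.hp0]
    exact sym2_ne (Or.inr (vs1_ne_fv h)) (Or.inl (fun he => fv_ne_vs h 0 (by omega) he.symm))
  have hpi1adj : (C.deleteEdges {d.p 0}).Adj (d.vs d.i) d.gv := by
    rw [del_adj]
    refine ⟨adj_pi1 d, ?_⟩
    rw [d.hp0]
    exact sym2_ne (Or.inl (fun he => vs0_ne_vsi h he.symm))
      (Or.inl (fun he => fv_ne_vs h d.i le_rfl he.symm))
  apply sideWith_eq
  · exact clC_gen h (fun a b hadj _ ha =>
        cl3_closed (d.vs 0) (d.vs 1) d.gv rfl rfl rfl a b hadj ha)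
      (fun hne => absurd rfl hne)
      (fun _ => ⟨Or.inl (Or.inl (mem_clB d)), Or.inl (Or.inr (vs_mem_clM h 1 le_rfl d.hi1))⟩)
      (fun _ => ⟨Or.inl (Or.inr (vs_mem_clM h d.i d.hi1 le_rfl)), Or.inr (mem_clG d)⟩)
  · intro a ha
    rcases mem_y_elim d ha with rfl | rfl
    · exact Or.inl (Or.inr (vs_mem_clM h d.i d.hi1 le_rfl))
    · exact Or.inl (Or.inr (y1_mem_clM h))
  · intro z hz
    refine ⟨d.vs d.i, vsi_mem_y d, ?_⟩
    rcases hz with (hz | hz) | hz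
    · exact ((vs_mem_clM h d.i d.hi1 le_rfl).symm.mono hle).trans
        (hp1adj.symm.reachable.trans (hz.mono hle))
    · exact ((vs_mem_clM h d.i d.hi1 le_rfl).symm.trans hz).mono hle
    · exact hpi1adj.reachable.trans (hz.mono hle)

lemma side1S (h : Ctx d) : sideWith d.shifted (s(d.vs 1, d.fv)) x = clB d ∪ clM d ∪ clG d := by
  have hle : Dg d ≤ d.shifted.deleteEdges {s(d.vs 1, d.fv)} := Dg_le_sh_del h (n2_not_edge h)
  have hn1adj : (d.shifted.deleteEdges {s(d.vs 1, d.fv)}).Adj (d.vs 0) (d.vs d.i) := by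
    rw [del_adj]
    refine ⟨sh_adj_n1 h, ?_⟩
    exact sym2_ne (Or.inl (fun he => by have := d.hvsinj 0 1 (by omega) d.hi1 he; omega))
      (Or.inl (fun he => fv_ne_vs h 0 (by omega) he.symm))
  have hn3adj : (d.shifted.deleteEdges {s(d.vs 1, d.fv)}).Adj (d.vs 0) d.gv := by
    rw [del_adj]
    refine ⟨sh_adj_n3 h, ?_⟩
    exact sym2_ne (Or.inl (fun he => by have := d.hvsinj 0 1 (by omega) d.hi1 he; omega))
      (Or.inl (fun he => fv_ne_vs h 0 (by omega) he.symm))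
  apply sideWith_eq
  · exact clS_gen h (fun a b hadj _ ha =>
        cl3_closed (d.vs 0) (d.vs 1) d.gv rfl rfl rfl a b hadj ha)
      (fun _ => ⟨Or.inl (Or.inl (mem_clB d)), Or.inl (Or.inr (vs_mem_clM h d.i d.hi1 le_rfl))⟩)
      (fun hne => absurd rfl hne)
      (fun _ => ⟨Or.inl (Or.inl (mem_clB d)), Or.inr (mem_clG d)⟩)
  · intro a ha
    rcases mem_x_elim d ha with rfl | rfl
    · exact Or.inl (Or.inl (x0_mem_clB h))
    · exact Or.inl (Or.inl (mem_clB d))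
  · intro z hz
    refine ⟨d.vs 0, vs0_mem_x d, ?_⟩
    rcases hz with (hz | hz) | hz
    · exact hz.mono hle
    · exact hn1adj.reachable.trans (((vs_mem_clM h d.i d.hi1 le_rfl).symm.trans hz).mono hle)
    · exact hn3adj.reachable.trans (hz.mono hle)

lemma side2C (h : Ctx d) : sideWith C (d.p (d.i+1)) y = clA d ∪ clB d ∪ clM d := by
  have hle : Dg d ≤ C.deleteEdges {d.p (d.i+1)} := by
    rw [Dg]
    exact deleteEdges_anti (by simp)
  have hp1adj : (C.deleteEdges {d.p (d.i+1)}).Adj (d.vs 0) (d.vs 1) := by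
    rw [del_adj]
    refine ⟨adj_p d 0 d.hi1, ?_⟩
    rw [d.hpi1]
    exact sym2_ne (Or.inl (vs0_ne_vsi h)) (Or.inl (vs0_ne_gv h))
  have hp0adj : (C.deleteEdges {d.p (d.i+1)}).Adj (d.vs 0) d.fv := by
    rw [del_adj]
    refine ⟨adj_p0 d, ?_⟩
    rw [d.hpi1]
    exact sym2_ne (Or.inl (vs0_ne_vsi h)) (Or.inl (vs0_ne_gv h))
  apply sideWith_eq
  · exact clC_gen h (fun a b hadj _ ha =>
        cl3_closed d.fv (d.vs 0) (d.vs 1) rfl rfl rfl a b hadj ha)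
      (fun _ => ⟨Or.inl (Or.inr (mem_clB d)), Or.inl (Or.inl (mem_clA d))⟩)
      (fun _ => ⟨Or.inl (Or.inr (mem_clB d)), Or.inr (vs_mem_clM h 1 le_rfl d.hi1)⟩)
      (fun hne => absurd rfl hne)
  · intro a ha
    rcases mem_y_elim d ha with rfl | rfl
    · exact Or.inr (vs_mem_clM h d.i d.hi1 le_rfl)
    · exact Or.inr (y1_mem_clM h)
  · intro z hz
    refine ⟨d.vs d.i, vsi_mem_y d, ?_⟩
    have hto0 : (C.deleteEdges {d.p (d.i+1)}).Reachable (d.vs d.i) (d.vs 0) :=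
      ((vs_mem_clM h d.i d.hi1 le_rfl).symm.mono hle).trans hp1adj.symm.reachable
    rcases hz with (hz | hz) | hz
    · exact hto0.trans (hp0adj.reachable.trans (hz.mono hle))
    · exact hto0.trans (hz.mono hle)
    · exact ((vs_mem_clM h d.i d.hi1 le_rfl).symm.trans hz).mono hle

lemma side2S (h : Ctx d) : sideWith d.shifted (s(d.vs 0, d.gv)) x = clA d ∪ clB d ∪ clM d := by
  have hle : Dg d ≤ d.shifted.deleteEdges {s(d.vs 0, d.gv)} := Dg_le_sh_del h (n3_not_edge h)
  have hn1adj : (d.shifted.deleteEdges {s(d.vs 0, d.gv)}).Adj (d.vs 0) (d.vs d.i) := by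
    rw [del_adj]
    refine ⟨sh_adj_n1 h, ?_⟩
    exact sym2_ne (Or.inr (fun he => gv_ne_vs h d.i le_rfl he.symm))
      (Or.inl (vs0_ne_gv h))
  have hn2adj : (d.shifted.deleteEdges {s(d.vs 0, d.gv)}).Adj (d.vs 1) d.fv := by
    rw [del_adj]
    refine ⟨sh_adj_n2 h, ?_⟩
    exact sym2_ne (Or.inl (fun he => by have := d.hvsinj 1 0 d.hi1 (by omega) he; omega))
      (Or.inl (fun he => gv_ne_vs h 1 d.hi1 he.symm))
  apply sideWith_eq
  · exact clS_gen h (fun a b hadj _ ha =>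
        cl3_closed d.fv (d.vs 0) (d.vs 1) rfl rfl rfl a b hadj ha)
      (fun _ => ⟨Or.inl (Or.inr (mem_clB d)), Or.inr (vs_mem_clM h d.i d.hi1 le_rfl)⟩)
      (fun _ => ⟨Or.inr (vs_mem_clM h 1 le_rfl d.hi1), Or.inl (Or.inl (mem_clA d))⟩)
      (fun hne => absurd rfl hne)
  · intro a ha
    rcases mem_x_elim d ha with rfl | rfl
    · exact Or.inl (Or.inr (x0_mem_clB h))
    · exact Or.inl (Or.inr (mem_clB d))
  · intro z hz
    refine ⟨d.vs 0, vs0_mem_x d, ?_⟩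
    rcases hz with (hz | hz) | hz
    · exact (hn1adj.reachable.trans ((vs_mem_clM h d.i d.hi1 le_rfl).symm.mono hle)).trans
        (hn2adj.reachable.trans (hz.mono hle))
    · exact hz.mono hle
    · exact hn1adj.reachable.trans (((vs_mem_clM h d.i d.hi1 le_rfl).symm.trans hz).mono hle)

/-! ### The side of `x` -/

/-- The part of `clB` on the `vs 0` side of `x`, union the other classes. -/
def S3 (d : BranchData C x y) : Set W :=
  {z | ((Dg d).deleteEdges {x}).Reachable (d.vs 0) z} ∪ clA d ∪ clM d ∪ clG d

lemma S3_Dcl (h : Ctx d) :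
    ∀ a b : W, (Dg d).Adj a b → s(a,b) ≠ x → a ∈ S3 d → b ∈ S3 d := by
  rintro a b hadj hne (((ha | ha) | ha) | ha)
  · exact Or.inl (Or.inl (Or.inl (ha.trans (del_adj.mpr ⟨hadj, hne⟩).reachable)))
  · exact Or.inl (Or.inl (Or.inr (ha.trans hadj.reachable)))
  · exact Or.inl (Or.inr (ha.trans hadj.reachable))
  · exact Or.inr (ha.trans hadj.reachable)

lemma vs0_mem_S3 (d : BranchData C x y) : d.vs 0 ∈ S3 d :=
  Or.inl (Or.inl (Or.inl (Reachable.refl _)))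
lemma fv_mem_S3 (d : BranchData C x y) : d.fv ∈ S3 d := Or.inl (Or.inl (Or.inr (mem_clA d)))
lemma gv_mem_S3 (d : BranchData C x y) : d.gv ∈ S3 d := Or.inr (mem_clG d)
lemma vs1_mem_S3 (h : Ctx d) : d.vs 1 ∈ S3 d := Or.inl (Or.inr (vs_mem_clM h 1 le_rfl d.hi1))
lemma vsi_mem_S3 (h : Ctx d) : d.vs d.i ∈ S3 d :=
  Or.inl (Or.inr (vs_mem_clM h d.i d.hi1 le_rfl))

lemma side3C (h : Ctx d) : sideWith C x y = S3 d := by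
  have hDx := Dg_adj.mp (D_adj_x h)
  have hxe' : s(d.x0, d.vs 0) = x := d.hxe.symm
  have hlem : (Dg d).deleteEdges {x} ≤ C.deleteEdges {x} := deleteEdges_mono (Dg_le d)
  have hmid : ((Dg d).deleteEdges {x}).Reachable (d.vs 1) (d.vs d.i) :=
    class_reach_del d.hxe (vs_mem_clM h d.i d.hi1 le_rfl) (not_reach_vs1_x0 h)
  have hp1adj : (C.deleteEdges {x}).Adj (d.vs 0) (d.vs 1) := by
    rw [del_adj]
    refine ⟨adj_p d 0 d.hi1, ?_⟩
    intro heq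
    have h' := heq.trans hxe'.symm
    rw [Sym2.eq_iff] at h'
    rcases h' with ⟨h1, _⟩ | ⟨_, h2⟩
    · exact d.hx0 0 (by omega) h1.symm
    · exact d.hx0 1 d.hi1 h2.symm
  have hp0adj : (C.deleteEdges {x}).Adj (d.vs 0) d.fv := by
    rw [del_adj]
    refine ⟨adj_p0 d, ?_⟩
    intro heq
    exact d.hp0x (d.hp0.trans heq)
  have hpi1adj : (C.deleteEdges {x}).Adj (d.vs d.i) d.gv := by
    rw [del_adj]
    refine ⟨adj_pi1 d, ?_⟩
    intro heq
    have h' := heq.trans hxe'.symm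
    rw [Sym2.eq_iff] at h'
    rcases h' with ⟨h1, _⟩ | ⟨h1, _⟩
    · exact d.hx0 d.i le_rfl h1.symm
    · exact vs0_ne_vsi h h1.symm
  apply sideWith_eq
  · exact clC_gen h (S3_Dcl h)
      (fun _ => ⟨vs0_mem_S3 d, fv_mem_S3 d⟩)
      (fun _ => ⟨vs0_mem_S3 d, vs1_mem_S3 h⟩)
      (fun _ => ⟨vsi_mem_S3 h, gv_mem_S3 d⟩)
  · intro a ha
    rcases mem_y_elim d ha with rfl | rfl
    · exact vsi_mem_S3 h
    · exact Or.inl (Or.inr (y1_mem_clM h))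
  · intro z hz
    refine ⟨d.vs d.i, vsi_mem_y d, ?_⟩
    have hto1 : (C.deleteEdges {x}).Reachable (d.vs d.i) (d.vs 1) := (hmid.mono hlem).symm
    rcases hz with ((hz | hz) | hz) | hz
    · exact hto1.trans (hp1adj.symm.reachable.trans (hz.mono hlem))
    · exact hto1.trans (hp1adj.symm.reachable.trans ((hp0adj.reachable).trans
        ((class_reach_del d.hxe hz (not_reach_fv_x0' h)).mono hlem)))
    · exact hto1.trans ((class_reach_del d.hxe hz (not_reach_vs1_x0 h)).mono hlem)
    · exact hpi1adj.reachable.trans ((class_reach_del d.hxe hz (not_reach_gv_x0' h)).mono hlem)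

lemma side3S (h : Ctx d) : sideWith d.shifted x (d.fE 2) = S3 d := by
  have hlem : (Dg d).deleteEdges {x} ≤ d.shifted.deleteEdges {x} := Dg_del_le_sh_del h x
  have hmid : ((Dg d).deleteEdges {x}).Reachable (d.vs 1) (d.vs d.i) :=
    class_reach_del d.hxe (vs_mem_clM h d.i d.hi1 le_rfl) (not_reach_vs1_x0 h)
  have hxne : ∀ e : Sym2 W, e ∉ C.edgeSet → e ≠ x := fun e hn heq => hn (heq ▸ d.hx)
  have hn1adj : (d.shifted.deleteEdges {x}).Adj (d.vs 0) (d.vs d.i) :=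
    del_adj.mpr ⟨sh_adj_n1 h, hxne _ (n1_not_edge h)⟩
  have hn2adj : (d.shifted.deleteEdges {x}).Adj (d.vs 1) d.fv :=
    del_adj.mpr ⟨sh_adj_n2 h, hxne _ (n2_not_edge h)⟩
  have hn3adj : (d.shifted.deleteEdges {x}).Adj (d.vs 0) d.gv :=
    del_adj.mpr ⟨sh_adj_n3 h, hxne _ (n3_not_edge h)⟩
  apply sideWith_eq
  · exact clS_gen h (S3_Dcl h)
      (fun _ => ⟨vs0_mem_S3 d, vsi_mem_S3 h⟩)
      (fun _ => ⟨vs1_mem_S3 h, fv_mem_S3 d⟩)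
      (fun _ => ⟨vs0_mem_S3 d, gv_mem_S3 d⟩)
  · intro a ha
    rcases mem_fE2_elim h ha with rfl | rfl
    · exact vs1_mem_S3 h
    · exact Or.inl (Or.inr (zE_mem_clM h le_rfl h.i2))
  · intro z hz
    refine ⟨d.vs 1, vs1_mem_fE2 h, ?_⟩
    have hto0 : (d.shifted.deleteEdges {x}).Reachable (d.vs 1) (d.vs 0) :=
      (hmid.mono hlem).trans hn1adj.symm.reachable
    rcases hz with ((hz | hz) | hz) | hz
    · exact hto0.trans (hz.mono hlem)
    · exact hn2adj.reachable.trans ((class_reach_del d.hxe hz (not_reach_fv_x0' h)).mono hlem)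
    · exact (class_reach_del d.hxe hz (not_reach_vs1_x0 h)).mono hlem
    · exact hto0.trans (hn3adj.reachable.trans
        ((class_reach_del d.hxe hz (not_reach_gv_x0' h)).mono hlem))

/-! ### The generic side for an edge hanging off the middle of the path -/

def S4 (d : BranchData C x y) (e : Sym2 W) : Set W :=
  {z | ((Dg d).deleteEdges {e}).Reachable (d.vs 1) z} ∪ clA d ∪ clB d ∪ clG d

lemma S4_Dcl (h : Ctx d) (e : Sym2 W) :
    ∀ a b : W, (Dg d).Adj a b → s(a,b) ≠ e → a ∈ S4 d e → b ∈ S4 d e := by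
  rintro a b hadj hne (((ha | ha) | ha) | ha)
  · exact Or.inl (Or.inl (Or.inl (ha.trans (del_adj.mpr ⟨hadj, hne⟩).reachable)))
  · exact Or.inl (Or.inl (Or.inr (ha.trans hadj.reachable)))
  · exact Or.inl (Or.inr (ha.trans hadj.reachable))
  · exact Or.inr (ha.trans hadj.reachable)

lemma vs1_mem_S4 (d : BranchData C x y) (e : Sym2 W) : d.vs 1 ∈ S4 d e :=
  Or.inl (Or.inl (Or.inl (Reachable.refl _)))
lemma fv_mem_S4 (d : BranchData C x y) (e : Sym2 W) : d.fv ∈ S4 d e :=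
  Or.inl (Or.inl (Or.inr (mem_clA d)))
lemma vs0_mem_S4 (d : BranchData C x y) (e : Sym2 W) : d.vs 0 ∈ S4 d e :=
  Or.inl (Or.inr (mem_clB d))
lemma x0_mem_S4 (h : Ctx d) (e : Sym2 W) : d.x0 ∈ S4 d e := Or.inl (Or.inr (x0_mem_clB h))
lemma gv_mem_S4 (d : BranchData C x y) (e : Sym2 W) : d.gv ∈ S4 d e := Or.inr (mem_clG d)

section S4eq

variable {e : Sym2 W} {α β : W}

/-- All of `S4` is reachable from `vs 1` in `C` minus `e`. -/
lemma S4_reach_C (h : Ctx d) (he : e = s(α,β)) (hD : (Dg d).Adj α β) (hα : α ∈ clM d)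
    (hsplit : ((Dg d).deleteEdges {e}).Reachable (d.vs 1) (d.vs d.i)) :
    ∀ z ∈ S4 d e, (C.deleteEdges {e}).Reachable (d.vs 1) z := by
  have hDgα := Dg_adj.mp hD
  have hep0 : d.p 0 ≠ e := fun hh => hDgα.2.1 (he ▸ hh).symm
  have hep1 : d.p 1 ≠ e := fun hh => hDgα.2.2.1 (he ▸ hh).symm
  have hepi1 : d.p (d.i+1) ≠ e := fun hh => hDgα.2.2.2 (he ▸ hh).symm
  have hlem : (Dg d).deleteEdges {e} ≤ C.deleteEdges {e} := deleteEdges_mono (Dg_le d)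
  have hp1adj : (C.deleteEdges {e}).Adj (d.vs 0) (d.vs 1) := by
    rw [del_adj]
    exact ⟨adj_p d 0 d.hi1, fun heq => hep1 ((d.hpe 1 le_rfl d.hi1).trans heq)⟩
  have hp0adj : (C.deleteEdges {e}).Adj (d.vs 0) d.fv := by
    rw [del_adj]
    exact ⟨adj_p0 d, fun heq => hep0 (d.hp0.trans heq)⟩
  have hpi1adj : (C.deleteEdges {e}).Adj (d.vs d.i) d.gv := by
    rw [del_adj]
    exact ⟨adj_pi1 d, fun heq => hepi1 (d.hpi1.trans heq)⟩
  rintro z (((hz | hz) | hz) | hz)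
  · exact hz.mono hlem
  · exact hp1adj.symm.reachable.trans (hp0adj.reachable.trans
      ((class_reach_del he hz (not_reach_fv_clM h hα ∘ fun hr => hr)).mono hlem))
  · exact hp1adj.symm.reachable.trans ((class_reach_del he hz
      (not_reach_vs0_clM h hα ∘ fun hr => hr)).mono hlem)
  · exact (hsplit.mono hlem).trans (hpi1adj.reachable.trans
      ((class_reach_del he hz (fun hr => not_reach_vs1_clG h hr hα)).mono hlem))

/-- All of `S4` is reachable from `vs 1` in `shifted` minus `e`. -/
lemma S4_reach_S (h : Ctx d) (he : e = s(α,β)) (hD : (Dg d).Adj α β) (hα : α ∈ clM d)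
    (hsplit : ((Dg d).deleteEdges {e}).Reachable (d.vs 1) (d.vs d.i)) :
    ∀ z ∈ S4 d e, (d.shifted.deleteEdges {e}).Reachable (d.vs 1) z := by
  have heC : e ∈ C.edgeSet := by
    rw [he]
    exact (SimpleGraph.mem_edgeSet _).mpr (Dg_adj.mp hD).1
  have hne : ∀ e' : Sym2 W, e' ∉ C.edgeSet → e' ≠ e := fun e' hn heq => hn (heq ▸ heC)
  have hlem : (Dg d).deleteEdges {e} ≤ d.shifted.deleteEdges {e} := Dg_del_le_sh_del h e
  have hn1adj : (d.shifted.deleteEdges {e}).Adj (d.vs 0) (d.vs d.i) :=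
    del_adj.mpr ⟨sh_adj_n1 h, hne _ (n1_not_edge h)⟩
  have hn2adj : (d.shifted.deleteEdges {e}).Adj (d.vs 1) d.fv :=
    del_adj.mpr ⟨sh_adj_n2 h, hne _ (n2_not_edge h)⟩
  have hn3adj : (d.shifted.deleteEdges {e}).Adj (d.vs 0) d.gv :=
    del_adj.mpr ⟨sh_adj_n3 h, hne _ (n3_not_edge h)⟩
  have hto0 : (d.shifted.deleteEdges {e}).Reachable (d.vs 1) (d.vs 0) :=
    (hsplit.mono hlem).trans hn1adj.symm.reachable
  rintro z (((hz | hz) | hz) | hz)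
  · exact hz.mono hlem
  · exact hn2adj.reachable.trans ((class_reach_del he hz
      (not_reach_fv_clM h hα ∘ fun hr => hr)).mono hlem)
  · exact hto0.trans ((class_reach_del he hz
      (not_reach_vs0_clM h hα ∘ fun hr => hr)).mono hlem)
  · exact hto0.trans (hn3adj.reachable.trans ((class_reach_del he hz
      (fun hr => not_reach_vs1_clG h hr hα)).mono hlem))

lemma side4C (h : Ctx d) (he : e = s(α,β)) (hD : (Dg d).Adj α β) (hα : α ∈ clM d)
    (hsplit : ((Dg d).deleteEdges {e}).Reachable (d.vs 1) (d.vs d.i))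
    {g' : Sym2 W} (hg' : ∀ a, a ∈ g' → a ∈ S4 d e) (a0 : W) (ha0 : a0 ∈ g') :
    sideWith C e g' = S4 d e := by
  apply sideWith_eq
  · exact clC_gen h (S4_Dcl h e)
      (fun _ => ⟨vs0_mem_S4 d e, fv_mem_S4 d e⟩)
      (fun _ => ⟨vs0_mem_S4 d e, vs1_mem_S4 d e⟩)
      (fun _ => ⟨Or.inl (Or.inl (Or.inl hsplit)), gv_mem_S4 d e⟩)
  · exact hg'
  · intro z hz
    exact ⟨a0, ha0, (S4_reach_C h he hD hα hsplit a0 (hg' a0 ha0)).symm.trans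
      (S4_reach_C h he hD hα hsplit z hz)⟩

lemma side4S (h : Ctx d) (he : e = s(α,β)) (hD : (Dg d).Adj α β) (hα : α ∈ clM d)
    (hsplit : ((Dg d).deleteEdges {e}).Reachable (d.vs 1) (d.vs d.i)) :
    sideWith d.shifted e x = S4 d e := by
  apply sideWith_eq
  · exact clS_gen h (S4_Dcl h e)
      (fun _ => ⟨vs0_mem_S4 d e, Or.inl (Or.inl (Or.inl hsplit))⟩)
      (fun _ => ⟨vs1_mem_S4 d e, fv_mem_S4 d e⟩)
      (fun _ => ⟨vs0_mem_S4 d e, gv_mem_S4 d e⟩)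
  · intro a ha
    rcases mem_x_elim d ha with rfl | rfl
    · exact x0_mem_S4 h e
    · exact vs0_mem_S4 d e
  · intro z hz
    exact ⟨d.vs 0, vs0_mem_x d, (S4_reach_S h he hD hα hsplit _ (vs0_mem_S4 d e)).symm.trans
      (S4_reach_S h he hD hα hsplit z hz)⟩

end S4eq

/-- The middle path survives deleting an edge none of whose positions it uses. -/
lemma mid_del_reach (h : Ctx d) {e : Sym2 W}
    (hee : ∀ t, 1 ≤ t → t < d.i → s(d.vs t, d.vs (t+1)) ≠ e) :
    ((Dg d).deleteEdges {e}).Reachable (d.vs 1) (d.vs d.i) := by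
  have key : ∀ t, 1 ≤ t → t ≤ d.i → ((Dg d).deleteEdges {e}).Reachable (d.vs 1) (d.vs t) := by
    intro t h1 ht
    induction t with
    | zero => omega
    | succ n ih =>
      rcases Nat.eq_or_lt_of_le h1 with h1' | h1'
      · rw [← h1']
      · have hn := ih (by omega) (by omega)
        have hadj : ((Dg d).deleteEdges {e}).Adj (d.vs n) (d.vs (n+1)) := by
          rw [del_adj]
          refine ⟨by have := D_adj_p h (t := n+1) (by omega) ht; simpa using this,
            hee n (by omega) (by omega)⟩
        exact hn.trans hadj.reachable
  exact key d.i d.hi1 le_rfl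

end BSAux

namespace BSAux
open SimpleGraph

variable {V : Type*} {W : Type*} {C : SimpleGraph W} {x y : Sym2 W} {d : BranchData C x y}

lemma inst_fE (h : Ctx d) {s : ℕ} (h2 : 2 ≤ s) (hs : s ≤ d.i) :
    sideWith d.shifted (d.fE s) x = sideWith C (d.fE s) y := by
  have he := zE_spec d h2 hs
  have hD := D_adj_fE h h2 hs
  have hα : d.vs (s-1) ∈ clM d := vs_mem_clM h (s-1) (by omega) (by omega)
  have hsplit : ((Dg d).deleteEdges {d.fE s}).Reachable (d.vs 1) (d.vs d.i) := by
    apply mid_del_reach h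
    intro t h1 ht heq
    have h' := heq.trans he
    rw [Sym2.eq_iff] at h'
    rcases h' with ⟨_, h2'⟩ | ⟨h1', _⟩
    · exact zE_ne_vs h h2 hs (t+1) (by omega) h2'.symm
    · exact zE_ne_vs h h2 hs t (by omega) h1'.symm
  have hy1adj : ((Dg d).deleteEdges {d.fE s}).Adj (d.vs d.i) d.y1 := by
    rw [del_adj]
    refine ⟨D_adj_y h, ?_⟩
    intro heq
    have h' := heq.trans he
    rw [Sym2.eq_iff] at h'
    rcases h' with ⟨h1', _⟩ | ⟨h1', _⟩
    · have := d.hvsinj d.i (s-1) le_rfl (by omega) h1'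
      omega
    · exact zE_ne_vs h h2 hs d.i le_rfl h1'.symm
  refine (side4S h he hD hα hsplit).trans (side4C h he hD hα hsplit ?_ (d.vs d.i)
    (vsi_mem_y d)).symm
  intro a ha
  rcases mem_y_elim d ha with rfl | rfl
  · exact Or.inl (Or.inl (Or.inl hsplit))
  · exact Or.inl (Or.inl (Or.inl (hsplit.trans hy1adj.reachable)))

lemma inst_y (h : Ctx d) : sideWith d.shifted y x = sideWith C y x := by
  have he := d.hye
  have hD := D_adj_y h
  have hα : d.vs d.i ∈ clM d := vs_mem_clM h d.i d.hi1 le_rfl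
  have hsplit : ((Dg d).deleteEdges {y}).Reachable (d.vs 1) (d.vs d.i) := by
    apply mid_del_reach h
    intro t h1 ht heq
    have h' := heq.trans he
    rw [Sym2.eq_iff] at h'
    rcases h' with ⟨_, h2'⟩ | ⟨h1', _⟩
    · exact d.hy1 (t+1) (by omega) h2'.symm
    · exact d.hy1 t (by omega) h1'.symm
  refine (side4S h he hD hα hsplit).trans (side4C h he hD hα hsplit ?_ (d.vs 0)
    (vs0_mem_x d)).symm
  intro a ha
  rcases mem_x_elim d ha with rfl | rfl
  · exact x0_mem_S4 h y
  · exact vs0_mem_S4 d y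

lemma sideOpp_congr {G1 G2 : SimpleGraph W} {f f' g g' : Sym2 W}
    (hsw : sideWith G1 f g = sideWith G2 f' g') : sideOpp G1 f g = sideOpp G2 f' g' := by
  unfold sideOpp
  rw [hsw]

/-! ### Evaluating the parts -/

lemma part_eval0 (d : BranchData C x y) (φ : V → W) :
    d.part φ 0 = φ ⁻¹' (sideOpp C (d.p 0) y) := by
  simp [BranchData.part]

lemma part_eval1 (d : BranchData C x y) (φ : V → W) :
    d.part φ 1 = φ ⁻¹' (sideOpp C x y) := by
  simp [BranchData.part]

lemma part_evalt (d : BranchData C x y) (φ : V → W) {t : ℕ} (h2 : 2 ≤ t) (ht : t ≤ d.i) :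
    d.part φ t = φ ⁻¹' (sideOpp C (d.fE t) y) := by
  unfold BranchData.part
  rw [if_neg (by omega), if_neg (by omega), if_pos ht]

lemma part_evali1 (d : BranchData C x y) (φ : V → W) :
    d.part φ (d.i + 1) = φ ⁻¹' (sideOpp C y x) := by
  have hi1 := d.hi1
  unfold BranchData.part
  rw [if_neg (by omega), if_neg (by omega), if_neg (by omega), if_pos rfl]

lemma part_evali2 (d : BranchData C x y) (φ : V → W) :
    d.part φ (d.i + 2) = φ ⁻¹' (sideOpp C (d.p (d.i+1)) y) := by
  unfold BranchData.part
  rw [if_neg (by omega), if_neg (by omega), if_neg (by omega), if_neg (by omega)]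

end BSAux
/-- Let `(C',φ)` be the branch shift of `x` to `y` applied to a tree
position `(C,φ)` of `G`, let `Q` be the branch shift quotient graph induced from `x`, `y`,
and `(C,φ)`, and let `Q'` be the branch shift quotient graph induced from `f₂'` and `x'`
(the edges `f 2` and `x` in their new positions) and `(C',φ)`.  Then `Q' = Q`: the parts
satisfy `P' 0 = P 0`, `P' (i+2) = P (i+2)`, `P' (i+1) = P 1`, and `P' t = P (t+1)` for
`1 ≤ t ≤ i`, so the two partitions of `V` are equal and the quotient graphs coincide. -/
theorem branch_shift_quotient_eq {V W : Type*} [Fintype V] [Fintype W]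
    (w : V → V → ℝ) (hsymm : ∀ u v, w u v = w v u) (hnn : ∀ u v, 0 ≤ w u v)
    (hdiag : ∀ v, w v v = 0)
    (C : SimpleGraph W) (φ : V → W) (htp : IsTreePosition C φ)
    (x y : Sym2 W) (d : BranchData C x y) (hi2 : 2 ≤ d.i) :
    ∀ d' : BranchData d.shifted (d.fE 2) x,
      d'.i = d.i ∧
      d'.part φ 0 = d.part φ 0 ∧
      d'.part φ (d.i + 2) = d.part φ (d.i + 2) ∧
      d'.part φ (d.i + 1) = d.part φ 1 ∧
      (∀ t, 1 ≤ t → t ≤ d.i → d'.part φ t = d.part φ (t + 1)) ∧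
      {A : Set V | ∃ t ≤ d.i + 2, A = d'.part φ t} =
        {A : Set V | ∃ t ≤ d.i + 2, A = d.part φ t} := by
  intro d'
  obtain ⟨⟨htree, hdeg⟩, -, -⟩ := htp
  have h : BSAux.Ctx d := ⟨htree, hdeg, hi2⟩
  obtain ⟨hi, -⟩ := BSAux.pin_down h d'
  have hi1 := d.hi1
  have hP0 : d'.part φ 0 = d.part φ 0 := by
    rw [BSAux.part_eval0, BSAux.part_eval0, BSAux.pin_p0 h d',
      BSAux.sideOpp_congr ((BSAux.side1S h).trans (BSAux.side1C h).symm)]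
  have hPi2 : d'.part φ (d.i + 2) = d.part φ (d.i + 2) := by
    have e1 : d.i + 2 = d'.i + 2 := by omega
    rw [show d'.part φ (d.i + 2) = d'.part φ (d'.i + 2) from by rw [← e1],
      BSAux.part_evali2, BSAux.part_evali2, BSAux.pin_pi1 h d',
      BSAux.sideOpp_congr ((BSAux.side2S h).trans (BSAux.side2C h).symm)]
  have hPi1 : d'.part φ (d.i + 1) = d.part φ 1 := by
    have e1 : d.i + 1 = d'.i + 1 := by omega
    rw [show d'.part φ (d.i + 1) = d'.part φ (d'.i + 1) from by rw [← e1],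
      BSAux.part_evali1, BSAux.part_eval1,
      BSAux.sideOpp_congr ((BSAux.side3S h).trans (BSAux.side3C h).symm)]
  have hPt : ∀ t, 1 ≤ t → t ≤ d.i → d'.part φ t = d.part φ (t + 1) := by
    intro t h1 ht
    rcases Nat.lt_or_ge t 2 with h2 | h2
    · have ht1 : t = 1 := by omega
      subst ht1
      rw [BSAux.part_eval1, BSAux.part_evalt d φ le_rfl hi2,
        BSAux.sideOpp_congr (BSAux.inst_fE h le_rfl hi2)]
    · rcases Nat.eq_or_lt_of_le ht with hti | hti
      · subst hti
        rw [BSAux.part_evalt d' φ h2 (by omega), BSAux.part_evali1,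
          (BSAux.pin_fE h d').2, BSAux.sideOpp_congr (BSAux.inst_y h)]
      · rw [BSAux.part_evalt d' φ h2 (by omega), BSAux.part_evalt d φ (by omega) (by omega),
          (BSAux.pin_fE h d').1 t h2 (by omega),
          BSAux.sideOpp_congr (BSAux.inst_fE h (s := t+1) (by omega) (by omega))]
  refine ⟨hi, hP0, hPi2, hPi1, hPt, ?_⟩
  ext A
  simp only [Set.mem_setOf_eq]
  constructor
  · rintro ⟨t, ht, rfl⟩
    by_cases h0 : t = 0
    · exact ⟨0, by omega, by rw [h0, hP0]⟩
    by_cases hle : t ≤ d.i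
    · exact ⟨t + 1, by omega, by rw [hPt t (by omega) hle]⟩
    by_cases hi1' : t = d.i + 1
    · exact ⟨1, by omega, by rw [hi1', hPi1]⟩
    · have ht2 : t = d.i + 2 := by omega
      exact ⟨d.i + 2, by omega, by rw [ht2, hPi2]⟩
  · rintro ⟨t, ht, rfl⟩
    by_cases h0 : t = 0
    · exact ⟨0, by omega, by rw [h0, hP0]⟩
    by_cases h1 : t = 1
    · exact ⟨d.i + 1, by omega, by rw [h1, hPi1]⟩
    by_cases hle : t ≤ d.i + 1
    · exact ⟨t - 1, by omega, by
        rw [hPt (t-1) (by omega) (by omega), show t - 1 + 1 = t from by omega]⟩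
    · have ht2 : t = d.i + 2 := by omega
      exact ⟨d.i + 2, by omega, by rw [ht2, hPi2]⟩
end
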